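/- arXiv:0802.1815 — 11 statements merged into one kernel-verified Lean document; each statement's English description precedes it below -/
import Mathlib

section
/- Let q ≥ 3 be an integer, let p be a prime with p ≥ q, and let r be a power of p. Then for any positive integer d₀ with 1 ≤ d₀ ≤ r − 2 and any composition [ω₀, ω₁, …, ω_{q−1}] of r, there exists a q-ary constant-composition code C of length r with composition [ω₀, ω₁, …, ω_{q−1}] whose minimum distance is at least μ_p(d₀) + 2 and whose size M satisfies M · r^{d₀−1} ≥ r!/(ω₀!·ω₁!⋯ω_{q−1}!). -/
open Polynomial Finset Equiv

open Polynomial Finset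

lemma moments_card (K : Type*) [Field K] [Fintype K] [DecidableEq K]
    (g : K → K) (D : ℕ) (hD : D ≤ Fintype.card K - 2)
    (hmom : ∀ j ≤ D, ∑ y : K, g y * y ^ j = 0)
    (hg : ∃ z, g z ≠ 0) :
    D + 2 ≤ Fintype.card {y : K // g y ≠ 0} := by
  set n := Fintype.card K with hn
  have hn2 : 2 ≤ n := Fintype.one_lt_card
  set P : K[X] := ∑ y : K, C (g y) * (1 - (X - C y) ^ (n - 1)) with hP
  have h_eval : ∀ z : K, P.eval z = g z := by
    intro z
    rw [hP, eval_finset_sum]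
    rw [Finset.sum_eq_single z]
    · simp only [eval_mul, eval_C, eval_sub, eval_one, eval_pow, eval_X, sub_self]
      rw [zero_pow (by omega), sub_zero, mul_one]
    · intro y _ hyz
      simp only [eval_mul, eval_C, eval_sub, eval_one, eval_pow, eval_X]
      rw [FiniteField.pow_card_sub_one_eq_one (z - y) (sub_ne_zero.mpr (Ne.symm hyz))]
      simp
    · intro h; exact absurd (mem_univ z) h
  have hXC : ∀ y : K, (X - C y) = (X + C (-y)) := by
    intro y; rw [map_neg, sub_eq_add_neg]
  have hcoeff : ∀ m : ℕ, n - 2 - D < m → P.coeff m = 0 := by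
    intro m hm
    have hm0 : m ≠ 0 := by omega
    rw [hP, finset_sum_coeff]
    by_cases hmn : n - 1 < m
    · apply Finset.sum_eq_zero
      intro y _
      rw [coeff_C_mul, coeff_sub, hXC, coeff_X_add_C_pow,
        Nat.choose_eq_zero_of_lt hmn, Nat.cast_zero, mul_zero,
        coeff_one, if_neg hm0]
      simp
    · push_neg at hmn
      set j := n - 1 - m with hj
      have hjD : j ≤ D := by omega
      have : ∀ y ∈ Finset.univ, (C (g y) * (1 - (X - C y) ^ (n - 1))).coeff m
          = (-((-1 : K) ^ j * ((n-1).choose m : K))) * (g y * y ^ j) := by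
        intro y _
        rw [coeff_C_mul, coeff_sub, hXC, coeff_X_add_C_pow,
          coeff_one, if_neg hm0, neg_pow, ← hj]
        ring
      rw [Finset.sum_congr rfl this, ← Finset.mul_sum, hmom j hjD, mul_zero]
  have hdeg : P.natDegree ≤ n - 2 - D := natDegree_le_iff_coeff_eq_zero.mpr hcoeff
  obtain ⟨z, hz⟩ := hg
  have hP0 : P ≠ 0 := by
    intro h
    apply hz
    rw [← h_eval z, h, eval_zero]
  have hZsub : (Finset.univ.filter fun y : K => g y = 0) ⊆ P.roots.toFinset := by
    intro y hy
    rw [Multiset.mem_toFinset, mem_roots hP0]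
    exact (h_eval y).trans (Finset.mem_filter.mp hy).2
  have hZcard : (Finset.univ.filter fun y : K => g y = 0).card ≤ n - 2 - D :=
    le_trans (le_trans (Finset.card_le_card hZsub) (Multiset.toFinset_card_le _))
      (le_trans (Polynomial.card_roots' P) hdeg)
  have hsplit : (Finset.univ.filter fun y : K => g y = 0).card
      + (Finset.univ.filter fun y : K => ¬ g y = 0).card = n := by
    rw [Finset.card_filter_add_card_filter_not, Finset.card_univ]
  rw [Fintype.card_subtype]
  simp only [ne_eq]
  omega

open Finset Equiv

private def sigmaFstFiber {α : Type*} {β : α → Type*} (a : α) :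
    {x : Σ b, β b // x.1 = a} ≃ β a where
  toFun := fun ⟨⟨b, y⟩, h⟩ => h ▸ y
  invFun := fun y => ⟨⟨a, y⟩, rfl⟩
  left_inv := fun ⟨⟨b, y⟩, h⟩ => by subst h; rfl
  right_inv := fun y => rfl

lemma count_words {q r : ℕ} (ω : Fin q → ℕ) (hω : ∑ a, ω a = r) :
    (Finset.univ.filter (fun c : Fin r → Fin q =>
      ∀ a, (Finset.univ.filter (fun i => c i = a)).card = ω a)).card * ∏ a, (ω a).factorial
    = r.factorial := by
  classical
  set W := (Finset.univ.filter (fun c : Fin r → Fin q =>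
      ∀ a, (Finset.univ.filter (fun i => c i = a)).card = ω a)) with hW
  have s : (Σ a : Fin q, Fin (ω a)) ≃ Fin r :=
    Fintype.equivOfCardEq (by simp [Fintype.card_sigma, hω])
  set w₀ : Fin r → Fin q := fun i => (s.symm i).1 with hw₀def
  have hw₀ : ∀ a, Fintype.card {i : Fin r // w₀ i = a} = ω a := by
    intro a
    rw [Fintype.card_congr ((Equiv.subtypeEquiv s.symm (fun i => Iff.rfl)).trans
      (sigmaFstFiber a))]
    exact Fintype.card_fin _
  have hfib : ∀ (c : Fin r → Fin q), c ∈ W ↔ ∀ a, Fintype.card {i // c i = a} = ω a := by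
    intro c
    rw [hW, Finset.mem_filter]
    simp only [Finset.mem_univ, true_and]
    constructor
    · intro h a; rw [Fintype.card_subtype]; exact h a
    · intro h a; rw [← Fintype.card_subtype]; exact h a
  have hmaps : ∀ σ : Equiv.Perm (Fin r), (w₀ ∘ σ) ∈ W := by
    intro σ
    rw [hfib]
    intro a
    rw [Fintype.card_congr (show {i // (w₀ ∘ ⇑σ) i = a} ≃ {i // w₀ i = a} from
      Equiv.subtypeEquiv σ (fun i => Iff.rfl))]
    exact hw₀ a
  have hsum : (Finset.univ : Finset (Equiv.Perm (Fin r))).card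
      = ∑ c ∈ W, (Finset.univ.filter fun σ : Equiv.Perm (Fin r) => w₀ ∘ σ = c).card :=
    Finset.card_eq_sum_card_fiberwise (fun σ _ => hmaps σ)
  have hfibcard : ∀ c ∈ W,
      (Finset.univ.filter fun σ : Equiv.Perm (Fin r) => w₀ ∘ σ = c).card
        = ∏ a, (ω a).factorial := by
    intro c hc
    have hc' := (hfib c).mp hc
    have efam : ∀ a, {i // c i = a} ≃ {i // w₀ i = a} :=
      fun a => Fintype.equivOfCardEq (by rw [hc' a, ← hw₀ a])
    set τ := Equiv.ofFiberEquiv efam with hτ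
    have τprop : ∀ i, w₀ (τ i) = c i := fun i => Equiv.ofFiberEquiv_map efam i
    have E : {σ : Equiv.Perm (Fin r) // w₀ ∘ σ = c} ≃ {σ : Equiv.Perm (Fin r) // w₀ ∘ σ = w₀} := by
      refine Equiv.subtypeEquiv (Equiv.mulRight τ⁻¹) (fun σ => ?_)
      constructor
      · intro h
        funext i
        have h1 : ((Equiv.mulRight τ⁻¹) σ) i = σ (τ.symm i) := rfl
        have h4 : w₀ (σ (τ.symm i)) = c (τ.symm i) := congrFun h (τ.symm i)
        rw [Function.comp_apply, h1, h4, ← τprop (τ.symm i), Equiv.apply_symm_apply]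
      · intro h
        funext i
        have h2 : w₀ (((Equiv.mulRight τ⁻¹) σ) (τ i)) = w₀ (τ i) := congrFun h (τ i)
        have h3 : ((Equiv.mulRight τ⁻¹) σ) (τ i) = σ i := by
          show (σ * τ⁻¹) (τ i) = σ i
          simp [Equiv.Perm.mul_apply, Equiv.Perm.inv_def]
        rw [h3] at h2
        show w₀ (σ i) = c i
        rw [h2, τprop i]
    rw [← Fintype.card_subtype, Fintype.card_congr E, DomMulAct.stabilizer_card]
    exact Finset.prod_congr rfl (fun a _ => by rw [hw₀ a])
  rw [Finset.sum_congr rfl hfibcard, Finset.sum_const, smul_eq_mul] at hsum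
  rw [← hsum, Finset.card_univ, Fintype.card_perm, Fintype.card_fin]

/-- Let `q ≥ 3` be an integer, `p` a prime with `p ≥ q`, and `r` a power
of `p`. For any positive integer `d₀` with `1 ≤ d₀ ≤ r - 2` and any composition
`ω` of `r`, there is a `q`-ary constant-composition code of length `r` with composition
`ω`, minimum distance at least `μ_p(d₀) + 2`, and size `M` with
`M · r^(d₀-1) ≥ r!/(ω₀!⋯ω_{q-1}!)`. Here `μ_p(e) = e` if `p ∣ e`, else `e - 1`. -/
theorem stmt_0 (q p r : ℕ) (hq : 3 ≤ q) (hp : p.Prime) (hpq : q ≤ p)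
    (hr : ∃ k : ℕ, 0 < k ∧ r = p ^ k)
    (d₀ : ℕ) (hd₀ : 1 ≤ d₀) (hd₀' : d₀ ≤ r - 2)
    (ω : Fin q → ℕ) (hω : ∑ a, ω a = r) :
    ∃ C : Finset (Fin r → Fin q),
      (∀ c ∈ C, ∀ a : Fin q, (Finset.univ.filter (fun i => c i = a)).card = ω a) ∧
      (∀ u ∈ C, ∀ v ∈ C, u ≠ v →
        (if p ∣ d₀ then d₀ else d₀ - 1) + 2 ≤ hammingDist u v) ∧
      Nat.multinomial Finset.univ ω ≤ C.card * r ^ (d₀ - 1) := by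
  classical
  obtain ⟨k, hk, rfl⟩ := hr
  set r := p ^ k with hrdef
  have hp3 : 3 ≤ p := hq.trans hpq
  have hpr : p ≤ r := Nat.le_self_pow hk.ne' p
  have hr3 : 3 ≤ r := hp3.trans hpr
  haveI : Fact p.Prime := ⟨hp⟩
  set F := GaloisField p k with hF
  haveI : Fintype F := Fintype.ofFinite F
  have hcard : Fintype.card F = r := by
    rw [← Nat.card_eq_fintype_card, GaloisField.card p k hk.ne']
  have x : Fin r ≃ F := Fintype.equivOfCardEq (by rw [Fintype.card_fin, hcard])
  set ι : Fin q → F := fun a => ((a : ℕ) : F) with hι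
  have hιinj : Function.Injective ι := by
    intro a b hab
    have ha : (a : ℕ) ∈ Set.Iio p := lt_of_lt_of_le a.isLt hpq
    have hb : (b : ℕ) ∈ Set.Iio p := lt_of_lt_of_le b.isLt hpq
    exact Fin.ext (CharP.natCast_injOn_Iio F p ha hb hab)
  have hιp : ∀ a, (ι a) ^ p = ι a := by
    intro a
    rw [← frobenius_def (R := F) (p := p)]
    exact map_natCast (frobenius F p) _
  set W := (Finset.univ.filter (fun c : Fin r → Fin q =>
      ∀ a, (Finset.univ.filter (fun i => c i = a)).card = ω a)) with hW
  have hWcard : W.card = Nat.multinomial Finset.univ ω := by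
    have h1 := count_words ω hω
    have h2 := Nat.multinomial_spec Finset.univ ω
    rw [hω] at h2
    have hpos : 0 < ∏ a, (ω a).factorial :=
      Finset.prod_pos (fun a _ => Nat.factorial_pos _)
    apply Nat.eq_of_mul_eq_mul_right hpos
    rw [h1, mul_comm (Nat.multinomial Finset.univ ω), h2]
  set Φ : (Fin r → Fin q) → (Fin (d₀ - 1) → F) :=
    fun c j => ∑ y : F, ι (c (x.symm y)) * y ^ ((j : ℕ) + 1) with hΦ
  -- pigeonhole
  obtain ⟨z, -, hmax⟩ := Finset.exists_max_image (Finset.univ : Finset (Fin (d₀ - 1) → F))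
    (fun z => (W.filter (fun c => Φ c = z)).card) Finset.univ_nonempty
  set C := W.filter (fun c => Φ c = z) with hC
  have hsum : W.card = ∑ z' : Fin (d₀ - 1) → F, (W.filter (fun c => Φ c = z')).card :=
    Finset.card_eq_sum_card_fiberwise (fun c _ => Finset.mem_univ (Φ c))
  have hbound : Nat.multinomial Finset.univ ω ≤ C.card * r ^ (d₀ - 1) := by
    rw [← hWcard, hsum]
    calc ∑ z' : Fin (d₀ - 1) → F, (W.filter (fun c => Φ c = z')).card
        ≤ ∑ _z' : Fin (d₀ - 1) → F, C.card :=
          Finset.sum_le_sum (fun z' _ => hmax z' (Finset.mem_univ z'))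
      _ = (Fintype.card (Fin (d₀ - 1) → F)) * C.card := by
          rw [Finset.sum_const, smul_eq_mul, Finset.card_univ]
      _ = C.card * r ^ (d₀ - 1) := by
          rw [Fintype.card_fun, Fintype.card_fin, hcard, mul_comm]
  refine ⟨C, ?_, ?_, hbound⟩
  · intro c hc a
    exact (Finset.mem_filter.mp (Finset.mem_filter.mp hc).1).2 a
  · intro u hu v hv huv
    set D := if p ∣ d₀ then d₀ else d₀ - 1 with hD
    have hDle : D ≤ d₀ := by rw [hD]; split <;> omega
    set g : F → F := fun y => ι (u (x.symm y)) - ι (v (x.symm y)) with hg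
    -- moments
    have hcompsum : ∀ c : Fin r → Fin q, c ∈ W → ∑ i : Fin r, ι (c i) = ∑ a, (ω a) • ι a := by
      intro c hc
      have hc' := (Finset.mem_filter.mp hc).2
      rw [← Finset.sum_fiberwise_of_maps_to (fun i (_ : i ∈ Finset.univ) => Finset.mem_univ (c i))
        (fun i => ι (c i))]
      refine Finset.sum_congr rfl (fun a _ => ?_)
      rw [Finset.sum_congr rfl (fun i hi => by
        rw [(Finset.mem_filter.mp hi).2]), Finset.sum_const, hc' a]
    have hmom_basic : ∀ j : ℕ, j ≤ d₀ - 1 → ∑ y : F, g y * y ^ j = 0 := by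
      intro j hj
      have hsplit : ∑ y : F, g y * y ^ j
          = (∑ y : F, ι (u (x.symm y)) * y ^ j) - ∑ y : F, ι (v (x.symm y)) * y ^ j := by
        rw [← Finset.sum_sub_distrib]
        exact Finset.sum_congr rfl (fun y _ => by rw [hg]; ring)
      rcases Nat.eq_zero_or_pos j with hj0 | hj1
      · subst hj0
        rw [hsplit]
        have hu' : ∑ y : F, ι (u (x.symm y)) * y ^ 0 = ∑ i : Fin r, ι (u i) := by
          simp only [pow_zero, mul_one]
          exact Equiv.sum_comp x.symm (fun i => ι (u i))
        have hv' : ∑ y : F, ι (v (x.symm y)) * y ^ 0 = ∑ i : Fin r, ι (v i) := by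
          simp only [pow_zero, mul_one]
          exact Equiv.sum_comp x.symm (fun i => ι (v i))
        rw [hu', hv', hcompsum u (Finset.mem_filter.mp hu).1,
          hcompsum v (Finset.mem_filter.mp hv).1, sub_self]
      · have hj' : j - 1 < d₀ - 1 := by omega
        have hΦu := (Finset.mem_filter.mp hu).2
        have hΦv := (Finset.mem_filter.mp hv).2
        have := congrFun (hΦu.trans hΦv.symm) ⟨j - 1, hj'⟩
        simp only [hΦ] at this
        have hexp : (j - 1) + 1 = j := by omega
        rw [hexp] at this
        rw [hsplit, this, sub_self]
    have hgp : ∀ y, g y ^ p = g y := by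
      intro y
      have h1 : frobenius F p (g y) = g y := by
        simp only [hg, hι, map_sub, map_natCast (frobenius F p)]
      rwa [frobenius_def] at h1
    have hmomD : ∀ j : ℕ, j ≤ D → ∑ y : F, g y * y ^ j = 0 := by
      intro j hj
      rcases le_or_gt j (d₀ - 1) with h | h
      · exact hmom_basic j h
      · -- j = d₀ and p ∣ d₀
        have hDd : D = d₀ := by
          rw [hD] at hj ⊢
          by_contra hne
          rw [if_neg (fun hdvd => hne (if_pos hdvd))] at hj
          omega
        have hdvd : p ∣ d₀ := by
          by_contra hdvd
          rw [hD, if_neg hdvd] at hj; omega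
        have hjd : j = d₀ := by omega
        rw [hjd]
        obtain ⟨m, hm⟩ := hdvd
        have hm1 : 1 ≤ m := by
          rcases Nat.eq_zero_or_pos m with h0 | h1
          · rw [h0, mul_zero] at hm; omega
          · exact h1
        have hmle : m ≤ d₀ - 1 := by
          have h3m : 3 * m ≤ d₀ := by
            rw [hm]; exact Nat.mul_le_mul_right m hp3
          omega
        have key : ∀ y : F, g y * y ^ d₀ = (g y * y ^ m) ^ p := by
          intro y
          rw [mul_pow, hgp y, hm, mul_comm p m, pow_mul]
        rw [Finset.sum_congr rfl (fun y _ => key y)]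
        have : ∑ y : F, (g y * y ^ m) ^ p = (∑ y : F, g y * y ^ m) ^ p := by
          have h2 : ∑ y : F, frobenius F p (g y * y ^ m)
              = frobenius F p (∑ y : F, g y * y ^ m) := (map_sum (frobenius F p) _ _).symm
          rw [frobenius_def] at h2
          have h3 : ∀ y : F, frobenius F p (g y * y ^ m) = (g y * y ^ m) ^ p :=
            fun y => frobenius_def ..
          rw [← Finset.sum_congr rfl (fun y _ => h3 y), h2]
        rw [this, hmom_basic m hmle, zero_pow hp.ne_zero]
    -- apply the polynomial lemma
    have hDcard : D ≤ Fintype.card F - 2 := by rw [hcard]; omega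
    have hgne : ∃ y, g y ≠ 0 := by
      obtain ⟨i, hi⟩ := Function.ne_iff.mp huv
      refine ⟨x i, ?_⟩
      rw [hg]
      simp only [Equiv.symm_apply_apply]
      exact sub_ne_zero.mpr (fun h => hi (hιinj h))
    have hfinal := moments_card F g D hDcard hmomD hgne
    have hcongr : Fintype.card {y : F // g y ≠ 0} = Fintype.card {i : Fin r // u i ≠ v i} := by
      refine Fintype.card_congr (Equiv.subtypeEquiv x.symm (fun y => ?_))
      rw [hg, sub_ne_zero]
      exact hιinj.ne_iff
    have hham : hammingDist u v = Fintype.card {i : Fin r // u i ≠ v i} := by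
      rw [Fintype.card_subtype]
      rfl
    rw [hham, ← hcongr]
    exact hfinal
end

section
/- Let q ≥ 3 be an integer, let p be a prime with p ≥ q, and let r be a power of p. Then for any composition [ω₀, ω₁, …, ω_{q−1}] of r, there exists a q-ary constant-composition code C of length r with composition [ω₀, ω₁, …, ω_{q−1}] whose minimum distance is at least 3 and whose size M satisfies M · r ≥ r!/(ω₀!·ω₁!⋯ω_{q−1}!). -/
open Finset MvPolynomial

lemma aux_prod_monomial {σ ι : Type*} [DecidableEq σ] (s : Finset ι) (f : ι → (σ →₀ ℕ)) :
    ∏ i ∈ s, MvPolynomial.monomial (f i) (1 : ℕ) = MvPolynomial.monomial (∑ i ∈ s, f i) 1 := by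
  induction s using Finset.cons_induction with
  | empty => simp
  | cons a s ha ih =>
      rw [Finset.prod_cons, ih, MvPolynomial.monomial_mul, Finset.sum_cons, mul_one]

lemma card_comp (q r : ℕ) (ω : Fin q → ℕ) (hω : ∑ a, ω a = r) :
    (Finset.univ.filter
      (fun c : Fin r → Fin q => ∀ a, (Finset.univ.filter (fun i => c i = a)).card = ω a)).card
      = Nat.multinomial Finset.univ ω := by
  classical
  set ω' : Fin q →₀ ℕ := Finsupp.equivFunOnFinite.symm ω with hω'
  have key : ((∑ a : Fin q, (X a : MvPolynomial (Fin q) ℕ)) ^ r).coeff ω'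
      = Nat.multinomial Finset.univ ω := by
    rw [Finset.sum_pow_eq_sum_piAntidiag]
    have hmono : ∀ k : Fin q → ℕ, (∏ a : Fin q, (X a : MvPolynomial (Fin q) ℕ) ^ k a)
        = MvPolynomial.monomial (Finsupp.equivFunOnFinite.symm k) 1 := by
      intro k
      have hsum : (∑ i : Fin q, Finsupp.single i (k i)) = Finsupp.equivFunOnFinite.symm k := by
        ext a
        simp [Finsupp.single_apply, Finset.sum_ite_eq']
      simp_rw [X_pow_eq_monomial]
      rw [aux_prod_monomial, hsum]
    rw [MvPolynomial.coeff_sum]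
    have hterm : ∀ k ∈ Finset.piAntidiag Finset.univ r,
        ((Nat.multinomial Finset.univ k : MvPolynomial (Fin q) ℕ)
          * ∏ a : Fin q, (X a) ^ k a).coeff ω'
        = if k = ω then Nat.multinomial Finset.univ ω else 0 := by
      intro k _
      rw [hmono, ← MvPolynomial.C_eq_coe_nat, MvPolynomial.coeff_C_mul,
        MvPolynomial.coeff_monomial]
      have hiff : (Finsupp.equivFunOnFinite.symm k = ω') ↔ k = ω := by
        rw [hω']
        exact Finsupp.equivFunOnFinite.symm.injective.eq_iff
      simp only [hiff]
      by_cases h : k = ω <;> simp [h]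
    rw [Finset.sum_congr rfl hterm, Finset.sum_ite_eq' (Finset.piAntidiag Finset.univ r) ω
      (fun _ => Nat.multinomial Finset.univ ω), if_pos]
    simp [hω]
  -- second computation of the coefficient
  have key2 : ((∑ a : Fin q, (X a : MvPolynomial (Fin q) ℕ)) ^ r).coeff ω'
      = (Finset.univ.filter
      (fun c : Fin r → Fin q => ∀ a, (Finset.univ.filter (fun i => c i = a)).card = ω a)).card := by
    have hexp : ((∑ a : Fin q, (X a : MvPolynomial (Fin q) ℕ)) ^ r)
        = ∑ c : Fin r → Fin q,
            MvPolynomial.monomial (∑ i : Fin r, Finsupp.single (c i) 1) 1 := by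
      calc ((∑ a : Fin q, (X a : MvPolynomial (Fin q) ℕ)) ^ r)
          = ∏ _i : Fin r, (∑ a : Fin q, (X a : MvPolynomial (Fin q) ℕ)) := by
            rw [Finset.prod_const, Finset.card_univ, Fintype.card_fin]
        _ = ∑ c ∈ Fintype.piFinset (fun _ : Fin r => (Finset.univ : Finset (Fin q))),
              ∏ i : Fin r, (X (c i) : MvPolynomial (Fin q) ℕ) := by
            rw [Finset.prod_univ_sum]
        _ = ∑ c : Fin r → Fin q,
            MvPolynomial.monomial (∑ i : Fin r, Finsupp.single (c i) 1) 1 := by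
            rw [Fintype.piFinset_univ]
            refine Finset.sum_congr rfl fun c _ => ?_
            calc ∏ i : Fin r, (X (c i) : MvPolynomial (Fin q) ℕ)
                = ∏ i : Fin r, MvPolynomial.monomial (Finsupp.single (c i) 1) (1 : ℕ) := by
                  refine Finset.prod_congr rfl fun i _ => ?_
                  rw [← X_pow_eq_monomial, pow_one]
              _ = _ := aux_prod_monomial _ _
    rw [hexp, MvPolynomial.coeff_sum]
    simp_rw [MvPolynomial.coeff_monomial]
    rw [Finset.card_filter]
    refine Finset.sum_congr rfl fun c _ => ?_
    refine if_congr ?_ rfl rfl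
    constructor
    · intro h a
      have := congrFun (congrArg (DFunLike.coe) h) a
      rw [Finsupp.finset_sum_apply] at this
      simp only [Finsupp.single_apply] at this
      rw [Finset.card_filter]
      exact this
    · intro h
      ext a
      rw [Finsupp.finset_sum_apply]
      simp only [Finsupp.single_apply]
      have := h a
      rw [Finset.card_filter] at this
      exact this
  rw [← key2, key]



/-- Let `q ≥ 3` be an integer, `p` a prime with `p ≥ q`, and `r` a power
of `p`. For any composition `ω` of `r`, there is a `q`-ary constant-composition code of
length `r` with composition `ω`, minimum distance at least `3`, and size `M` with
`M · r ≥ r!/(ω₀!⋯ω_{q-1}!)`. -/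
theorem stmt_1 (q p r : ℕ) (hq : 3 ≤ q) (hp : p.Prime) (hpq : q ≤ p)
    (hr : ∃ k : ℕ, 0 < k ∧ r = p ^ k)
    (ω : Fin q → ℕ) (hω : ∑ a, ω a = r) :
    ∃ C : Finset (Fin r → Fin q),
      (∀ c ∈ C, ∀ a : Fin q, (Finset.univ.filter (fun i => c i = a)).card = ω a) ∧
      (∀ u ∈ C, ∀ v ∈ C, u ≠ v → 3 ≤ hammingDist u v) ∧
      Nat.multinomial Finset.univ ω ≤ C.card * r := by
  classical
  obtain ⟨k, hk, hrpk⟩ := hr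
  haveI : Fact p.Prime := ⟨hp⟩
  let F := GaloisField p k
  haveI : Fintype F := Fintype.ofFinite F
  have hcardF : Fintype.card F = r := by
    rw [← Nat.card_eq_fintype_card, GaloisField.card p k hk.ne', hrpk]
  -- the labelling of positions by field elements
  let e : Fin r ≃ F := (Fintype.equivFinOfCardEq hcardF).symm
  -- the hash
  let Φ : (Fin r → Fin q) → F := fun c => ∑ i : Fin r, ((c i : ℕ) : F) * e i
  set S : Finset (Fin r → Fin q) := Finset.univ.filter
      (fun c => ∀ a, (Finset.univ.filter (fun i => c i = a)).card = ω a) with hS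
  haveI : Nonempty F := ⟨0⟩
  obtain ⟨y, -, hy⟩ := Finset.exists_max_image (Finset.univ : Finset F)
      (fun y => (S.filter (fun c => Φ c = y)).card) Finset.univ_nonempty
  refine ⟨S.filter (fun c => Φ c = y), ?_, ?_, ?_⟩
  · intro c hc a
    exact (Finset.mem_filter.mp (Finset.mem_filter.mp hc).1).2 a
  · -- minimum distance
    intro u hu v hv huv
    have hucomp := (Finset.mem_filter.mp (Finset.mem_filter.mp hu).1).2
    have hvcomp := (Finset.mem_filter.mp (Finset.mem_filter.mp hv).1).2
    have hΦ : Φ u = Φ v := by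
      rw [(Finset.mem_filter.mp hu).2, (Finset.mem_filter.mp hv).2]
    by_contra hlt
    push_neg at hlt
    have hham : hammingDist u v = (Finset.univ.filter (fun i => u i ≠ v i)).card := rfl
    set D := Finset.univ.filter (fun i => u i ≠ v i) with hD
    have hDcard : D.card ≤ 2 := by omega
    have hDne : D.Nonempty := by
      rw [Finset.filter_nonempty_iff]
      by_contra hc
      push_neg at hc
      exact huv (funext fun i => hc i (Finset.mem_univ i))
    have hoff : ∀ i, i ∉ D → u i = v i := by
      intro i hi
      by_contra hne
      exact hi (Finset.mem_filter.mpr ⟨Finset.mem_univ i, hne⟩)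
    -- counting balance lemma on any subset containing D
    have hbal : ∀ a : Fin q, ∑ i ∈ D, (if u i = a then 1 else 0)
        = ∑ i ∈ D, (if v i = a then (1:ℕ) else 0) := by
      intro a
      have h1 : ∑ i ∈ (Finset.univ \ D), (if u i = a then (1:ℕ) else 0)
          = ∑ i ∈ (Finset.univ \ D), (if v i = a then (1:ℕ) else 0) := by
        refine Finset.sum_congr rfl fun i hi => ?_
        rw [hoff i (Finset.mem_sdiff.mp hi).2]
      have h2 : ∀ w : Fin r → Fin q, (∀ a', (Finset.univ.filter (fun i => w i = a')).card = ω a') →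
          ∑ i ∈ (Finset.univ \ D), (if w i = a then (1:ℕ) else 0)
            + ∑ i ∈ D, (if w i = a then (1:ℕ) else 0) = ω a := by
        intro w hw
        rw [Finset.sum_sdiff (Finset.subset_univ D), ← Finset.card_filter]
        exact hw a
      have := h2 u hucomp
      have := h2 v hvcomp
      omega
    have hΦbal : ∑ i ∈ D, ((u i : ℕ) : F) * e i = ∑ i ∈ D, ((v i : ℕ) : F) * e i := by
      have h1 : ∑ i ∈ (Finset.univ \ D), ((u i : ℕ) : F) * e i
          = ∑ i ∈ (Finset.univ \ D), ((v i : ℕ) : F) * e i := by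
        refine Finset.sum_congr rfl fun i hi => ?_
        rw [hoff i (Finset.mem_sdiff.mp hi).2]
      have h2 : ∀ w : Fin r → Fin q, ∑ i ∈ (Finset.univ \ D), ((w i : ℕ) : F) * e i
          + ∑ i ∈ D, ((w i : ℕ) : F) * e i = Φ w := by
        intro w
        rw [Finset.sum_sdiff (Finset.subset_univ D)]
      have hu' := h2 u
      have hv' := h2 v
      rw [← hu', ← hv', h1] at hΦ
      exact add_left_cancel hΦ
    -- now case on |D|
    have hcast : ∀ x y : Fin q, ((x : ℕ) : F) = ((y : ℕ) : F) → x = y := by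
      intro x y hxy
      have : (x : ℕ) = (y : ℕ) := by
        haveI : CharP F p := inferInstance
        exact CharP.natCast_injOn_Iio F p (lt_of_lt_of_le x.2 hpq) (lt_of_lt_of_le y.2 hpq) hxy
      exact Fin.ext this
    interval_cases hDc : D.card
    · exact absurd (Finset.card_eq_zero.mp hDc) (Finset.nonempty_iff_ne_empty.mp hDne)
    · obtain ⟨i0, hDi0⟩ := Finset.card_eq_one.mp hDc
      have hui0 : u i0 ≠ v i0 := by
        have : i0 ∈ D := by rw [hDi0]; exact Finset.mem_singleton_self i0
        exact (Finset.mem_filter.mp this).2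
      have := hbal (u i0)
      rw [hDi0, Finset.sum_singleton, Finset.sum_singleton, if_pos rfl,
        if_neg (fun h : v i0 = u i0 => hui0 h.symm)] at this
      exact one_ne_zero this
    · obtain ⟨i, j, hij, hDij⟩ := Finset.card_eq_two.mp hDc
      have hiD : i ∈ D := by rw [hDij]; exact Finset.mem_insert_self i {j}
      have hjD : j ∈ D := by rw [hDij]; simp
      have hui : u i ≠ v i := (Finset.mem_filter.mp hiD).2
      have huj : u j ≠ v j := (Finset.mem_filter.mp hjD).2
      -- from the count balance: v j = u i and v i = u j
      have hbal2 : ∀ a : Fin q, (if u i = a then (1:ℕ) else 0) + (if u j = a then 1 else 0)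
          = (if v i = a then 1 else 0) + (if v j = a then 1 else 0) := by
        intro a
        have := hbal a
        rw [hDij, Finset.sum_insert (by simp [hij]), Finset.sum_singleton,
          Finset.sum_insert (by simp [hij]), Finset.sum_singleton] at this
        exact this
      have hvj : v j = u i := by
        have := hbal2 (u i)
        by_contra hne
        simp only [if_pos rfl, if_neg (fun h : v i = u i => hui h.symm),
          if_neg (fun h : v j = u i => hne h)] at this
        split_ifs at this <;> omega
      have huij : u i ≠ u j := fun h => huj (hvj ▸ h.symm)
      have hvi : v i = u j := by
        have := hbal2 (u j)
        rw [if_neg huij, if_pos rfl, hvj, if_neg (fun h : u i = u j => huij h)] at this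
        by_contra hne
        rw [if_neg hne] at this
        omega
      -- now the field computation
      have hΦ2 : ((u i : ℕ) : F) * e i + ((u j : ℕ) : F) * e j
          = ((v i : ℕ) : F) * e i + ((v j : ℕ) : F) * e j := by
        have := hΦbal
        rw [hDij, Finset.sum_insert (by simp [hij]), Finset.sum_singleton,
          Finset.sum_insert (by simp [hij]), Finset.sum_singleton] at this
        exact this
      rw [hvi, hvj] at hΦ2
      have hfac : (((u i : ℕ) : F) - ((u j : ℕ) : F)) * (e i - e j) = 0 := by
        linear_combination hΦ2
      rcases mul_eq_zero.mp hfac with h | h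
      · exact huij (hcast _ _ (sub_eq_zero.mp h))
      · exact hij (e.injective (sub_eq_zero.mp h))
  · -- size bound
    have hScard : S.card = Nat.multinomial Finset.univ ω := card_comp q r ω hω
    have hsplit : S.card = ∑ y' : F, (S.filter (fun c => Φ c = y')).card :=
      Finset.card_eq_sum_card_fiberwise (fun c _ => Finset.mem_univ (Φ c))
    have hle : S.card ≤ r * (S.filter (fun c => Φ c = y)).card := by
      rw [hsplit]
      calc ∑ y' : F, (S.filter (fun c => Φ c = y')).card
          ≤ ∑ _y' : F, (S.filter (fun c => Φ c = y)).card :=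
            Finset.sum_le_sum fun y' _ => hy y' (Finset.mem_univ y')
        _ = r * (S.filter (fun c => Φ c = y)).card := by
            rw [Finset.sum_const, Finset.card_univ, hcardF, smul_eq_mul]
    rw [← hScard]
    rw [mul_comm]
    exact hle
end

section
/- Let r be a power of 2. Then for any composition [ω₀, ω₁, ω₂] of r, there exists a ternary constant-composition code C of length r with composition [ω₀, ω₁, ω₂] whose minimum distance is at least 3 and whose size M satisfies M · r ≥ r!/(ω₀!·ω₁!·ω₂!). In particular, for even lengths r that are powers of 2, A_3(r, 3, [ω₀, ω₁, ω₂]) · r ≥ r!/(ω₀!·ω₁!·ω₂!). -/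
open Finset

lemma card_filter_val_lt (r k : ℕ) (h : k ≤ r) :
    ((Finset.univ : Finset (Fin r)).filter fun i => i.val < k).card = k := by
  have heq : ((Finset.univ : Finset (Fin r)).filter fun i => i.val < k) =
      (Finset.range k).attachFin
        (fun m hm => lt_of_lt_of_le (Finset.mem_range.mp hm) h) := by
    ext i
    simp [Finset.mem_attachFin]
  rw [heq, Finset.card_attachFin, Finset.card_range]

/-- Let `r` be a power of `2`. For any composition `[ω₀, ω₁, ω₂]` of `r`
there is a ternary constant-composition code of length `r` with composition `ω`,
minimum distance at least `3`, and size `M` with `M · r ≥ r!/(ω₀!ω₁!ω₂!)`.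
In particular `A₃(r, 3, [ω₀, ω₁, ω₂]) · r ≥ r!/(ω₀!ω₁!ω₂!)`, where
`A₃(r, 3, ω)` is the maximum size of such a code. -/
theorem stmt_2 (r : ℕ) (hr : ∃ k : ℕ, 0 < k ∧ r = 2 ^ k)
    (ω : Fin 3 → ℕ) (hω : ∑ a, ω a = r) :
    (∃ C : Finset (Fin r → Fin 3),
      (∀ c ∈ C, ∀ a : Fin 3, (Finset.univ.filter (fun i => c i = a)).card = ω a) ∧
      (∀ u ∈ C, ∀ v ∈ C, u ≠ v → 3 ≤ hammingDist u v) ∧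
      Nat.multinomial Finset.univ ω ≤ C.card * r) ∧
    Nat.multinomial Finset.univ ω ≤
      (sSup {M : ℕ | ∃ C : Finset (Fin r → Fin 3),
        (∀ c ∈ C, ∀ a : Fin 3, (Finset.univ.filter (fun i => c i = a)).card = ω a) ∧
        (∀ u ∈ C, ∀ v ∈ C, u ≠ v → 3 ≤ hammingDist u v) ∧
        C.card = M}) * r := by
  classical
  obtain ⟨k, hk, hrk⟩ := hr
  have hr2 : 2 ≤ r := by
    have : 2 ^ 1 ≤ 2 ^ k := Nat.pow_le_pow_right (by norm_num) hk
    simpa [hrk] using this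
  have hsum3 : ω 0 + ω 1 + ω 2 = r := by simpa [Fin.sum_univ_three] using hω
  set w₀ : Fin r → Fin 3 :=
    fun i => if i.val < ω 0 then 0 else if i.val < ω 0 + ω 1 then 1 else 2 with hw₀
  have hcount : ∀ a : Fin 3, (univ.filter fun i => w₀ i = a).card = ω a := by
    have hA : ((univ : Finset (Fin r)).filter fun i => i.val < ω 0).card = ω 0 :=
      card_filter_val_lt r (ω 0) (by omega)
    have hB : ((univ : Finset (Fin r)).filter fun i => i.val < ω 0 + ω 1).card = ω 0 + ω 1 :=
      card_filter_val_lt r (ω 0 + ω 1) (by omega)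
    have hsub : ((univ : Finset (Fin r)).filter fun i => i.val < ω 0) ⊆
        ((univ : Finset (Fin r)).filter fun i => i.val < ω 0 + ω 1) := by
      intro i hi
      simp only [mem_filter, mem_univ, true_and] at hi ⊢
      omega
    have hc0 : (univ.filter fun i => w₀ i = 0).card = ω 0 := by
      rw [← hA]
      refine congrArg Finset.card (Finset.filter_congr ?_)
      intro i _
      simp only [hw₀]
      split_ifs with h1 h2 <;> simp_all
    have hc1 : (univ.filter fun i => w₀ i = 1).card = ω 1 := by
      have he : (univ.filter fun i => w₀ i = 1) =
          ((univ : Finset (Fin r)).filter fun i => i.val < ω 0 + ω 1) \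
          ((univ : Finset (Fin r)).filter fun i => i.val < ω 0) := by
        ext i
        simp only [hw₀, mem_filter, mem_univ, true_and, mem_sdiff, not_lt]
        split_ifs with h1 h2 <;> simp_all <;> omega
      rw [he, Finset.card_sdiff_of_subset hsub, hA, hB]
      omega
    have hc2 : (univ.filter fun i => w₀ i = 2).card = ω 2 := by
      have he : (univ.filter fun i => w₀ i = 2) =
          (univ : Finset (Fin r)) \
          ((univ : Finset (Fin r)).filter fun i => i.val < ω 0 + ω 1) := by
        ext i
        simp only [hw₀, mem_filter, mem_univ, true_and, mem_sdiff, not_lt]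
        split_ifs with h1 h2 <;> simp_all <;> omega
      rw [he, Finset.card_sdiff_of_subset (Finset.filter_subset _ _), hB, Finset.card_univ,
        Fintype.card_fin]
      omega
    intro a
    fin_cases a
    · exact hc0
    · exact hc1
    · exact hc2
  -- all permuted words have the right composition
  have hcomp : ∀ σ : Equiv.Perm (Fin r), ∀ a : Fin 3,
      (univ.filter fun i => (w₀ ∘ ⇑σ) i = a).card = ω a := by
    intro σ a
    rw [← hcount a]
    exact Finset.card_equiv σ (fun i => by simp)
  set W : Finset (Fin r → Fin 3) :=
    Finset.image (fun σ : Equiv.Perm (Fin r) => w₀ ∘ ⇑σ) univ with hW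
  have hWcomp : ∀ c ∈ W, ∀ a : Fin 3, (univ.filter fun i => c i = a).card = ω a := by
    intro c hc a
    rw [hW, Finset.mem_image] at hc
    obtain ⟨σ, _, rfl⟩ := hc
    exact hcomp σ a
  -- stabilizer count
  have hstab : ((univ : Finset (Equiv.Perm (Fin r))).filter
      fun σ : Equiv.Perm (Fin r) => w₀ ∘ ⇑σ = w₀).card = ∏ a, Nat.factorial (ω a) := by
    rw [← Fintype.card_subtype, DomMulAct.stabilizer_card]
    refine Finset.prod_congr rfl fun a _ => ?_
    rw [Fintype.card_subtype, hcount a]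
  have hfiber : ∀ w ∈ W, ((univ : Finset (Equiv.Perm (Fin r))).filter
      fun σ : Equiv.Perm (Fin r) => w₀ ∘ ⇑σ = w).card = ∏ a, Nat.factorial (ω a) := by
    intro w hw
    rw [hW, Finset.mem_image] at hw
    obtain ⟨σ₀, _, rfl⟩ := hw
    rw [← hstab]
    apply Finset.card_equiv (Equiv.mulRight σ₀⁻¹)
    intro σ
    simp only [mem_filter, mem_univ, true_and, Equiv.coe_mulRight]
    constructor
    · intro h
      funext x
      have := congrFun h (σ₀⁻¹ x)
      simpa [Equiv.Perm.mul_apply] using this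
    · intro h
      funext x
      have := congrFun h (σ₀ x)
      simpa [Equiv.Perm.mul_apply] using this
  have hcardPerm : Nat.factorial r = W.card * ∏ a, Nat.factorial (ω a) := by
    have := Finset.card_eq_sum_card_fiberwise
      (f := fun σ : Equiv.Perm (Fin r) => w₀ ∘ ⇑σ) (s := univ) (t := W)
      (fun σ _ => Finset.mem_image_of_mem _ (mem_univ σ))
    rw [Finset.sum_congr rfl hfiber, Finset.sum_const, smul_eq_mul] at this
    rw [← this, Finset.card_univ, Fintype.card_perm, Fintype.card_fin]
  have hmult : Nat.multinomial univ ω = W.card := by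
    have hspec := Nat.multinomial_spec univ ω
    rw [hω] at hspec
    have hpos : 0 < ∏ a, Nat.factorial (ω a) := Finset.prod_pos fun a _ => Nat.factorial_pos _
    have : (∏ a, Nat.factorial (ω a)) * Nat.multinomial univ ω = (∏ a, Nat.factorial (ω a)) * W.card := by
      rw [hspec, hcardPerm, mul_comm]
    exact Nat.eq_of_mul_eq_mul_left hpos this
  -- main existence
  have hC : ∃ C : Finset (Fin r → Fin 3),
      (∀ c ∈ C, ∀ a : Fin 3, (univ.filter (fun i => c i = a)).card = ω a) ∧
      (∀ u ∈ C, ∀ v ∈ C, u ≠ v → 3 ≤ hammingDist u v) ∧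
      Nat.multinomial univ ω ≤ C.card * r := by
    rcases Nat.lt_or_ge r 3 with hr3 | hr3
    · -- r = 2
      have hreq : r = 2 := by omega
      refine ⟨{w₀}, ?_, ?_, ?_⟩
      · intro c hc a
        rw [Finset.mem_singleton] at hc
        subst hc
        exact hcount a
      · intro u hu v hv huv
        rw [Finset.mem_singleton] at hu hv
        exact absurd (hu.trans hv.symm) huv
      · have hW2 : W.card ≤ Nat.factorial r := by
          have h1 : 1 ≤ ∏ a, Nat.factorial (ω a) := Finset.prod_pos (fun a _ => Nat.factorial_pos _)
          calc W.card = W.card * 1 := (mul_one _).symm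
            _ ≤ W.card * ∏ a, Nat.factorial (ω a) := Nat.mul_le_mul_left _ h1
            _ = Nat.factorial r := hcardPerm.symm
        rw [hmult, Finset.card_singleton, one_mul]
        calc W.card ≤ Nat.factorial r := hW2
          _ = 2 := by rw [hreq]; rfl
          _ ≤ r := by omega
    · -- r ≥ 3 : field construction
      haveI : Fact (Nat.Prime 2) := ⟨Nat.prime_two⟩
      set F := GaloisField 2 k with hF
      haveI : Fintype F := Fintype.ofFinite F
      have hcardF : Fintype.card F = r := by
        rw [← Nat.card_eq_fintype_card, hF, GaloisField.card 2 k (by omega), hrk]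
      obtain ⟨φ⟩ : Nonempty (Fin 3 ↪ F) :=
        Function.Embedding.nonempty_of_card_le (by rw [hcardF, Fintype.card_fin]; omega)
      have e : Fin r ≃ F := Fintype.equivOfCardEq (by rw [hcardF, Fintype.card_fin])
      set f : (Fin r → Fin 3) → F := fun c => ∑ i, (φ (c i)) * (e i) with hf
      -- key distance lemma
      have hdist : ∀ u v : Fin r → Fin 3,
          (∀ a, (univ.filter fun i => u i = a).card = ω a) →
          (∀ a, (univ.filter fun i => v i = a).card = ω a) →
          f u = f v → u ≠ v → 3 ≤ hammingDist u v := by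
        intro u v hu hv hfe hne
        by_contra hlt
        push_neg at hlt
        set D : Finset (Fin r) := univ.filter fun i => u i ≠ v i with hD
        have hDdist : hammingDist u v = D.card := rfl
        have hDcard : D.card ≤ 2 := by omega
        have hDne : D.Nonempty := by
          obtain ⟨i, hi⟩ := Function.ne_iff.mp hne
          exact ⟨i, by simp [hD, hi]⟩
        -- symbol counts agree on D
        have hDa : ∀ a : Fin 3,
            (D.filter fun i => u i = a).card = (D.filter fun i => v i = a).card := by
          intro a
          have hu' := Finset.card_filter_add_card_filter_not
            (s := univ.filter fun i => u i = a) (p := fun i => u i = v i)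
          have hv' := Finset.card_filter_add_card_filter_not
            (s := univ.filter fun i => v i = a) (p := fun i => u i = v i)
          rw [Finset.filter_filter, Finset.filter_filter, hu a] at hu'
          rw [Finset.filter_filter, Finset.filter_filter, hv a] at hv'
          have hcommon : (univ.filter fun i => u i = a ∧ u i = v i) =
              (univ.filter fun i => v i = a ∧ u i = v i) := by
            apply Finset.filter_congr
            intro i _
            constructor
            · rintro ⟨h1, h2⟩; exact ⟨h2 ▸ h1, h2⟩
            · rintro ⟨h1, h2⟩; exact ⟨h2.symm ▸ h1, h2⟩
          have hDu : (D.filter fun i => u i = a) =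
              univ.filter fun i => u i = a ∧ ¬ u i = v i := by
            rw [hD, Finset.filter_filter]
            apply Finset.filter_congr
            intro i _
            tauto
          have hDv : (D.filter fun i => v i = a) =
              univ.filter fun i => v i = a ∧ ¬ u i = v i := by
            rw [hD, Finset.filter_filter]
            apply Finset.filter_congr
            intro i _
            tauto
          rw [hDu, hDv]
          rw [hcommon] at hu'
          omega
        interval_cases hc : D.card
        · exact absurd (Finset.card_eq_zero.mp hc ▸ hDne) (by simp)
        · obtain ⟨i, hi⟩ := Finset.card_eq_one.mp hc
          have hui : u i ≠ v i := by
            have : i ∈ D := hi ▸ Finset.mem_singleton_self i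
            simpa [hD] using this
          have := hDa (u i)
          rw [hi] at this
          simp [Finset.filter_singleton, hui.symm] at this
        · obtain ⟨i, j, hij, hijD⟩ := Finset.card_eq_two.mp hc
          have hiD : i ∈ D := hijD ▸ by simp
          have hjD : j ∈ D := hijD ▸ by simp
          have hui : u i ≠ v i := by simpa [hD] using hiD
          have huj : u j ≠ v j := by simpa [hD] using hjD
          have h1 : v j = u i := by
            by_contra hc1
            have := hDa (u i)
            rw [hijD] at this
            rw [Finset.filter_insert, Finset.filter_singleton] at this
            rw [Finset.filter_insert, Finset.filter_singleton] at this
            simp only [if_pos rfl, if_neg (Ne.symm hui), if_neg hc1] at this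
            split at this <;> simp [Finset.card_insert_of_notMem, hij] at *
          have h2 : u j = v i := by
            by_contra hc2
            have := hDa (v i)
            rw [hijD] at this
            rw [Finset.filter_insert, Finset.filter_singleton] at this
            rw [Finset.filter_insert, Finset.filter_singleton] at this
            simp only [if_pos rfl, if_neg hui, if_neg hc2] at this
            split at this <;> simp [Finset.card_insert_of_notMem, hij, eq_comm (a := (0:ℕ))] at *
          -- now derive contradiction from f u = f v
          have hzero : ∑ x ∈ D, (φ (u x) - φ (v x)) * e x = 0 := by
            have htot : ∑ x, (φ (u x) - φ (v x)) * e x = 0 := by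
              have : ∑ x, (φ (u x) - φ (v x)) * e x = f u - f v := by
                rw [hf]
                rw [← Finset.sum_sub_distrib]
                apply Finset.sum_congr rfl
                intro x _
                ring
              rw [this, hfe, sub_self]
            rw [← htot]
            apply Finset.sum_subset (Finset.subset_univ D)
            intro x _ hx
            have : u x = v x := by
              by_contra hxx
              exact hx (by simp [hD, hxx])
            rw [this, sub_self, zero_mul]
          rw [hijD, Finset.sum_pair hij] at hzero
          rw [h1, h2] at hzero
          have hfac : (φ (u i) - φ (v i)) * (e i - e j) = 0 := by
            linear_combination hzero
          rcases mul_eq_zero.mp hfac with h | h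
          · exact hui (φ.injective (by linear_combination h)) 
          · exact hij (e.injective (by linear_combination h))
      -- pigeonhole over fibers of f
      have hpigeon : ∃ y : F, W.card ≤ r * ((W.filter fun c => f c = y)).card := by
        have hsum : ∑ y : F, ((W.filter fun c => f c = y)).card = W.card :=
          (Finset.card_eq_sum_card_fiberwise (fun c _ => mem_univ (f c))).symm
        have hconst : ∑ _y : F, W.card = r * W.card := by
          rw [Finset.sum_const, smul_eq_mul, Finset.card_univ, hcardF]
        have hmul : ∑ y : F, W.card ≤ ∑ y : F, r * ((W.filter fun c => f c = y)).card := by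
          rw [hconst, ← Finset.mul_sum, hsum]
        obtain ⟨y, _, hy⟩ := Finset.exists_le_of_sum_le Finset.univ_nonempty hmul
        exact ⟨y, hy⟩
      obtain ⟨y, hy⟩ := hpigeon
      refine ⟨W.filter fun c => f c = y, ?_, ?_, ?_⟩
      · intro c hc a
        exact hWcomp c (Finset.mem_filter.mp hc).1 a
      · intro u hu v hv huv
        rw [Finset.mem_filter] at hu hv
        exact hdist u v (hWcomp u hu.1) (hWcomp v hv.1) (hu.2.trans hv.2.symm) huv
      · rw [hmult, mul_comm]
        exact hy
  refine ⟨hC, ?_⟩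
  obtain ⟨C, h1, h2, h3⟩ := hC
  have hmem : C.card ∈ {M : ℕ | ∃ C : Finset (Fin r → Fin 3),
      (∀ c ∈ C, ∀ a : Fin 3, (univ.filter (fun i => c i = a)).card = ω a) ∧
      (∀ u ∈ C, ∀ v ∈ C, u ≠ v → 3 ≤ hammingDist u v) ∧
      C.card = M} := ⟨C, h1, h2, rfl⟩
  have hbdd : BddAbove {M : ℕ | ∃ C : Finset (Fin r → Fin 3),
      (∀ c ∈ C, ∀ a : Fin 3, (univ.filter (fun i => c i = a)).card = ω a) ∧
      (∀ u ∈ C, ∀ v ∈ C, u ≠ v → 3 ≤ hammingDist u v) ∧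
      C.card = M} := by
    refine ⟨Fintype.card (Fin r → Fin 3), ?_⟩
    rintro M ⟨C', _, _, rfl⟩
    exact Finset.card_le_univ C'
  calc Nat.multinomial univ ω ≤ C.card * r := h3
    _ ≤ (sSup _) * r := Nat.mul_le_mul_right r (le_csSup hbdd hmem)
end

section
/- Let r be a power of 3. Then for any composition [ω₀, ω₁, ω₂] of r, there exists a ternary constant-composition code C of length r with composition [ω₀, ω₁, ω₂] whose minimum distance is at least 5 and whose size M satisfies M · r² ≥ r!/(ω₀!·ω₁!·ω₂!). -/
open Finset Polynomial

lemma key_vanish {F : Type*} [Field F] [CharP F 3] (S : Finset F) (hS : S.card ≤ 4)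
    (d : F → F) (hne : ∀ x ∈ S, d x ≠ 0) (hcube : ∀ x ∈ S, d x ^ 3 = d x)
    (h0 : ∑ x ∈ S, d x = 0) (h1 : ∑ x ∈ S, d x * x = 0)
    (h2 : ∑ x ∈ S, d x * x ^ 2 = 0) : S = ∅ := by
  classical
  haveI : Fact (Nat.Prime 3) := ⟨by norm_num⟩
  have h3 : ∑ x ∈ S, d x * x ^ 3 = 0 := by
    have := congrArg (· ^ 3) h1
    simp only [sum_pow_char] at this
    norm_num at this
    rw [← this]
    apply sum_congr rfl
    intro x hx
    rw [mul_pow, hcube x hx]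
  have hpow : ∀ k ∈ Finset.range 4, ∑ x ∈ S, d x * x ^ k = 0 := by
    intro k hk
    simp only [mem_range] at hk
    interval_cases k
    · simpa using h0
    · simpa using h1
    · exact h2
    · exact h3
  have : ∀ i ∈ S, False := by
    intro i hi
    set q : F[X] := ∏ j ∈ S.erase i, (X - C j) with hq
    have hdeg : q.natDegree < 4 := by
      calc q.natDegree ≤ ∑ j ∈ S.erase i, (X - C j).natDegree := natDegree_prod_le _ _
        _ = (S.erase i).card := by simp
        _ < 4 := lt_of_lt_of_le (card_erase_lt_of_mem hi) hS
    have hzero : ∑ x ∈ S, d x * q.eval x = 0 := by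
      have heval : ∀ x : F, q.eval x = ∑ k ∈ Finset.range 4, q.coeff k * x ^ k := fun x =>
        eval_eq_sum_range' hdeg x
      calc ∑ x ∈ S, d x * q.eval x
          = ∑ x ∈ S, ∑ k ∈ Finset.range 4, q.coeff k * (d x * x ^ k) := by
            apply sum_congr rfl; intro x _
            rw [heval, Finset.mul_sum]
            apply sum_congr rfl; intro k _; ring
        _ = ∑ k ∈ Finset.range 4, q.coeff k * ∑ x ∈ S, d x * x ^ k := by
            rw [Finset.sum_comm]
            exact sum_congr rfl fun k _ => (Finset.mul_sum _ _ _).symm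
        _ = 0 := by
            apply Finset.sum_eq_zero; intro k hk; rw [hpow k hk, mul_zero]
    have hsingle : ∑ x ∈ S, d x * q.eval x = d i * q.eval i := by
      apply Finset.sum_eq_single_of_mem i hi
      intro x hx hxi
      have : q.eval x = 0 := by
        rw [hq, eval_prod]
        apply Finset.prod_eq_zero (mem_erase.mpr ⟨hxi, hx⟩)
        simp
      rw [this, mul_zero]
    have hqi : q.eval i ≠ 0 := by
      rw [hq, eval_prod]
      rw [Finset.prod_ne_zero_iff]
      intro j hj
      simp only [eval_sub, eval_X, eval_C, sub_ne_zero]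
      exact fun h => (mem_erase.mp hj).1 h.symm
    exact hne i hi (by
      have := hsingle ▸ hzero
      exact (mul_eq_zero.mp this).resolve_right hqi)
  exact eq_empty_of_forall_notMem this


lemma count_lower (r : ℕ) (ω : Fin 3 → ℕ) (hω : ∑ a, ω a = r) :
    Nat.multinomial Finset.univ ω ≤
      (Finset.univ.filter
        (fun c : Fin r → Fin 3 => ∀ a, (Finset.univ.filter (fun i => c i = a)).card = ω a)).card := by
  classical
  have hsum3 : ω 0 + ω 1 + ω 2 = r := by
    rw [← hω, Fin.sum_univ_three]
  have hmult : Nat.multinomial Finset.univ ω = r.choose (ω 0) * (r - ω 0).choose (ω 1) := by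
    have huniv : (Finset.univ : Finset (Fin 3)) = insert 0 (insert 1 {2}) := by decide
    rw [huniv, Nat.multinomial_insert (by decide), Nat.multinomial_insert (by decide),
      Nat.multinomial_singleton, mul_one]
    have h1 : ω 0 + ∑ i ∈ insert 1 ({2} : Finset (Fin 3)), ω i = r := by
      rw [Finset.sum_insert (by decide), Finset.sum_singleton]; omega
    have h2 : ω 1 + ∑ i ∈ ({2} : Finset (Fin 3)), ω i = ω 1 + ω 2 := by
      rw [Finset.sum_singleton]
    rw [h1, h2]
    congr 1
    congr 1
    omega
  set T := ((Finset.univ : Finset (Fin r)).powersetCard (ω 0)).sigma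
      (fun A : Finset (Fin r) => Aᶜ.powersetCard (ω 1)) with hT
  have hTcard : T.card = r.choose (ω 0) * (r - ω 0).choose (ω 1) := by
    rw [hT, Finset.card_sigma]
    have hstep : ∀ A ∈ (Finset.univ : Finset (Fin r)).powersetCard (ω 0),
        (Aᶜ.powersetCard (ω 1)).card = (r - ω 0).choose (ω 1) := by
      intro A hA
      rw [Finset.card_powersetCard, Finset.card_compl,
        (Finset.mem_powersetCard_univ.mp hA), Fintype.card_fin]
    rw [Finset.sum_congr rfl hstep, Finset.sum_const, Finset.card_powersetCard,
      Finset.card_univ, Fintype.card_fin, smul_eq_mul]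
  rw [hmult, ← hTcard]
  apply Finset.card_le_card_of_injOn
    (fun x => fun i => if i ∈ x.1 then (0 : Fin 3) else if i ∈ x.2 then 1 else 2)
  · rintro ⟨A, B⟩ hx
    simp only [hT, Finset.mem_coe, Finset.mem_sigma, Finset.mem_powersetCard_univ,
      Finset.mem_powersetCard] at hx
    obtain ⟨hA, hBsub, hB⟩ := hx
    have hAB : Disjoint A B := by
      rw [Finset.disjoint_left]
      intro i hiA hiB
      exact (Finset.mem_compl.mp (hBsub hiB)) hiA
    simp only [Finset.mem_coe, Finset.mem_filter, Finset.mem_univ, true_and]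
    have f0 : (Finset.univ.filter (fun i =>
        (if i ∈ A then (0:Fin 3) else if i ∈ B then 1 else 2) = 0)) = A := by
      ext i
      simp only [Finset.mem_filter, Finset.mem_univ, true_and]
      by_cases hiA : i ∈ A
      · simp [hiA]
      · by_cases hiB : i ∈ B <;> simp [hiA, hiB]
    have f1 : (Finset.univ.filter (fun i =>
        (if i ∈ A then (0:Fin 3) else if i ∈ B then 1 else 2) = 1)) = B := by
      ext i
      simp only [Finset.mem_filter, Finset.mem_univ, true_and]
      by_cases hiA : i ∈ A
      · simp only [hiA, if_true]
        constructor
        · intro h; exact absurd h (by decide)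
        · intro h; exact absurd hiA (Finset.mem_compl.mp (hBsub h))
      · by_cases hiB : i ∈ B <;> simp [hiA, hiB]
    have f2 : (Finset.univ.filter (fun i =>
        (if i ∈ A then (0:Fin 3) else if i ∈ B then 1 else 2) = 2)) = (A ∪ B)ᶜ := by
      ext i
      simp only [Finset.mem_filter, Finset.mem_univ, true_and, Finset.mem_compl,
        Finset.mem_union]
      by_cases hiA : i ∈ A
      · simp [hiA]
      · by_cases hiB : i ∈ B <;> simp [hiA, hiB]
    intro a
    fin_cases a
    · show (Finset.univ.filter (fun i =>
        (if i ∈ A then (0:Fin 3) else if i ∈ B then 1 else 2) = 0)).card = ω 0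
      rw [f0]; exact hA.2
    · show (Finset.univ.filter (fun i =>
        (if i ∈ A then (0:Fin 3) else if i ∈ B then 1 else 2) = 1)).card = ω 1
      rw [f1]; exact hB
    · show (Finset.univ.filter (fun i =>
        (if i ∈ A then (0:Fin 3) else if i ∈ B then 1 else 2) = 2)).card = ω 2
      rw [f2, Finset.card_compl, Finset.card_union_of_disjoint hAB, hA.2, hB,
        Fintype.card_fin]
      omega
  · rintro ⟨A, B⟩ hx ⟨A', B'⟩ hx' heq
    simp only [hT, Finset.mem_coe, Finset.mem_sigma, Finset.mem_powersetCard_univ,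
      Finset.mem_powersetCard] at hx hx'
    obtain ⟨-, hBsub, -⟩ := hx
    obtain ⟨-, hBsub', -⟩ := hx'
    have hA : A = A' := by
      ext i
      have h := congrFun heq i
      constructor
      · intro hiA
        by_contra hiA'
        simp only [hiA, if_true] at h
        by_cases hiB' : i ∈ B' <;> simp [hiA', hiB'] at h
      · intro hiA'
        by_contra hiA
        simp only [hiA', if_true] at h
        by_cases hiB : i ∈ B <;> simp [hiA, hiB] at h
    subst hA
    have hB : B = B' := by
      ext i
      have h := congrFun heq i
      by_cases hiA : i ∈ A
      · constructor
        · intro hiB; exact absurd hiA (Finset.mem_compl.mp (hBsub hiB))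
        · intro hiB'; exact absurd hiA (Finset.mem_compl.mp (hBsub' hiB'))
      · simp only [hiA, if_false] at h
        constructor
        · intro hiB; by_contra hiB'; simp [hiB, hiB'] at h
        · intro hiB'; by_contra hiB; simp [hiB, hiB'] at h
    subst hB
    rfl

lemma comp_sum {r : ℕ} {M : Type*} [AddCommMonoid M] (c : Fin r → Fin 3) (ω : Fin 3 → ℕ)
    (hc : ∀ a, (Finset.univ.filter (fun i => c i = a)).card = ω a) (f : Fin 3 → M) :
    ∑ i, f (c i) = ∑ a, ω a • f a := by
  classical
  rw [← Finset.sum_fiberwise' Finset.univ c f]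
  apply Finset.sum_congr rfl
  intro a _
  rw [Finset.sum_const, hc a]

lemma cast_cube {F : Type*} [Field F] (h3 : (3 : F) = 0) (a b : Fin 3) :
    (((a : ℕ) : F) - ((b : ℕ) : F)) ^ 3 = ((a : ℕ) : F) - ((b : ℕ) : F) := by
  fin_cases a <;> fin_cases b <;>
    simp only [Fin.isValue, Fin.val_zero, Fin.val_one, Fin.val_two, Nat.cast_ofNat,
      Nat.cast_zero, Nat.cast_one] <;>
    first
      | ring1
      | linear_combination 2 * h3
      | linear_combination -2 * h3

lemma cast_ne {F : Type*} [Field F] (h3 : (3 : F) = 0) (a b : Fin 3) (hab : a ≠ b) :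
    ((a : ℕ) : F) - ((b : ℕ) : F) ≠ 0 := by
  fin_cases a <;> fin_cases b <;>
    simp only [Fin.isValue, Fin.val_zero, Fin.val_one, Fin.val_two, Nat.cast_ofNat,
      Nat.cast_zero, Nat.cast_one] <;>
    first
      | exact absurd rfl hab
      | (intro h
         exact one_ne_zero (α := F) (by
           first
             | linear_combination h
             | linear_combination -h
             | linear_combination h3 - h
             | linear_combination h3 + h))

/-- Let `r` be a power of `3`. For any composition `[ω₀, ω₁, ω₂]` of `r`
there is a ternary constant-composition code of length `r` with composition `ω`,
minimum distance at least `5`, and size `M` with `M · r² ≥ r!/(ω₀!ω₁!ω₂!)`. -/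
theorem stmt_3 (r : ℕ) (hr : ∃ k : ℕ, 0 < k ∧ r = 3 ^ k)
    (ω : Fin 3 → ℕ) (hω : ∑ a, ω a = r) :
    ∃ C : Finset (Fin r → Fin 3),
      (∀ c ∈ C, ∀ a : Fin 3, (Finset.univ.filter (fun i => c i = a)).card = ω a) ∧
      (∀ u ∈ C, ∀ v ∈ C, u ≠ v → 5 ≤ hammingDist u v) ∧
      Nat.multinomial Finset.univ ω ≤ C.card * r ^ 2 := by
  classical
  obtain ⟨k, hk, hrk⟩ := hr
  haveI : Fact (Nat.Prime 3) := ⟨by norm_num⟩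
  set F := GaloisField 3 k with hF
  haveI : Fintype F := Fintype.ofFinite F
  have hcard : Fintype.card F = r := by
    rw [← Nat.card_eq_fintype_card, GaloisField.card 3 k hk.ne', hrk]
  have h3 : (3 : F) = 0 := by
    have := CharP.cast_eq_zero F 3
    exact_mod_cast this
  let e : Fin r ≃ F := (Fintype.equivFinOfCardEq hcard).symm
  let σ : (Fin r → Fin 3) → F × F := fun c =>
    (∑ i, ((c i : ℕ) : F) * e i, ∑ i, ((c i : ℕ) : F) * (e i) ^ 2)
  set V : Finset (Fin r → Fin 3) := Finset.univ.filter
      (fun c => ∀ a, (Finset.univ.filter (fun i => c i = a)).card = ω a) with hV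
  have hVle : Nat.multinomial Finset.univ ω ≤ V.card := count_lower r ω hω
  obtain ⟨s₀, -, hs₀⟩ := Finset.exists_max_image (Finset.univ : Finset (F × F))
    (fun s => (V.filter (fun c => σ c = s)).card) Finset.univ_nonempty
  have hVsum : V.card = ∑ s : F × F, (V.filter (fun c => σ c = s)).card :=
    Finset.card_eq_sum_card_fiberwise (fun c _ => Finset.mem_univ (σ c))
  have hpigeon : V.card ≤ (V.filter (fun c => σ c = s₀)).card * r ^ 2 := by
    rw [hVsum]
    calc ∑ s : F × F, (V.filter (fun c => σ c = s)).card
        ≤ ∑ _s : F × F, (V.filter (fun c => σ c = s₀)).card :=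
          Finset.sum_le_sum (fun s _ => hs₀ s (Finset.mem_univ s))
      _ = Fintype.card (F × F) * (V.filter (fun c => σ c = s₀)).card := by
          rw [Finset.sum_const, Finset.card_univ, smul_eq_mul]
      _ = (V.filter (fun c => σ c = s₀)).card * r ^ 2 := by
          rw [Fintype.card_prod, hcard]; ring
  refine ⟨V.filter (fun c => σ c = s₀), ?_, ?_, le_trans hVle hpigeon⟩
  · intro c hc a
    exact (Finset.mem_filter.mp (Finset.mem_filter.mp hc).1).2 a
  · intro u hu v hv huv
    by_contra hlt
    push_neg at hlt
    have hd4 : hammingDist u v ≤ 4 := by omega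
    obtain ⟨hu', hσu⟩ := Finset.mem_filter.mp hu
    obtain ⟨hv', hσv⟩ := Finset.mem_filter.mp hv
    have hcompu := (Finset.mem_filter.mp hu').2
    have hcompv := (Finset.mem_filter.mp hv').2
    set D : Finset (Fin r) := Finset.univ.filter (fun i => u i ≠ v i) with hD
    have hDd : hammingDist u v = D.card := rfl
    set S : Finset F := D.image e with hS
    set d : F → F := fun x => ((u (e.symm x) : ℕ) : F) - ((v (e.symm x) : ℕ) : F) with hd
    have hsum : ∀ n : ℕ, ∑ x ∈ S, d x * x ^ n
        = (∑ i, ((u i : ℕ) : F) * (e i) ^ n) - ∑ i, ((v i : ℕ) : F) * (e i) ^ n := by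
      intro n
      rw [hS, Finset.sum_image (fun a _ b _ h => e.injective h)]
      have hcg : ∀ i ∈ D, d (e i) * (e i) ^ n
          = ((u i : ℕ) : F) * (e i) ^ n - ((v i : ℕ) : F) * (e i) ^ n := by
        intro i _
        rw [hd]
        simp only [Equiv.symm_apply_apply]
        ring
      have hvan : ∀ i ∈ Finset.univ, i ∉ D →
          ((u i : ℕ) : F) * (e i) ^ n - ((v i : ℕ) : F) * (e i) ^ n = 0 := by
        intro i _ hiD
        have : u i = v i := by
          by_contra hne
          exact hiD (Finset.mem_filter.mpr ⟨Finset.mem_univ i, hne⟩)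
        rw [this]; ring
      rw [Finset.sum_congr rfl hcg, ← Finset.sum_sub_distrib,
        Finset.sum_subset (Finset.subset_univ D) hvan, Finset.sum_sub_distrib]
    have h0 : ∑ x ∈ S, d x = 0 := by
      have h := hsum 0
      simp only [pow_zero, mul_one] at h
      rw [h, comp_sum u ω hcompu (fun a => ((a : ℕ) : F)),
        comp_sum v ω hcompv (fun a => ((a : ℕ) : F)), sub_self]
    have hfst : (∑ i, ((u i : ℕ) : F) * e i) = ∑ i, ((v i : ℕ) : F) * e i := by
      have h := congrArg Prod.fst hσu
      have h' := congrArg Prod.fst hσv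
      simp only [σ] at h h'
      rw [h, h']
    have hsnd : (∑ i, ((u i : ℕ) : F) * (e i) ^ 2) = ∑ i, ((v i : ℕ) : F) * (e i) ^ 2 := by
      have h := congrArg Prod.snd hσu
      have h' := congrArg Prod.snd hσv
      simp only [σ] at h h'
      rw [h, h']
    have h1 : ∑ x ∈ S, d x * x = 0 := by
      have h := hsum 1
      simp only [pow_one] at h
      rw [h, hfst, sub_self]
    have h2 : ∑ x ∈ S, d x * x ^ 2 = 0 := by
      rw [hsum 2, hsnd, sub_self]
    have hScard : S.card ≤ 4 := by
      rw [hS, Finset.card_image_of_injective _ e.injective, ← hDd]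
      exact hd4
    have hne : ∀ x ∈ S, d x ≠ 0 := by
      intro x hx
      obtain ⟨i, hiD, rfl⟩ := Finset.mem_image.mp hx
      have hiD' := (Finset.mem_filter.mp hiD).2
      rw [hd]
      simp only [Equiv.symm_apply_apply]
      exact cast_ne h3 (u i) (v i) hiD'
    have hcube : ∀ x ∈ S, d x ^ 3 = d x := by
      intro x _
      exact cast_cube h3 _ _
    have hSempty : S = ∅ := key_vanish S hScard d hne hcube h0 h1 h2
    have hDempty : D = ∅ := by
      rw [hS] at hSempty
      by_contra hne'
      obtain ⟨i, hi⟩ := Finset.nonempty_iff_ne_empty.mpr hne'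
      have hmem : e i ∈ D.image e := Finset.mem_image_of_mem e hi
      rw [hSempty] at hmem
      exact absurd hmem (Finset.notMem_empty _)
    apply huv
    funext i
    by_contra hne'
    have hmem : i ∈ D := Finset.mem_filter.mpr ⟨Finset.mem_univ i, hne'⟩
    rw [hDempty] at hmem
    exact absurd hmem (Finset.notMem_empty _)
end

section
/- Let q ≥ 3 be an integer, let p be a prime with p ≥ q and p > 3, and let r be a power of p. Then for any composition [ω₀, ω₁, …, ω_{q−1}] of r, there exists a q-ary constant-composition code C of length r with composition [ω₀, ω₁, …, ω_{q−1}] whose minimum distance is at least 4 and whose size M satisfies M · r² ≥ r!/(ω₀!·ω₁!⋯ω_{q−1}!). -/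
open Finset Polynomial

/-- Vandermonde-type kernel triviality for at most 3 nodes. -/
lemma vander_aux {F : Type*} [Field F] {ι : Type*} [DecidableEq ι] (D : Finset ι)
    (hD : D.card ≤ 3) (e : ι → F) (he : Set.InjOn e D) (d : ι → F)
    (h0 : ∑ i ∈ D, d i = 0) (h1 : ∑ i ∈ D, d i * e i = 0)
    (h2 : ∑ i ∈ D, d i * e i ^ 2 = 0) {i₀ : ι} (hi₀ : i₀ ∈ D) : d i₀ = 0 := by
  set P : F[X] := ∏ j ∈ D.erase i₀, (X - C (e j)) with hP
  have hdeg : P.natDegree < 3 := by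
    have hle := Polynomial.natDegree_prod_le (D.erase i₀) (fun j => X - C (e j))
    have h1' : ∀ j ∈ D.erase i₀, (X - C (e j)).natDegree = 1 := fun j _ => natDegree_X_sub_C _
    have hcard : (D.erase i₀).card ≤ 2 := by
      rw [Finset.card_erase_of_mem hi₀]; omega
    calc P.natDegree ≤ ∑ j ∈ D.erase i₀, (X - C (e j)).natDegree := hle
      _ = (D.erase i₀).card := by rw [Finset.sum_congr rfl h1']; simp
      _ < 3 := by omega
  have key : ∑ j ∈ D, d j * P.eval (e j) = 0 := by
    have hterm : ∀ j ∈ D, d j * P.eval (e j) = ∑ n ∈ range 3, P.coeff n * (d j * e j ^ n) := by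
      intro j _
      rw [Polynomial.eval_eq_sum_range' hdeg, Finset.mul_sum]
      exact Finset.sum_congr rfl fun n _ => by ring
    rw [Finset.sum_congr rfl hterm, Finset.sum_comm]
    apply Finset.sum_eq_zero
    intro n hn
    rw [← Finset.mul_sum]
    have hn3 : n < 3 := Finset.mem_range.mp hn
    interval_cases n
    · simp only [pow_zero, mul_one, h0, mul_zero]
    · simp only [pow_one, h1, mul_zero]
    · rw [h2, mul_zero]
  have hsingle : ∑ j ∈ D, d j * P.eval (e j) = d i₀ * P.eval (e i₀) := by
    apply Finset.sum_eq_single_of_mem i₀ hi₀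
    intro j hj hne
    have hz : P.eval (e j) = 0 := by
      rw [hP, Polynomial.eval_prod]
      apply Finset.prod_eq_zero (Finset.mem_erase.mpr ⟨hne, hj⟩)
      simp
    rw [hz, mul_zero]
  have hPne : P.eval (e i₀) ≠ 0 := by
    rw [hP, Polynomial.eval_prod]
    apply Finset.prod_ne_zero_iff.mpr
    intro j hj
    simp only [eval_sub, eval_X, eval_C, sub_ne_zero]
    intro h
    exact (Finset.mem_erase.mp hj).1 (he (Finset.mem_of_mem_erase hj) hi₀ h.symm)
  have : d i₀ * P.eval (e i₀) = 0 := by rw [← hsingle, key]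
  rcases mul_eq_zero.mp this with h | h
  · exact h
  · exact absurd h hPne

lemma dist_aux {q r : ℕ} {F : Type*} [Field F] (e : Fin r → F) (he : Function.Injective e)
    (ι : Fin q → F) (hι : Function.Injective ι) (u v : Fin r → Fin q)
    (hsum : ∑ i, ι (u i) = ∑ i, ι (v i))
    (hs1 : ∑ i, ι (u i) * e i = ∑ i, ι (v i) * e i)
    (hs2 : ∑ i, ι (u i) * e i ^ 2 = ∑ i, ι (v i) * e i ^ 2)
    (hne : u ≠ v) : 4 ≤ hammingDist u v := by
  by_contra hlt
  push_neg at hlt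
  set D : Finset (Fin r) := univ.filter (fun i => u i ≠ v i) with hDdef
  have hDdist : hammingDist u v = D.card := rfl
  have hD3 : D.card ≤ 3 := by omega
  have hDne : D.Nonempty := by
    rw [hDdef, Finset.filter_nonempty_iff]
    by_contra h
    push_neg at h
    exact hne (funext fun i => h i (mem_univ i))
  obtain ⟨i₀, hi₀⟩ := hDne
  set d : Fin r → F := fun i => ι (u i) - ι (v i) with hddef
  have hoff : ∀ (g : Fin r → F), ∀ i ∈ (univ : Finset (Fin r)), i ∉ D →
      d i * g i = 0 := by
    intro g i _ hi
    have huv : u i = v i := by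
      by_contra h
      exact hi (Finset.mem_filter.mpr ⟨mem_univ i, h⟩)
    simp [hddef, huv]
  have hext : ∀ (g : Fin r → F), ∑ i ∈ D, d i * g i = ∑ i, d i * g i :=
    fun g => Finset.sum_subset (Finset.subset_univ D) (hoff g)
  have h0 : ∑ i ∈ D, d i = 0 := by
    have := hext (fun _ => 1)
    simp only [mul_one] at this
    rw [this, hddef]
    simp only [Finset.sum_sub_distrib, hsum, sub_self]
  have h1 : ∑ i ∈ D, d i * e i = 0 := by
    rw [hext, hddef]
    simp only [sub_mul, Finset.sum_sub_distrib, hs1, sub_self]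
  have h2 : ∑ i ∈ D, d i * e i ^ 2 = 0 := by
    rw [hext, hddef]
    simp only [sub_mul, Finset.sum_sub_distrib, hs2, sub_self]
  have hz := vander_aux D hD3 e (he.injOn) d h0 h1 h2 hi₀
  have hne' : d i₀ ≠ 0 := by
    have : u i₀ ≠ v i₀ := (Finset.mem_filter.mp hi₀).2
    exact sub_ne_zero.mpr fun h => this (hι h)
  exact hne' hz

/-- The number of words of a given composition is the multinomial coefficient (≥ direction). -/
lemma count_aux (q r : ℕ) (ω : Fin q → ℕ) (hω : ∑ a, ω a = r) :
    Nat.multinomial Finset.univ ω ≤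
      (Finset.univ.filter (fun c : Fin r → Fin q =>
        ∀ a, (Finset.univ.filter (fun i => c i = a)).card = ω a)).card := by
  classical
  set A : Finset (Fin r → Fin q) := Finset.univ.filter (fun c : Fin r → Fin q =>
        ∀ a, (Finset.univ.filter (fun i => c i = a)).card = ω a) with hA
  -- base word
  have hcardSig : Fintype.card (Σ a : Fin q, Fin (ω a)) = r := by
    simp [Fintype.card_sigma, hω]
  set E : (Σ a : Fin q, Fin (ω a)) ≃ Fin r := Fintype.equivFinOfCardEq hcardSig with hE
  set c₀ : Fin r → Fin q := fun i => (E.symm i).1 with hc₀def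
  have hc₀ : ∀ a, (Finset.univ.filter (fun i => c₀ i = a)).card = ω a := by
    intro a
    have himg : (Finset.univ.filter (fun i => c₀ i = a)) =
        Finset.image (fun j : Fin (ω a) => E ⟨a, j⟩) Finset.univ := by
      ext i
      simp only [mem_filter, mem_univ, true_and, Finset.mem_image]
      constructor
      · intro h
        rcases hEi : E.symm i with ⟨b, j⟩
        have hb : b = a := by
          have : c₀ i = b := by
            show (E.symm i).1 = b
            rw [hEi]
          rw [← this, h]
        subst hb
        exact ⟨j, by rw [← hEi, Equiv.apply_symm_apply]⟩
      · rintro ⟨j, rfl⟩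
        show (E.symm (E ⟨a, j⟩)).1 = a
        simp
    rw [himg, Finset.card_image_of_injective _
      (fun j j' h => by simpa using (E.injective h)), Finset.card_univ, Fintype.card_fin]
  have hc₀A : c₀ ∈ A := by
    rw [hA, mem_filter]
    exact ⟨mem_univ _, hc₀⟩
  set Φ : Equiv.Perm (Fin r) → (Fin r → Fin q) := fun σ => fun i => c₀ (σ i) with hΦ
  have hmaps : ∀ σ : Equiv.Perm (Fin r), σ ∈ (Finset.univ : Finset (Equiv.Perm (Fin r))) →
      Φ σ ∈ A := by
    intro σ _
    rw [hA, mem_filter]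
    refine ⟨mem_univ _, fun a => ?_⟩
    rw [← hc₀ a]
    apply Finset.card_bij (fun i _ => σ i)
    · intro i hi
      simp only [mem_filter, mem_univ, true_and] at hi ⊢
      exact hi
    · intro i _ j _ h
      exact σ.injective h
    · intro j hj
      refine ⟨σ.symm j, ?_, by simp⟩
      simp only [mem_filter, mem_univ, true_and] at hj ⊢
      simpa [hΦ] using hj
  have hfib : ∀ c ∈ A, (Finset.univ.filter (fun σ => Φ σ = c)).card ≤ ∏ a, (ω a).factorial := by
    intro c _
    by_cases hne : (Finset.univ.filter (fun σ => Φ σ = c)).Nonempty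
    · obtain ⟨τ, hτ⟩ := hne
      have hτc : Φ τ = c := (mem_filter.mp hτ).2
      have hstab : ∀ σ ∈ (Finset.univ.filter (fun σ => Φ σ = c)),
          ∀ i, c₀ ((σ * τ⁻¹) i) = c₀ i := by
        intro σ hσ i
        have hσc : Φ σ = c := (mem_filter.mp hσ).2
        have h := congrFun (hσc.trans hτc.symm) (τ⁻¹ i)
        simpa [hΦ] using h
      set g : Equiv.Perm (Fin r) → (∀ a : Fin q, Equiv.Perm {i : Fin r // c₀ i = a}) :=
        fun σ =>
          if h : ∀ i, c₀ ((σ * τ⁻¹) i) = c₀ i then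
            fun a => Equiv.Perm.subtypePerm (σ * τ⁻¹) (fun i => by rw [h i])
          else fun a => 1
        with hg
      have hinj : Set.InjOn g ((Finset.univ.filter (fun σ => Φ σ = c)) : Finset _) := by
        intro σ hσ σ' hσ' hgg
        have h1 := hstab σ hσ
        have h2 := hstab σ' hσ'
        rw [hg] at hgg
        simp only [dif_pos h1, dif_pos h2] at hgg
        have hptw : ∀ i : Fin r, (σ * τ⁻¹) i = (σ' * τ⁻¹) i := by
          intro i
          have h3 := congrFun hgg (c₀ i)
          have h4 := congrArg (fun π : Equiv.Perm {j : Fin r // c₀ j = c₀ i} =>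
            (π ⟨i, rfl⟩ : {j : Fin r // c₀ j = c₀ i}).1) h3
          simpa [Equiv.Perm.subtypePerm_apply] using h4
        have heq : σ * τ⁻¹ = σ' * τ⁻¹ := Equiv.ext hptw
        exact mul_right_cancel heq
      calc (Finset.univ.filter (fun σ => Φ σ = c)).card
          ≤ (Finset.univ : Finset (∀ a : Fin q, Equiv.Perm {i : Fin r // c₀ i = a})).card := by
            apply Finset.card_le_card_of_injOn g (fun x _ => Finset.mem_univ (g x)) hinj
        _ = ∏ a, (ω a).factorial := by
            rw [Finset.card_univ, Fintype.card_pi]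
            apply Finset.prod_congr rfl
            intro a _
            rw [Fintype.card_perm, Fintype.card_subtype, hc₀ a]
    · rw [Finset.not_nonempty_iff_eq_empty.mp hne]
      simp
  have hperm : (Finset.univ : Finset (Equiv.Perm (Fin r))).card = r.factorial := by
    rw [Finset.card_univ, Fintype.card_perm, Fintype.card_fin]
  have hmain : r.factorial ≤ (∏ a, (ω a).factorial) * A.card := by
    rw [← hperm]
    exact Finset.card_le_mul_card_image_of_maps_to hmaps _ hfib
  have hspec := Nat.multinomial_spec (Finset.univ : Finset (Fin q)) ω
  rw [hω] at hspec
  have hprodpos : 0 < ∏ a, (ω a).factorial :=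
    Finset.prod_pos (fun a _ => Nat.factorial_pos _)
  apply Nat.le_of_mul_le_mul_left _ hprodpos
  rw [hspec]
  exact hmain

/-- Let `q ≥ 3` be an integer, `p` a prime with `p ≥ q` and `p > 3`, and
`r` a power of `p`. For any composition `ω` of `r`, there is a `q`-ary
constant-composition code of length `r` with composition `ω`, minimum distance at least
`4`, and size `M` with `M · r² ≥ r!/(ω₀!⋯ω_{q-1}!)`. -/
theorem stmt_4 (q p r : ℕ) (hq : 3 ≤ q) (hp : p.Prime) (hpq : q ≤ p) (hp3 : 3 < p)
    (hr : ∃ k : ℕ, 0 < k ∧ r = p ^ k)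
    (ω : Fin q → ℕ) (hω : ∑ a, ω a = r) :
    ∃ C : Finset (Fin r → Fin q),
      (∀ c ∈ C, ∀ a : Fin q, (Finset.univ.filter (fun i => c i = a)).card = ω a) ∧
      (∀ u ∈ C, ∀ v ∈ C, u ≠ v → 4 ≤ hammingDist u v) ∧
      Nat.multinomial Finset.univ ω ≤ C.card * r ^ 2 := by
  classical
  obtain ⟨k, hk, rfl⟩ := hr
  haveI : Fact p.Prime := ⟨hp⟩
  set F := GaloisField p k with hF
  haveI : Fintype F := Fintype.ofFinite F
  have hcardF : Fintype.card F = p ^ k := by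
    rw [← Nat.card_eq_fintype_card]
    exact GaloisField.card p k hk.ne'
  set e : Fin (p ^ k) → F := fun i => (Fintype.equivFinOfCardEq hcardF).symm i with he_def
  have he : Function.Injective e := (Fintype.equivFinOfCardEq hcardF).symm.injective
  set ι : Fin q → F := fun a => ((a : ℕ) : F) with hι_def
  have hι' : ∀ a b : Fin q, (a : ℕ) ≤ (b : ℕ) → ι a = ι b → a = b := by
    intro a b hab h
    have h0 : (b : ℕ) - (a : ℕ) = 0 := by
      by_contra hne
      have hdvd : p ∣ (b : ℕ) - (a : ℕ) := by
        rw [← CharP.cast_eq_zero_iff F p]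
        rw [Nat.cast_sub hab]
        rw [hι_def] at h
        simp only at h
        rw [h, sub_self]
      have hlt : (b : ℕ) - (a : ℕ) < p :=
        lt_of_lt_of_le (lt_of_le_of_lt (Nat.sub_le _ _) b.isLt) hpq
      have := Nat.le_of_dvd (Nat.pos_of_ne_zero hne) hdvd
      omega
    exact Fin.ext (by omega)
  have hι : Function.Injective ι := by
    intro a b h
    rcases le_total (a : ℕ) (b : ℕ) with hab | hab
    · exact hι' a b hab h
    · exact (hι' b a hab h.symm).symm
  set A : Finset (Fin (p ^ k) → Fin q) := Finset.univ.filter (fun c : Fin (p ^ k) → Fin q =>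
      ∀ a, (Finset.univ.filter (fun i => c i = a)).card = ω a) with hA
  set S : (Fin (p ^ k) → Fin q) → F × F :=
    fun c => (∑ i, ι (c i) * e i, ∑ i, ι (c i) * e i ^ 2) with hS
  have hfibsum : A.card = ∑ s : F × F, (A.filter (fun c => S c = s)).card :=
    Finset.card_eq_sum_card_fiberwise (fun c _ => mem_univ (S c))
  have hcardFF : (Finset.univ : Finset (F × F)).card = (p ^ k) ^ 2 := by
    rw [Finset.card_univ, Fintype.card_prod, hcardF]
    ring
  have hex : ∃ s ∈ (Finset.univ : Finset (F × F)),
      A.card ≤ (p ^ k) ^ 2 * (A.filter (fun c => S c = s)).card := by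
    apply Finset.exists_le_of_sum_le
    · exact ⟨(0, 0), mem_univ _⟩
    · rw [Finset.sum_const, hcardFF, smul_eq_mul, ← Finset.mul_sum, ← hfibsum, mul_comm]
  obtain ⟨s₀, -, hs₀⟩ := hex
  set C : Finset (Fin (p ^ k) → Fin q) := A.filter (fun c => S c = s₀) with hC
  have hCA : ∀ c ∈ C, c ∈ A := fun c hc => Finset.mem_of_mem_filter c hc
  have hcomp : ∀ c ∈ C, ∀ a : Fin q, (Finset.univ.filter (fun i => c i = a)).card = ω a :=
    fun c hc => (Finset.mem_filter.mp (hCA c hc)).2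
  have hsumA : ∀ w ∈ A, ∑ i, ι (w i) = ∑ a, (ω a) • ι a := by
    intro w hw
    rw [← Finset.sum_fiberwise Finset.univ (fun i => w i) (fun i => ι (w i))]
    apply Finset.sum_congr rfl
    intro a _
    rw [Finset.sum_congr rfl (fun i hi => by rw [(Finset.mem_filter.mp hi).2]),
      Finset.sum_const, (Finset.mem_filter.mp hw).2 a]
  refine ⟨C, hcomp, ?_, ?_⟩
  · intro u hu v hv huv
    have hSu : S u = s₀ := (Finset.mem_filter.mp hu).2
    have hSv : S v = s₀ := (Finset.mem_filter.mp hv).2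
    have hS' : S u = S v := hSu.trans hSv.symm
    refine dist_aux e he ι hι u v ?_ ?_ ?_ huv
    · rw [hsumA u (hCA u hu), hsumA v (hCA v hv)]
    · exact congrArg Prod.fst hS'
    · exact congrArg Prod.snd hS'
  · calc Nat.multinomial Finset.univ ω ≤ A.card := count_aux q (p ^ k) ω hω
      _ ≤ (p ^ k) ^ 2 * C.card := hs₀
      _ = C.card * (p ^ k) ^ 2 := mul_comm _ _
end

section
/- Let r be a power of 5 with r ≥ 7. Then for any composition [ω₀, ω₁, ω₂, ω₃, ω₄] of r, there exists a 5-ary constant-composition code C of length r with composition [ω₀, ω₁, ω₂, ω₃, ω₄] whose minimum distance is at least 7 and whose size M satisfies M · r⁴ ≥ r!/(ω₀!·ω₁!·ω₂!·ω₃!·ω₄!). -/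
open Finset

lemma count_lemma (r : ℕ) (ω : Fin 5 → ℕ) (hω : ∑ a, ω a = r) :
    Nat.multinomial Finset.univ ω ≤
      (Finset.univ.filter (fun c : Fin r → Fin 5 =>
        ∀ a, (Finset.univ.filter (fun i => c i = a)).card = ω a)).card := by
  classical
  set W := (Finset.univ.filter (fun c : Fin r → Fin 5 =>
        ∀ a, (Finset.univ.filter (fun i => c i = a)).card = ω a)) with hW
  have E : Fin r ≃ Σ a : Fin 5, Fin (ω a) :=
    Fintype.equivOfCardEq (by simp [Fintype.card_sigma, hω])
  set w0 : Fin r → Fin 5 := fun i => (E i).1 with hw0def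
  have hcard_sig : ∀ a : Fin 5, Fintype.card {s : Σ b : Fin 5, Fin (ω b) // s.1 = a} = ω a := by
    intro a
    rw [← Fintype.card_fin (ω a)]
    exact Fintype.card_congr
      { toFun := fun s => Fin.cast (congrArg ω s.2) s.1.2
        invFun := fun x => ⟨⟨a, x⟩, rfl⟩
        left_inv := fun ⟨⟨b, x⟩, h⟩ => by subst h; rfl
        right_inv := fun x => rfl }
  have hw0 : ∀ a, (Finset.univ.filter (fun i => w0 i = a)).card = ω a := by
    intro a
    calc (Finset.univ.filter (fun i => w0 i = a)).card
        = Fintype.card {i // (E i).1 = a} := (Fintype.card_subtype _).symm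
      _ = Fintype.card {s : Σ b : Fin 5, Fin (ω b) // s.1 = a} :=
          Fintype.card_congr (E.subtypeEquiv fun i => Iff.rfl)
      _ = ω a := hcard_sig a
  have hmem : ∀ σ : Equiv.Perm (Fin r), w0 ∘ σ ∈ W := by
    intro σ
    simp only [hW, mem_filter, mem_univ, true_and]
    intro a
    calc (Finset.univ.filter (fun i => (w0 ∘ σ) i = a)).card
        = Fintype.card {i // w0 (σ i) = a} := (Fintype.card_subtype _).symm
      _ = Fintype.card {j // w0 j = a} :=
          Fintype.card_congr (σ.subtypeEquiv fun i => Iff.rfl)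
      _ = (Finset.univ.filter (fun i => w0 i = a)).card := Fintype.card_subtype _
      _ = ω a := hw0 a
  have fiber_bound : ∀ c ∈ W,
      (Finset.univ.filter (fun σ : Equiv.Perm (Fin r) => w0 ∘ σ = c)).card
        ≤ ∏ a, (ω a).factorial := by
    intro c hc
    have hc' : ∀ a, (Finset.univ.filter (fun i => c i = a)).card = ω a := by
      simpa [hW] using hc
    have hcard1 : ∀ a : Fin 5, Fintype.card {i // c i = a} = ω a := fun a => by
      rw [Fintype.card_subtype]; exact hc' a
    have hcard2 : ∀ a : Fin 5, Fintype.card {j // w0 j = a} = ω a := fun a => by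
      rw [Fintype.card_subtype]; exact hw0 a
    have key : Fintype.card {σ : Equiv.Perm (Fin r) // w0 ∘ σ = c}
        ≤ Fintype.card (∀ a : Fin 5, ({i // c i = a} ≃ {j // w0 j = a})) := by
      apply Fintype.card_le_of_injective
        (fun σ => fun a => Equiv.ofBijective
          (fun i => (⟨σ.1 i.1, by
            have := congrFun σ.2 i.1
            simp only [Function.comp_apply] at this
            rw [this, i.2]⟩ : {j // w0 j = a}))
          (by
            refine (Fintype.bijective_iff_injective_and_card _).2 ⟨?_, by rw [hcard1, hcard2]⟩
            intro x y hxy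
            exact Subtype.ext (σ.1.injective (congrArg Subtype.val hxy))))
      intro σ τ h
      refine Subtype.ext (Equiv.ext fun i => ?_)
      have := congrArg (fun f => ((f (c i)) ⟨i, rfl⟩ : {j // w0 j = c i}).1) h
      simpa [Equiv.ofBijective] using this
    have hprod : Fintype.card (∀ a : Fin 5, ({i // c i = a} ≃ {j // w0 j = a}))
        = ∏ a, (ω a).factorial := by
      rw [Fintype.card_pi]
      refine Finset.prod_congr rfl fun a _ => ?_
      rw [Fintype.card_equiv (Fintype.equivOfCardEq (by rw [hcard1, hcard2])), hcard1]
    calc (Finset.univ.filter (fun σ : Equiv.Perm (Fin r) => w0 ∘ σ = c)).card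
        = Fintype.card {σ : Equiv.Perm (Fin r) // w0 ∘ σ = c} := (Fintype.card_subtype _).symm
      _ ≤ _ := key
      _ = ∏ a, (ω a).factorial := hprod
  have hsum : (Finset.univ : Finset (Equiv.Perm (Fin r))).card
      = ∑ c ∈ W, (Finset.univ.filter (fun σ : Equiv.Perm (Fin r) => w0 ∘ σ = c)).card :=
    Finset.card_eq_sum_card_fiberwise (fun σ _ => hmem σ)
  have hfact : r.factorial ≤ W.card * ∏ a, (ω a).factorial := by
    have h1 : (Finset.univ : Finset (Equiv.Perm (Fin r))).card = r.factorial := by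
      rw [Finset.card_univ, Fintype.card_perm, Fintype.card_fin]
    calc r.factorial = ∑ c ∈ W, (Finset.univ.filter (fun σ : Equiv.Perm (Fin r) => w0 ∘ σ = c)).card := by
          rw [← h1, hsum]
      _ ≤ ∑ _c ∈ W, ∏ a, (ω a).factorial := Finset.sum_le_sum fiber_bound
      _ = W.card * ∏ a, (ω a).factorial := by rw [Finset.sum_const, smul_eq_mul]
  have hpos : 0 < ∏ a, (ω a).factorial :=
    Finset.prod_pos fun a _ => Nat.factorial_pos _
  have hspec := Nat.multinomial_spec Finset.univ ω
  rw [hω] at hspec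
  have : (∏ a, (ω a).factorial) * Nat.multinomial Finset.univ ω
      ≤ (∏ a, (ω a).factorial) * W.card := by
    rw [hspec, mul_comm (∏ a, (ω a).factorial) W.card]; exact hfact
  exact Nat.le_of_mul_le_mul_left this hpos

/-- Let `r` be a power of `5` with `r ≥ 7`. For any composition
`[ω₀, ω₁, ω₂, ω₃, ω₄]` of `r`, there is a `5`-ary constant-composition code of length `r`
with composition `ω`, minimum distance at least `7`, and size `M` with
`M · r⁴ ≥ r!/(ω₀!ω₁!ω₂!ω₃!ω₄!)`. -/
theorem stmt_5 (r : ℕ) (hr : ∃ k : ℕ, 0 < k ∧ r = 5 ^ k) (hr7 : 7 ≤ r)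
    (ω : Fin 5 → ℕ) (hω : ∑ a, ω a = r) :
    ∃ C : Finset (Fin r → Fin 5),
      (∀ c ∈ C, ∀ a : Fin 5, (Finset.univ.filter (fun i => c i = a)).card = ω a) ∧
      (∀ u ∈ C, ∀ v ∈ C, u ≠ v → 7 ≤ hammingDist u v) ∧
      Nat.multinomial Finset.univ ω ≤ C.card * r ^ 4 := by
  classical
  obtain ⟨k, hk, rfl⟩ := hr
  haveI : Fact (Nat.Prime 5) := ⟨by norm_num⟩
  set F := GaloisField 5 k with hF
  haveI : Fintype F := Fintype.ofFinite F
  have hFcard : Fintype.card F = 5 ^ k := by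
    rw [← Nat.card_eq_fintype_card]; exact GaloisField.card 5 k (by omega)
  have α : Fin (5 ^ k) ≃ F := Fintype.equivOfCardEq (by simp [hFcard])
  set ψ : ZMod 5 →+* F := ZMod.castHom dvd_rfl F with hψ
  set ι : Fin 5 → F := fun a => ψ ((a : ℕ) : ZMod 5) with hι
  have hιinj : Function.Injective ι := by
    intro a b h
    have h2 : ((a : ℕ) : ZMod 5) = ((b : ℕ) : ZMod 5) := ψ.injective h
    have ha := ZMod.val_cast_of_lt (n := 5) a.2
    have hb := ZMod.val_cast_of_lt (n := 5) b.2
    exact Fin.ext (by rw [← ha, ← hb, h2])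
  set φ : (Fin (5 ^ k) → Fin 5) → (Fin 4 → F) :=
    fun c j => ∑ i, ι (c i) * (α i) ^ ((j : ℕ) + 1) with hφ
  set W := Finset.univ.filter (fun c : Fin (5 ^ k) → Fin 5 =>
    ∀ a, (Finset.univ.filter (fun i => c i = a)).card = ω a) with hW
  obtain ⟨y, -, hymax⟩ := Finset.exists_max_image (Finset.univ : Finset (Fin 4 → F))
    (fun y => (W.filter (fun c => φ c = y)).card) Finset.univ_nonempty
  refine ⟨W.filter (fun c => φ c = y), ?_, ?_, ?_⟩
  · intro c hc a
    exact (Finset.mem_filter.mp (Finset.mem_filter.mp hc).1).2 a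
  · -- distance
    intro u hu v hv huv
    by_contra hlt
    push_neg at hlt
    have hu' := Finset.mem_filter.mp hu
    have hv' := Finset.mem_filter.mp hv
    have hucomp := (Finset.mem_filter.mp hu'.1).2
    have hvcomp := (Finset.mem_filter.mp hv'.1).2
    have hφuv : φ u = φ v := hu'.2.trans hv'.2.symm
    set e : Fin (5 ^ k) → F := fun i => ι (u i) - ι (v i) with he
    have comp_sum : ∀ (c : Fin (5 ^ k) → Fin 5),
        (∀ a, (Finset.univ.filter (fun i => c i = a)).card = ω a) →
        ∑ i, ι (c i) = ∑ a : Fin 5, (ω a) • ι a := by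
      intro c hc
      rw [← Finset.sum_fiberwise Finset.univ c (fun i => ι (c i))]
      refine Finset.sum_congr rfl fun a _ => ?_
      rw [Finset.sum_congr rfl (fun i hi => by rw [(Finset.mem_filter.mp hi).2]),
        Finset.sum_const, hc a]
    have hsub : ∀ j : ℕ, ∑ i, e i * α i ^ j
        = (∑ i, ι (u i) * α i ^ j) - (∑ i, ι (v i) * α i ^ j) := by
      intro j
      rw [← Finset.sum_sub_distrib]
      exact Finset.sum_congr rfl fun i _ => by simp [he, sub_mul]
    have epow : ∀ i, e i ^ 5 = e i := by
      intro i
      show (ι (u i) - ι (v i)) ^ 5 = ι (u i) - ι (v i)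
      simp only [hι, ← map_sub ψ, ← map_pow, ZMod.pow_card]
    have k0 : ∑ i, e i * α i ^ 0 = 0 := by
      simp only [pow_zero, mul_one, he]
      rw [Finset.sum_sub_distrib, comp_sum u hucomp, comp_sum v hvcomp, sub_self]
    have kj : ∀ j : Fin 4, ∑ i, e i * α i ^ ((j : ℕ) + 1) = 0 := by
      intro j
      have h := congrFun hφuv j
      simp only [hφ] at h
      rw [hsub, h, sub_self]
    have k5 : ∑ i, e i * α i ^ 5 = 0 := by
      have h1 : ∑ i, e i * α i ^ 1 = 0 := by simpa using kj 0
      have hfr := congrArg (frobenius F 5) h1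
      rw [map_sum, map_zero] at hfr
      rw [← hfr]
      refine Finset.sum_congr rfl fun i _ => ?_
      rw [pow_one, frobenius_def, mul_pow, epow i]
    have key : ∀ j : ℕ, j ≤ 5 → ∑ i, e i * α i ^ j = 0 := by
      intro j hj
      interval_cases j
      · exact k0
      · simpa using kj 0
      · simpa using kj 1
      · simpa using kj 2
      · simpa using kj 3
      · exact k5
    set S := Finset.univ.filter (fun i => u i ≠ v i) with hS
    have hS6 : S.card ≤ 6 := by
      have h6 : hammingDist u v ≤ 6 := by omega
      simpa [hammingDist, hS, Finset.filter_eq'] using h6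
    refine huv (funext fun i => ?_)
    by_cases hiS : i ∈ S
    · have hinj : Set.InjOn (fun t => α t) ↑S := fun x _ z _ h => α.injective h
      set L := Lagrange.basis S (fun t => α t) i with hL
      have hdeg : L.natDegree < 6 := by
        rw [hL, Lagrange.natDegree_basis hinj hiS]; omega
      have heval0 : ∑ t, e t * L.eval (α t) = 0 := by
        have hh : ∀ t : Fin (5 ^ k), e t * L.eval (α t)
            = ∑ j ∈ Finset.range 6, L.coeff j * (e t * α t ^ j) := by
          intro t
          rw [Polynomial.eval_eq_sum_range' hdeg, Finset.mul_sum]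
          exact Finset.sum_congr rfl fun j _ => by ring
        rw [Finset.sum_congr rfl (fun t _ => hh t), Finset.sum_comm]
        refine Finset.sum_eq_zero fun j hj => ?_
        rw [← Finset.mul_sum, key j (Nat.lt_succ_iff.mp (Finset.mem_range.mp hj)),
          mul_zero]
      have heval1 : ∑ t, e t * L.eval (α t) = e i := by
        rw [← Finset.sum_subset (Finset.subset_univ S)
          (fun t _ htS => by
            have hte : u t = v t := by simpa [hS] using htS
            simp [he, hte])]
        rw [Finset.sum_eq_single_of_mem i hiS
          (fun t htS hti => by
            rw [hL, Lagrange.eval_basis_of_ne (Ne.symm hti) htS, mul_zero])]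
        rw [hL, Lagrange.eval_basis_self hinj hiS, mul_one]
      have : e i = 0 := by rw [← heval1, heval0]
      exact hιinj (sub_eq_zero.mp this)
    · simpa [hS] using hiS
  · -- size
    have h1 : W.card = ∑ z ∈ (Finset.univ : Finset (Fin 4 → F)),
        (W.filter (fun c => φ c = z)).card :=
      Finset.card_eq_sum_card_fiberwise (fun c _ => Finset.mem_univ _)
    have h2 : W.card ≤ Fintype.card (Fin 4 → F) * (W.filter (fun c => φ c = y)).card := by
      rw [h1]
      calc ∑ z ∈ (Finset.univ : Finset (Fin 4 → F)), (W.filter (fun c => φ c = z)).card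
          ≤ ∑ _z ∈ (Finset.univ : Finset (Fin 4 → F)),
              (W.filter (fun c => φ c = y)).card :=
            Finset.sum_le_sum fun z _ => hymax z (Finset.mem_univ _)
        _ = _ := by rw [Finset.sum_const, Finset.card_univ, smul_eq_mul]
    have h3 : Fintype.card (Fin 4 → F) = (5 ^ k) ^ 4 := by
      rw [Fintype.card_fun, hFcard, Fintype.card_fin]
    calc Nat.multinomial Finset.univ ω ≤ W.card := count_lemma (5 ^ k) ω hω
      _ ≤ Fintype.card (Fin 4 → F) * (W.filter (fun c => φ c = y)).card := h2
      _ = (W.filter (fun c => φ c = y)).card * (5 ^ k) ^ 4 := by rw [h3, mul_comm]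
end

section
/- Let q ≥ 3 be an integer and let [ω₀, ω₁, …, ω_{q−1}] be a composition of n. Let t_n be the least nonnegative integer with t_n ≡ n (mod Q), and let Γ(t_n, q) = L(t_n, q) − t_n. Then there exists a q-ary constant-composition code of length n with composition [ω₀, ω₁, …, ω_{q−1}], minimum distance at least 3, and size M satisfying M · (n + Γ(t_n, q)) ≥ n!/(ω₀!·ω₁!⋯ω_{q−1}!). -/
open Finset

namespace Stmt7aux

lemma sigma_mk_eq {α : Type*} {β : α → Type*} (s : Σ b, β b) (a : α) (h : s.1 = a) :
    (⟨a, h ▸ s.2⟩ : Σ b, β b) = s := by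
  rcases s with ⟨b, y⟩; dsimp at h; subst h; rfl

def sfe {q : ℕ} (β : Fin q → Type*) (a : Fin q) : {s : Σ b, β b // s.1 = a} ≃ β a where
  toFun x := x.2 ▸ x.1.2
  invFun y := ⟨⟨a, y⟩, rfl⟩
  left_inv := by rintro ⟨⟨b, y⟩, h⟩; dsimp at h; subst h; rfl
  right_inv y := rfl

def fibEquiv {q n : ℕ} (ω : Fin q → ℕ) (c : Fin n → Fin q) :
    {e : Fin n ≃ Σ a, Fin (ω a) // ∀ i, (e i).1 = c i} ≃ ∀ a, ({i // c i = a} ≃ Fin (ω a)) where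
  toFun x a := (Equiv.subtypeEquiv x.1 (fun i => by rw [x.2 i])).trans (sfe _ a)
  invFun F := ⟨{ toFun := fun i => ⟨c i, F (c i) ⟨i, rfl⟩⟩
                 invFun := fun s => ((F s.1).symm s.2).1
                 left_inv := fun i => by simp
                 right_inv := by
                   rintro ⟨a, y⟩
                   have key : ∀ (a : Fin q) (x : {i // c i = a}),
                       (⟨c x.1, F (c x.1) ⟨x.1, rfl⟩⟩ : Σ b, Fin (ω b)) = ⟨a, F a x⟩ := by
                     rintro a ⟨i, hi⟩; subst hi; rfl
                   dsimp only
                   rw [key a ((F a).symm y)]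
                   simp },
               fun i => rfl⟩
  left_inv := by
    rintro ⟨e, he⟩
    apply Subtype.ext
    apply Equiv.ext
    intro i
    dsimp [sfe]
    exact sigma_mk_eq (e i) (c i) (he i)
  right_inv := by
    intro F
    funext a
    apply Equiv.ext
    rintro ⟨i, hi⟩
    dsimp [sfe]
    subst hi
    rfl

lemma card_words {q n : ℕ} (ω : Fin q → ℕ) (hω : ∑ a, ω a = n)
    [DecidablePred fun c : Fin n → Fin q => ∀ a, (univ.filter (fun i => c i = a)).card = ω a] :
    ((univ : Finset (Fin n → Fin q)).filter
      (fun c => ∀ a, (univ.filter (fun i => c i = a)).card = ω a)).card * ∏ a, (ω a).factorial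
      = n.factorial := by
  classical
  set S := (univ : Finset (Fin n → Fin q)).filter
      (fun c => ∀ a, (univ.filter (fun i => c i = a)).card = ω a) with hS
  have hcard : Fintype.card (Σ a, Fin (ω a)) = n := by simp [hω]
  have hcard' : Fintype.card (Fin n) = Fintype.card (Σ a, Fin (ω a)) := by simp [hcard]
  -- card of the type of equivs is n!
  have hE : Fintype.card (Fin n ≃ Σ a, Fin (ω a)) = n.factorial := by
    rw [Fintype.card_equiv (Fintype.equivOfCardEq hcard'), Fintype.card_fin]
  -- the map
  set Ψ : (Fin n ≃ Σ a, Fin (ω a)) → (Fin n → Fin q) := fun e i => (e i).1 with hΨ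
  have hmaps : ∀ e : Fin n ≃ Σ a, Fin (ω a), Ψ e ∈ S := by
    intro e
    simp only [hS, mem_filter, mem_univ, true_and]
    intro a
    rw [← Fintype.card_subtype]
    rw [Fintype.card_congr ((Equiv.subtypeEquiv e (fun i => Iff.rfl)).trans
      (sfe (fun b => Fin (ω b)) a))]
    simp
  have hsplit : (univ : Finset (Fin n ≃ Σ a, Fin (ω a))).card
      = ∑ c ∈ S, ((univ : Finset (Fin n ≃ Σ a, Fin (ω a))).filter (fun e => Ψ e = c)).card :=
    Finset.card_eq_sum_card_fiberwise (fun e _ => hmaps e)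
  have hfib : ∀ c ∈ S, ((univ : Finset (Fin n ≃ Σ a, Fin (ω a))).filter
      (fun e => Ψ e = c)).card = ∏ a, (ω a).factorial := by
    intro c hc
    simp only [hS, mem_filter, mem_univ, true_and] at hc
    rw [← Fintype.card_subtype]
    have e1 : {e : Fin n ≃ Σ a, Fin (ω a) // Ψ e = c}
        ≃ {e : Fin n ≃ Σ a, Fin (ω a) // ∀ i, (e i).1 = c i} :=
      Equiv.subtypeEquivRight (fun e => by simp [hΨ, funext_iff])
    rw [Fintype.card_congr (e1.trans (fibEquiv ω c)), Fintype.card_pi]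
    refine Finset.prod_congr rfl (fun a _ => ?_)
    have hca : Fintype.card {i // c i = a} = Fintype.card (Fin (ω a)) := by
      rw [Fintype.card_subtype, Fintype.card_fin, hc a]
    rw [Fintype.card_equiv (Fintype.equivOfCardEq hca), Fintype.card_subtype, hc a]
  have : n.factorial = S.card * ∏ a, (ω a).factorial := by
    rw [← hE, ← Fintype.card_coe, Fintype.card_coe]
    calc (univ : Finset (Fin n ≃ Σ a, Fin (ω a))).card
        = ∑ c ∈ S, ((univ : Finset (Fin n ≃ Σ a, Fin (ω a))).filter (fun e => Ψ e = c)).card := hsplit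
      _ = ∑ c ∈ S, ∏ a, (ω a).factorial := Finset.sum_congr rfl hfib
      _ = S.card * ∏ a, (ω a).factorial := by rw [Finset.sum_const, smul_eq_mul]
  omega

end Stmt7aux

/-- Let `q ≥ 3` and let `ω` be a composition of `n`.
Let `Q` be the product of all primes `p` with `p ≤ q - 1`, let `t` be the least
nonnegative integer with `t ≡ n (mod Q)` (i.e. `t = n % Q`), and let `L` be the least
integer `l ≥ t` with `gcd(l, Q) = 1`; set `Γ = L - t`. Then there is a `q`-ary
constant-composition code of length `n` with composition `ω`, minimum distance at least
`3`, and size `M` with `M · (n + Γ) ≥ n!/(ω₀!⋯ω_{q-1}!)`. -/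
theorem stmt_7 (q n : ℕ) (hq : 3 ≤ q) (ω : Fin q → ℕ) (hω : ∑ a, ω a = n)
    (Q : ℕ) (hQ : Q = ∏ p ∈ (Finset.range q).filter Nat.Prime, p)
    (t : ℕ) (ht : t = n % Q)
    (L : ℕ) (hL1 : t ≤ L) (hL2 : Nat.gcd L Q = 1)
    (hL3 : ∀ m : ℕ, t ≤ m → Nat.gcd m Q = 1 → L ≤ m) :
    ∃ C : Finset (Fin n → Fin q),
      (∀ c ∈ C, ∀ a : Fin q, (Finset.univ.filter (fun i => c i = a)).card = ω a) ∧
      (∀ u ∈ C, ∀ v ∈ C, u ≠ v → 3 ≤ hammingDist u v) ∧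
      Nat.multinomial Finset.univ ω ≤ C.card * (n + (L - t)) := by
  classical
  set m := n + (L - t) with hm
  have hQpos : 0 < Q := by
    rw [hQ]; exact Finset.prod_pos (fun p hp => (Finset.mem_filter.1 hp).2.pos)
  have hQ2 : 2 ≤ Q := by
    have h2 : (2:ℕ) ∈ (Finset.range q).filter Nat.Prime := by
      simp only [mem_filter, mem_range]
      exact ⟨by omega, Nat.prime_two⟩
    have : 2 ∣ Q := hQ ▸ Finset.dvd_prod_of_mem _ h2
    exact Nat.le_of_dvd hQpos this
  have hLn0 : L ≠ 0 := by
    intro h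
    rw [h, Nat.gcd_comm, Nat.gcd_zero_right] at hL2
    omega
  have htn : t ≤ n := ht ▸ Nat.mod_le n Q
  have hmpos : 0 < m := by
    rcases Nat.eq_zero_or_pos n with h | h
    · have : t = 0 := by rw [ht, h, Nat.zero_mod]
      omega
    · omega
  have hmn : n ≤ m := Nat.le_add_right _ _
  have hmQ : Nat.Coprime m Q := by
    have hmd := Nat.mod_add_div' n Q
    have : m = L + (n / Q) * Q := by omega
    rw [this]
    exact (Nat.coprime_add_mul_right_left L Q (n / Q)).2 hL2
  have hcop : ∀ B : ℕ, B ≠ 0 → B < q → Nat.Coprime m B := by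
    intro B hB0 hBq
    by_contra h
    obtain ⟨p, hp, hpd⟩ := Nat.exists_prime_and_dvd h
    have hpm : p ∣ m := hpd.trans (Nat.gcd_dvd_left _ _)
    have hpB : p ∣ B := hpd.trans (Nat.gcd_dvd_right _ _)
    have hpq : p < q := lt_of_le_of_lt (Nat.le_of_dvd (Nat.pos_of_ne_zero hB0) hpB) hBq
    have hpQ : p ∣ Q := hQ ▸ Finset.dvd_prod_of_mem _ (by
      simp only [mem_filter, mem_range]; exact ⟨hpq, hp⟩)
    have : p ∣ Nat.gcd m Q := Nat.dvd_gcd hpm hpQ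
    rw [hmQ] at this
    exact hp.one_lt.ne' (Nat.dvd_one.1 this)
  haveI : NeZero m := ⟨hmpos.ne'⟩
  set S := (univ : Finset (Fin n → Fin q)).filter
      (fun c => ∀ a, (univ.filter (fun i => c i = a)).card = ω a) with hSdef
  have hScard : S.card * ∏ a, (ω a).factorial = n.factorial := Stmt7aux.card_words ω hω
  set φ : (Fin n → Fin q) → ZMod m := fun c => ∑ i, (i.val : ZMod m) * ((c i).val : ZMod m)
    with hφdef
  have hsplit : S.card = ∑ y ∈ (univ : Finset (ZMod m)), (S.filter (fun c => φ c = y)).card :=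
    Finset.card_eq_sum_card_fiberwise (fun c _ => mem_univ _)
  obtain ⟨y, -, hy⟩ : ∃ y ∈ (univ : Finset (ZMod m)),
      S.card ≤ m * (S.filter (fun c => φ c = y)).card := by
    apply Finset.exists_le_of_sum_le Finset.univ_nonempty
    refine le_of_eq ?_
    calc ∑ _y ∈ (univ : Finset (ZMod m)), S.card = m * S.card := by
          rw [Finset.sum_const, Finset.card_univ, ZMod.card, smul_eq_mul]
      _ = ∑ y ∈ (univ : Finset (ZMod m)), m * (S.filter (fun c => φ c = y)).card := by
          rw [← Finset.mul_sum, ← hsplit]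
  refine ⟨S.filter (fun c => φ c = y), ?_, ?_, ?_⟩
  · intro c hc a
    exact (mem_filter.1 (mem_filter.1 hc).1).2 a
  · intro u hu v hv huv
    by_contra hlt
    push_neg at hlt
    have hucomp : ∀ a, (univ.filter (fun i => u i = a)).card = ω a :=
      (mem_filter.1 (mem_filter.1 hu).1).2
    have hvcomp : ∀ a, (univ.filter (fun i => v i = a)).card = ω a :=
      (mem_filter.1 (mem_filter.1 hv).1).2
    have hφu : φ u = y := (mem_filter.1 hu).2
    have hφv : φ v = y := (mem_filter.1 hv).2
    set D := univ.filter (fun i => u i ≠ v i) with hD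
    have hham : hammingDist u v = D.card := rfl
    have hDpos : 0 < D.card := by
      apply card_pos.2
      obtain ⟨i, hi⟩ := Function.ne_iff.1 huv
      exact ⟨i, mem_filter.2 ⟨mem_univ _, hi⟩⟩
    have hDle : D.card ≤ 2 := by omega
    -- count equality on D
    have hcnt : ∀ a, (D.filter (fun i => u i = a)).card = (D.filter (fun i => v i = a)).card := by
      intro a
      have hs1 : ((univ.filter (fun i => u i = a)).filter (· ∈ D)).card
          + ((univ.filter (fun i => u i = a)).filter (fun i => ¬ i ∈ D)).card
          = (univ.filter (fun i => u i = a)).card :=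
        Finset.card_filter_add_card_filter_not _
      have hs2 : ((univ.filter (fun i => v i = a)).filter (· ∈ D)).card
          + ((univ.filter (fun i => v i = a)).filter (fun i => ¬ i ∈ D)).card
          = (univ.filter (fun i => v i = a)).card :=
        Finset.card_filter_add_card_filter_not _
      have he1 : ∀ w : Fin n → Fin q,
          (univ.filter (fun i => w i = a)).filter (· ∈ D) = D.filter (fun i => w i = a) := by
        intro w
        ext i
        simp only [mem_filter, mem_univ, true_and]
        tauto
      have he2 : (univ.filter (fun i => u i = a)).filter (fun i => ¬ i ∈ D)
          = (univ.filter (fun i => v i = a)).filter (fun i => ¬ i ∈ D) := by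
        ext i
        simp only [mem_filter, mem_univ, true_and, hD, not_not]
        constructor
        · rintro ⟨h1, h2⟩; exact ⟨h2 ▸ h1, h2⟩
        · rintro ⟨h1, h2⟩; exact ⟨h2.symm ▸ h1, h2⟩
      rw [he1 u, he1 v] at *
      rw [he2] at hs1
      have := (hucomp a).trans (hvcomp a).symm
      omega
    interval_cases hDc : D.card
    · -- card 1
      obtain ⟨i, hDi⟩ := Finset.card_eq_one.1 hDc
      have hiD : i ∈ D := hDi ▸ Finset.mem_singleton_self i
      have hne : u i ≠ v i := (mem_filter.1 hiD).2
      have h1' := hcnt (u i)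
      rw [hDi, Finset.filter_singleton, Finset.filter_singleton, if_pos rfl,
        if_neg (fun h => hne h.symm)] at h1'
      simp at h1'
    · -- card 2
      obtain ⟨i, j, hij, hDij⟩ := Finset.card_eq_two.1 hDc
      have hiD : i ∈ D := hDij ▸ Finset.mem_insert_self i {j}
      have hjD : j ∈ D := hDij ▸ Finset.mem_insert_of_mem (Finset.mem_singleton_self j)
      have hui : u i ≠ v i := (mem_filter.1 hiD).2
      have huj : u j ≠ v j := (mem_filter.1 hjD).2
      have hvj : v j = u i := by
        have h := hcnt (u i)
        have hpos : 0 < (D.filter (fun x => v x = u i)).card := by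
          rw [← h]
          exact card_pos.2 ⟨i, mem_filter.2 ⟨hiD, rfl⟩⟩
        obtain ⟨x, hx⟩ := card_pos.1 hpos
        have hx' := mem_filter.1 hx
        rw [hDij] at hx'
        rcases Finset.mem_insert.1 hx'.1 with rfl | hx2
        · exact absurd hx'.2 (fun h => hui h.symm)
        · rw [Finset.mem_singleton.1 hx2] at hx'
          exact hx'.2
      have hvi : u j = v i := by
        have h := hcnt (v i)
        have hpos : 0 < (D.filter (fun x => u x = v i)).card := by
          rw [h]
          exact card_pos.2 ⟨i, mem_filter.2 ⟨hiD, rfl⟩⟩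
        obtain ⟨x, hx⟩ := card_pos.1 hpos
        have hx' := mem_filter.1 hx
        rw [hDij] at hx'
        rcases Finset.mem_insert.1 hx'.1 with rfl | hx2
        · exact absurd hx'.2 hui
        · rw [Finset.mem_singleton.1 hx2] at hx'
          exact hx'.2
      have hab : u i ≠ u j := fun h => huj (hvj.trans h).symm
      -- sum argument
      have hzero : ∀ x : Fin n, x ∉ D →
          (x.val : ZMod m) * ((u x).val : ZMod m) - (x.val : ZMod m) * ((v x).val : ZMod m)
            = 0 := by
        intro x hx
        have : u x = v x := by
          by_contra h
          exact hx (mem_filter.2 ⟨mem_univ _, h⟩)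
        rw [this, sub_self]
      have hsum : ∑ x ∈ D, ((x.val : ZMod m) * ((u x).val : ZMod m)
          - (x.val : ZMod m) * ((v x).val : ZMod m)) = 0 := by
        rw [Finset.sum_subset (Finset.subset_univ D) (fun x _ hx => hzero x hx),
          Finset.sum_sub_distrib]
        show φ u - φ v = 0
        rw [hφu, hφv, sub_self]
      rw [hDij, Finset.sum_pair hij, hvj, ← hvi] at hsum
      have hdvd : (m:ℤ) ∣ ((i.val:ℤ) - j.val) * (((u i).val:ℤ) - ((u j).val:ℤ)) := by
        apply (ZMod.intCast_zmod_eq_zero_iff_dvd _ m).1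
        push_cast
        linear_combination hsum
      have hdvdN : m ∣ (((i.val:ℤ) - j.val).natAbs * ((((u i).val:ℤ) - ((u j).val:ℤ)).natAbs)) := by
        rw [← Int.natAbs_mul]
        have := Int.natAbs_dvd_natAbs.2 hdvd
        simpa using this
      have hBne : (u i).val ≠ (u j).val := fun h => hab (Fin.ext h)
      have hBq1 : (u i).val < q := (u i).isLt
      have hBq2 : (u j).val < q := (u j).isLt
      have hB0 : (((u i).val:ℤ) - ((u j).val:ℤ)).natAbs ≠ 0 := by omega
      have hBlt : (((u i).val:ℤ) - ((u j).val:ℤ)).natAbs < q := by omega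
      have hdvdA : m ∣ ((i.val:ℤ) - j.val).natAbs :=
        (hcop _ hB0 hBlt).dvd_of_dvd_mul_right hdvdN
      have hin : i.val < n := i.isLt
      have hjn : j.val < n := j.isLt
      have hAne : i.val ≠ j.val := fun h => hij (Fin.ext h)
      have hA0 : 0 < ((i.val:ℤ) - j.val).natAbs := by omega
      have hAlt : ((i.val:ℤ) - j.val).natAbs < m := by omega
      exact absurd (Nat.le_of_dvd hA0 hdvdA) (not_le.2 hAlt)
  · have hmult : Nat.multinomial Finset.univ ω = S.card := by
      have hms := Nat.multinomial_spec Finset.univ ω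
      rw [hω] at hms
      have hprodpos : 0 < ∏ a, (ω a).factorial :=
        Finset.prod_pos (fun _ _ => Nat.factorial_pos _)
      have h2 : (∏ a, (ω a).factorial) * Nat.multinomial Finset.univ ω
          = (∏ a, (ω a).factorial) * S.card := by
        rw [hms, ← hScard, mul_comm]
      exact Nat.eq_of_mul_eq_mul_left hprodpos h2
    rw [hmult]
    calc S.card ≤ m * (S.filter (fun c => φ c = y)).card := hy
      _ = (S.filter (fun c => φ c = y)).card * m := mul_comm _ _
end

section
/- Let q ≥ 3 be an integer, let [ω₀, ω₁, …, ω_{q−1}] be a composition of n, and suppose gcd(n, Q) = 1, where Q is the product of all primes p with p ≤ q − 1. Then there exists a q-ary constant-composition code of length n with composition [ω₀, ω₁, …, ω_{q−1}], minimum distance at least 3, and size M satisfying M · n ≥ n!/(ω₀!·ω₁!⋯ω_{q−1}!). -/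
open Finset Equiv

/-- Any composition is realized by some word. -/
lemma stmt8_exists_word (q n : ℕ) (ω : Fin q → ℕ) (hω : ∑ a, ω a = n) :
    ∃ c₀ : Fin n → Fin q, ∀ a, (univ.filter fun i => c₀ i = a).card = ω a := by
  have hcard : Fintype.card (Σ a : Fin q, Fin (ω a)) = Fintype.card (Fin n) := by
    simp [Fintype.card_sigma, hω]
  let e := Fintype.equivOfCardEq hcard
  refine ⟨fun i => (e.symm i).1, fun a => ?_⟩
  have e3 : {x : Σ a' : Fin q, Fin (ω a') // x.1 = a} ≃ Fin (ω a) :=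
    { toFun := fun x => Fin.cast (congrArg ω x.2) x.1.2
      invFun := fun y => ⟨⟨a, y⟩, rfl⟩
      left_inv := fun ⟨⟨b, y⟩, h⟩ => by subst h; rfl
      right_inv := fun y => rfl }
  have e2 : { x : Fin n // (fun i => (e.symm i).fst) x = a } ≃ Fin (ω a) :=
    (Equiv.subtypeEquiv e.symm (fun i => Iff.rfl)).trans e3
  rw [← Fintype.card_subtype, Fintype.card_congr e2, Fintype.card_fin]

/-- Counting words of a given composition. -/
lemma stmt8_count (q n : ℕ) (ω : Fin q → ℕ) (c₀ : Fin n → Fin q)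
    (hc₀ : ∀ a, (univ.filter fun i => c₀ i = a).card = ω a) :
    Nat.factorial n = (univ.filter fun c : Fin n → Fin q =>
        ∀ a, (univ.filter fun i => c i = a).card = ω a).card * ∏ a, Nat.factorial (ω a) := by
  classical
  set S := univ.filter fun c : Fin n → Fin q =>
      ∀ a, (univ.filter fun i => c i = a).card = ω a with hS
  have hcompose : ∀ (c : Fin n → Fin q) (σ : Perm (Fin n)) (a : Fin q),
      (univ.filter fun i => (c ∘ σ) i = a).card = (univ.filter fun i => c i = a).card := by
    intro c σ a
    rw [← Fintype.card_subtype, ← Fintype.card_subtype]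
    exact Fintype.card_congr (Equiv.subtypeEquiv σ (fun i => Iff.rfl))
  have hmaps : ∀ σ : Perm (Fin n), c₀ ∘ σ ∈ S := by
    intro σ
    simp only [hS, mem_filter, mem_univ, true_and]
    intro a; rw [hcompose]; exact hc₀ a
  have hsplit : (univ : Finset (Perm (Fin n))).card =
      ∑ w ∈ S, ((univ : Finset (Perm (Fin n))).filter fun σ : Perm (Fin n) => c₀ ∘ ⇑σ = w).card :=
    card_eq_sum_card_fiberwise (fun σ _ => hmaps σ)
  have hfibcardc₀ : ∀ a : Fin q, Fintype.card {i // c₀ i = a} = ω a := by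
    intro a; rw [Fintype.card_subtype]; exact hc₀ a
  have hstab : ((univ : Finset (Perm (Fin n))).filter fun σ : Perm (Fin n) => c₀ ∘ ⇑σ = c₀).card
      = ∏ a, Nat.factorial (ω a) := by
    rw [← Fintype.card_subtype, DomMulAct.stabilizer_card]
    exact Finset.prod_congr rfl fun a _ => by rw [hfibcardc₀]
  have hfib : ∀ w ∈ S,
      ((univ : Finset (Perm (Fin n))).filter fun σ : Perm (Fin n) => c₀ ∘ ⇑σ = w).card
      = ∏ a, Nat.factorial (ω a) := by
    intro w hw
    simp only [hS, mem_filter, mem_univ, true_and] at hw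
    have e : ∀ a, {i // w i = a} ≃ {i // c₀ i = a} := fun a =>
      Fintype.equivOfCardEq (by rw [Fintype.card_subtype, Fintype.card_subtype, hw, hc₀])
    set σ₀ : Perm (Fin n) := Equiv.ofFiberEquiv e with hσ₀
    have hσ₀w : c₀ ∘ σ₀ = w := funext fun j => Equiv.ofFiberEquiv_map e j
    rw [← hstab]
    apply Finset.card_bij' (fun σ _ => σ * σ₀⁻¹) (fun τ _ => τ * σ₀)
    · intro σ hσ
      simp only [mem_filter, mem_univ, true_and] at hσ ⊢
      funext i
      simp only [Function.comp, Perm.mul_apply]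
      have := congrFun hσ (σ₀⁻¹ i)
      simp only [Function.comp] at this
      rw [this, ← congrFun hσ₀w (σ₀⁻¹ i)]
      simp
    · intro τ hτ
      simp only [mem_filter, mem_univ, true_and] at hτ ⊢
      funext i
      simp only [Function.comp, Perm.mul_apply]
      have := congrFun hτ (σ₀ i)
      simp only [Function.comp] at this
      rw [this, ← congrFun hσ₀w i]; rfl
    · intro σ _; simp [mul_assoc]
    · intro τ _; simp [mul_assoc]
  calc (Nat.factorial n) = (univ : Finset (Perm (Fin n))).card := by
        rw [Finset.card_univ, Fintype.card_perm, Fintype.card_fin]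
    _ = ∑ w ∈ S, ((univ : Finset (Perm (Fin n))).filter
          fun σ : Perm (Fin n) => c₀ ∘ ⇑σ = w).card := hsplit
    _ = ∑ _w ∈ S, ∏ a, Nat.factorial (ω a) := Finset.sum_congr rfl hfib
    _ = S.card * ∏ a, Nat.factorial (ω a) := by rw [Finset.sum_const, smul_eq_mul]

/-- Let `q ≥ 3`, let `ω` be a composition of `n`, and suppose
`gcd(n, Q) = 1` where `Q` is the product of all primes `p ≤ q - 1`. Then there is a
`q`-ary constant-composition code of length `n` with composition `ω`, minimum distance at
least `3`, and size `M` with `M · n ≥ n!/(ω₀!⋯ω_{q-1}!)`. -/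
theorem stmt_8 (q n : ℕ) (hq : 3 ≤ q) (ω : Fin q → ℕ) (hω : ∑ a, ω a = n)
    (Q : ℕ) (hQ : Q = ∏ p ∈ (Finset.range q).filter Nat.Prime, p)
    (hgcd : Nat.gcd n Q = 1) :
    ∃ C : Finset (Fin n → Fin q),
      (∀ c ∈ C, ∀ a : Fin q, (Finset.univ.filter (fun i => c i = a)).card = ω a) ∧
      (∀ u ∈ C, ∀ v ∈ C, u ≠ v → 3 ≤ hammingDist u v) ∧
      Nat.multinomial Finset.univ ω ≤ C.card * n := by
  classical
  -- primes below q divide Q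
  have hpQ : ∀ p : ℕ, p.Prime → p < q → p ∣ Q := by
    intro p hp hpq
    rw [hQ]
    exact Finset.dvd_prod_of_mem _ (by simp [Finset.mem_filter, Finset.mem_range, hpq, hp])
  -- n ≠ 0
  have hn0 : n ≠ 0 := by
    intro h
    subst h
    rw [Nat.gcd_zero_left] at hgcd
    have h2 : (2 : ℕ) ∣ Q := hpQ 2 Nat.prime_two (by omega)
    rw [hgcd] at h2
    exact absurd (Nat.le_of_dvd one_pos h2) (by omega)
  haveI : NeZero n := ⟨hn0⟩
  -- coprimality of small numbers to n
  have hcop : ∀ d : ℕ, 0 < d → d < q → Nat.Coprime d n := by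
    intro d hd hdq
    by_contra h
    have hg : Nat.gcd d n ≠ 1 := h
    set p := (Nat.gcd d n).minFac with hp
    have hgcd0 : Nat.gcd d n ≠ 0 := by
      simp [Nat.gcd_eq_zero_iff]; omega
    have hpp : p.Prime := Nat.minFac_prime hg
    have hpd : p ∣ d := (Nat.minFac_dvd _).trans (Nat.gcd_dvd_left _ _)
    have hpn : p ∣ n := (Nat.minFac_dvd _).trans (Nat.gcd_dvd_right _ _)
    have hpq' : p < q := lt_of_le_of_lt (Nat.le_of_dvd hd hpd) hdq
    have : p ∣ Nat.gcd n Q := Nat.dvd_gcd hpn (hpQ p hpp hpq')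
    rw [hgcd] at this
    exact hpp.one_lt.ne' (Nat.eq_one_of_dvd_one this)
  -- units of ZMod n from symbol differences
  have hunit : ∀ a b : Fin q, a ≠ b →
      IsUnit (((a : ℕ) : ZMod n) - ((b : ℕ) : ZMod n)) := by
    have key : ∀ a b : Fin q, (b : ℕ) < (a : ℕ) →
        IsUnit (((a : ℕ) : ZMod n) - ((b : ℕ) : ZMod n)) := by
      intro a b hab
      have : (((a : ℕ) - (b : ℕ) : ℕ) : ZMod n) =
          ((a : ℕ) : ZMod n) - ((b : ℕ) : ZMod n) := by
        push_cast [Nat.cast_sub hab.le]; ring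
      rw [← this, ZMod.isUnit_iff_coprime]
      exact hcop _ (by omega) (by omega)
    intro a b hab
    rcases lt_or_gt_of_ne (fun h : (a : ℕ) = (b : ℕ) => hab (Fin.ext h)) with h | h
    · have := (key b a h).neg
      simpa using this
    · exact key a b h
  -- the weight function
  set σm : (Fin n → Fin q) → ZMod n :=
    fun c => ∑ i : Fin n, ((i : ℕ) : ZMod n) * (((c i : ℕ)) : ZMod n) with hσm
  set S := univ.filter fun c : Fin n → Fin q =>
      ∀ a, (univ.filter fun i => c i = a).card = ω a with hS
  -- choose a largest fiber of σm on S
  obtain ⟨k₀, -, hk₀⟩ := Finset.exists_max_image (univ : Finset (ZMod n))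
    (fun k => (S.filter fun c => σm c = k).card) ⟨0, mem_univ _⟩
  refine ⟨S.filter fun c => σm c = k₀, ?_, ?_, ?_⟩
  · intro c hc a
    have := (mem_filter.mp (mem_filter.mp hc).1).2
    exact this a
  · -- minimum distance at least 3
    intro u hu v hv huv
    have hu' := mem_filter.mp hu
    have hv' := mem_filter.mp hv
    have hus := (mem_filter.mp hu'.1).2
    have hvs := (mem_filter.mp hv'.1).2
    have hσuv : σm u = σm v := hu'.2.trans hv'.2.symm
    by_contra hlt
    push_neg at hlt
    set D := univ.filter fun i => u i ≠ v i with hD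
    have hDcard : D.card ≤ 2 := by
      have : hammingDist u v = D.card := rfl
      omega
    have hDne : D.Nonempty := by
      obtain ⟨i, hi⟩ := Function.ne_iff.mp huv
      exact ⟨i, by simp [hD, hi]⟩
    -- counts inside D agree
    have hDcount : ∀ a, (D.filter fun k => u k = a).card =
        (D.filter fun k => v k = a).card := by
      intro a
      have hsub : D ⊆ univ := subset_univ D
      have houter : (univ \ D).filter (fun k => u k = a) =
          (univ \ D).filter (fun k => v k = a) := by
        apply filter_congr
        intro k hk
        have : u k = v k := by
          have := (mem_sdiff.mp hk).2
          simp only [hD, mem_filter, mem_univ, true_and] at this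
          tauto
        rw [this]
      have hu2 : (univ.filter fun k => u k = a).card =
          (D.filter fun k => u k = a).card + ((univ \ D).filter fun k => u k = a).card := by
        rw [← card_union_of_disjoint
          (disjoint_filter_filter (disjoint_sdiff : Disjoint D (univ \ D))),
          ← filter_union, union_sdiff_of_subset hsub]
      have hv2 : (univ.filter fun k => v k = a).card =
          (D.filter fun k => v k = a).card + ((univ \ D).filter fun k => v k = a).card := by
        rw [← card_union_of_disjoint
          (disjoint_filter_filter (disjoint_sdiff : Disjoint D (univ \ D))),
          ← filter_union, union_sdiff_of_subset hsub]
      rw [hus a, houter] at hu2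
      rw [hvs a] at hv2
      omega
    -- sums over D agree
    have hDsum : ∑ k ∈ D, ((k : ℕ) : ZMod n) * ((u k : ℕ) : ZMod n) =
        ∑ k ∈ D, ((k : ℕ) : ZMod n) * ((v k : ℕ) : ZMod n) := by
      have houter : ∑ k ∈ univ \ D, ((k : ℕ) : ZMod n) * ((u k : ℕ) : ZMod n) =
          ∑ k ∈ univ \ D, ((k : ℕ) : ZMod n) * ((v k : ℕ) : ZMod n) := by
        apply Finset.sum_congr rfl
        intro k hk
        have : u k = v k := by
          have := (mem_sdiff.mp hk).2
          simp only [hD, mem_filter, mem_univ, true_and] at this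
          tauto
        rw [this]
      have h1 : ∑ k ∈ univ \ D, ((k : ℕ) : ZMod n) * ((u k : ℕ) : ZMod n)
            + ∑ k ∈ D, ((k : ℕ) : ZMod n) * ((u k : ℕ) : ZMod n)
          = ∑ k : Fin n, ((k : ℕ) : ZMod n) * ((u k : ℕ) : ZMod n) :=
        Finset.sum_sdiff (subset_univ D)
      have h2 : ∑ k ∈ univ \ D, ((k : ℕ) : ZMod n) * ((v k : ℕ) : ZMod n)
            + ∑ k ∈ D, ((k : ℕ) : ZMod n) * ((v k : ℕ) : ZMod n)
          = ∑ k : Fin n, ((k : ℕ) : ZMod n) * ((v k : ℕ) : ZMod n) :=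
        Finset.sum_sdiff (subset_univ D)
      have hσ : ∑ k : Fin n, ((k : ℕ) : ZMod n) * ((u k : ℕ) : ZMod n) =
          ∑ k : Fin n, ((k : ℕ) : ZMod n) * ((v k : ℕ) : ZMod n) := hσuv
      rw [← h1, ← h2, houter] at hσ
      exact add_right_cancel (by linear_combination hσ)
    interval_cases hc : D.card
    · exact absurd (Finset.card_eq_zero.mp hc) (Finset.nonempty_iff_ne_empty.mp hDne)
    · -- distance 1: impossible
      obtain ⟨i, hi⟩ := Finset.card_eq_one.mp hc
      have hiD : i ∈ D := hi ▸ Finset.mem_singleton_self i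
      have hui : u i ≠ v i := by
        simpa [hD] using hiD
      have := hDcount (u i)
      rw [hi] at this
      simp [Finset.filter_singleton, hui.symm, Ne.symm hui] at this
    · -- distance 2: impossible
      obtain ⟨i, j, hij, hD2⟩ := Finset.card_eq_two.mp hc
      have hiD : i ∈ D := hD2 ▸ by simp
      have hjD : j ∈ D := hD2 ▸ by simp
      have hui : u i ≠ v i := by simpa [hD] using hiD
      have huj : u j ≠ v j := by simpa [hD] using hjD
      have hvj : v j = u i := by
        by_contra hne
        have h0 := hDcount (u i)
        rw [hD2] at h0
        have : i ∈ ({i, j} : Finset (Fin n)).filter fun k => u k = u i := by simp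
        have hpos : 0 < (({i, j} : Finset (Fin n)).filter fun k => u k = u i).card :=
          Finset.card_pos.mpr ⟨i, this⟩
        have hzero : (({i, j} : Finset (Fin n)).filter fun k => v k = u i) = ∅ := by
          rw [Finset.filter_insert, if_neg (Ne.symm hui), Finset.filter_singleton,
            if_neg (fun h => hne h)]
        rw [hzero, Finset.card_empty] at h0
        omega
      have hvi : v i = u j := by
        by_contra hne
        have h0 := hDcount (u j)
        rw [hD2] at h0
        have : j ∈ ({i, j} : Finset (Fin n)).filter fun k => u k = u j := by simp
        have hpos : 0 < (({i, j} : Finset (Fin n)).filter fun k => u k = u j).card :=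
          Finset.card_pos.mpr ⟨j, this⟩
        have hzero : (({i, j} : Finset (Fin n)).filter fun k => v k = u j) = ∅ := by
          rw [Finset.filter_insert, if_neg (fun h => hne h), Finset.filter_singleton,
            if_neg (Ne.symm huj)]
        rw [hzero, Finset.card_empty] at h0
        omega
      have huij : u i ≠ u j := fun h => huj (by rw [← h, hvj])
      rw [hD2, Finset.sum_pair hij, Finset.sum_pair hij, hvi, hvj] at hDsum
      have hfactor : (((i : ℕ) : ZMod n) - ((j : ℕ) : ZMod n)) *
          (((u i : ℕ) : ZMod n) - ((u j : ℕ) : ZMod n)) = 0 := by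
        linear_combination hDsum
      have := ((hunit (u i) (u j) huij).mul_left_eq_zero).mp hfactor
      have hij' : ((i : ℕ) : ZMod n) = ((j : ℕ) : ZMod n) := by
        linear_combination this
      have : (i : ℕ) = (j : ℕ) := by
        have h1 := ZMod.val_cast_of_lt (a := (i : ℕ)) i.isLt
        have h2 := ZMod.val_cast_of_lt (a := (j : ℕ)) j.isLt
        rw [← h1, ← h2, hij']
      exact hij (Fin.ext this)
  · -- size bound
    obtain ⟨c₀, hc₀⟩ := stmt8_exists_word q n ω hω
    have hcount := stmt8_count q n ω c₀ hc₀
    have hmulti := Nat.multinomial_spec univ ω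
    rw [hω] at hmulti
    have hprodpos : 0 < ∏ a, Nat.factorial (ω a) :=
      Finset.prod_pos fun a _ => Nat.factorial_pos _
    have hScard : Nat.multinomial univ ω = S.card := by
      have : (∏ a, Nat.factorial (ω a)) * Nat.multinomial univ ω =
          (∏ a, Nat.factorial (ω a)) * S.card := by
        rw [hmulti, hcount, mul_comm]
      exact Nat.eq_of_mul_eq_mul_left hprodpos this
    have hfiber : S.card = ∑ k : ZMod n, (S.filter fun c => σm c = k).card :=
      Finset.card_eq_sum_card_fiberwise (f := σm) (s := S) (t := univ) (fun c _ => mem_univ _)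
    have hbound : S.card ≤ n * (S.filter fun c => σm c = k₀).card := by
      rw [hfiber]
      have hle := Finset.sum_le_card_nsmul (univ : Finset (ZMod n))
        (fun k => (S.filter fun c => σm c = k).card)
        ((S.filter fun c => σm c = k₀).card)
        (fun k _ => hk₀ k (mem_univ k))
      rw [smul_eq_mul, Finset.card_univ, ZMod.card] at hle
      exact hle
    calc Nat.multinomial univ ω = S.card := hScard
      _ ≤ n * (S.filter fun c => σm c = k₀).card := hbound
      _ = (S.filter fun c => σm c = k₀).card * n := mul_comm _ _
end

section
/- Let [ω₀, ω₁, ω₂] be a composition of n. If n is odd, there exists a ternary constant-composition code of length n with composition [ω₀, ω₁, ω₂], minimum distance at least 3, and size M satisfying M · n ≥ n!/(ω₀!·ω₁!·ω₂!). If n is even, there exists such a code with size M satisfying M · (n + 1) ≥ n!/(ω₀!·ω₁!·ω₂!). -/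
open Finset

-- count invariance under permutation
lemma count_comp_perm {n : ℕ} (c : Fin n → Fin 3) (σ : Equiv.Perm (Fin n)) (a : Fin 3) :
    (univ.filter (fun i => c (σ i) = a)).card = (univ.filter (fun i => c i = a)).card := by
  rw [← Fintype.card_subtype, ← Fintype.card_subtype]
  exact Fintype.card_congr (σ.subtypeEquiv fun i => Iff.rfl)

-- base word
lemma exists_base {n : ℕ} (ω : Fin 3 → ℕ) (hω : ∑ a, ω a = n) :
    ∃ c₀ : Fin n → Fin 3, ∀ a, (univ.filter (fun i => c₀ i = a)).card = ω a := by
  have hcard : Fintype.card (Σ a : Fin 3, Fin (ω a)) = n := by simp [hω]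
  let e : (Σ a : Fin 3, Fin (ω a)) ≃ Fin n := Fintype.equivFinOfCardEq hcard
  refine ⟨fun i => (e.symm i).1, fun a => ?_⟩
  rw [← Fintype.card_subtype]
  have e2 : {i : Fin n // (e.symm i).1 = a} ≃ {x : Σ b : Fin 3, Fin (ω b) // x.1 = a} :=
    (e.subtypeEquiv fun x => by simp).symm
  rw [Fintype.card_congr e2]
  have e3 : {x : Σ b : Fin 3, Fin (ω b) // x.1 = a} ≃ Fin (ω a) :=
    { toFun := fun x => Fin.cast (congrArg ω x.2) x.1.2
      invFun := fun y => ⟨⟨a, y⟩, rfl⟩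
      left_inv := by rintro ⟨⟨b, y⟩, rfl⟩; rfl
      right_inv := fun y => rfl }
  rw [Fintype.card_congr e3, Fintype.card_fin]

lemma multinomial_le_card {n : ℕ} (ω : Fin 3 → ℕ) (hω : ∑ a, ω a = n) :
    Nat.multinomial univ ω ≤
      (univ.filter (fun c : Fin n → Fin 3 =>
        ∀ a, (univ.filter (fun i => c i = a)).card = ω a)).card := by
  classical
  obtain ⟨c₀, hc₀⟩ := exists_base ω hω
  set N := ∏ a, Nat.factorial (ω a) with hN
  set W := (univ.filter (fun c : Fin n → Fin 3 =>
        ∀ a, (univ.filter (fun i => c i = a)).card = ω a)) with hW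
  -- the key: n! ≤ N * W.card
  have key : Nat.factorial n ≤ N * W.card := by
    have hfact : (univ : Finset (Equiv.Perm (Fin n))).card = Nat.factorial n := by
      simp [Fintype.card_perm]
    -- fiber bound
    have hfib : ∀ w ∈ (univ : Finset (Equiv.Perm (Fin n))).image (fun σ : Equiv.Perm (Fin n) => c₀ ∘ ⇑σ),
        ((univ : Finset (Equiv.Perm (Fin n))).filter (fun σ : Equiv.Perm (Fin n) => c₀ ∘ ⇑σ = w)).card ≤ N := by
      intro w hw
      obtain ⟨τ, -, rfl⟩ := Finset.mem_image.mp hw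
      -- translate fiber to stabilizer
      have h1 : ((univ : Finset (Equiv.Perm (Fin n))).filter (fun σ : Equiv.Perm (Fin n) => c₀ ∘ ⇑σ = c₀ ∘ ⇑τ)).card
          ≤ ((univ : Finset (Equiv.Perm (Fin n))).filter (fun σ : Equiv.Perm (Fin n) => c₀ ∘ ⇑σ = c₀)).card := by
        apply Finset.card_le_card_of_injOn (fun σ => σ * τ⁻¹)
        · intro σ hσ
          simp only [mem_coe, mem_filter, mem_univ, true_and] at hσ ⊢
          funext i
          have := congrFun hσ (τ⁻¹ i)
          simpa using this
        · intro σ _ σ' _ h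
          exact mul_right_cancel h
      refine h1.trans ?_
      -- stabilizer injects into product of perms of fibers
      have h2 : ((univ : Finset (Equiv.Perm (Fin n))).filter (fun σ : Equiv.Perm (Fin n) => c₀ ∘ ⇑σ = c₀)).card
          ≤ Fintype.card (∀ a : Fin 3, Equiv.Perm {i : Fin n // c₀ i = a}) := by
        rw [← Fintype.card_coe]
        apply Fintype.card_le_of_injective
          (fun σ => fun a => (σ.1.subtypeEquiv (fun i => by
              have := congrFun (Finset.mem_filter.mp σ.2).2 i
              simp only [Function.comp_apply] at this
              rw [this]) : {i : Fin n // c₀ i = a} ≃ {i : Fin n // c₀ i = a}))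
        intro σ τ h
        have h2 := congrFun h
        apply Subtype.ext
        apply Equiv.ext
        intro i
        have h3 := Equiv.ext_iff.mp (h2 (c₀ i)) ⟨i, rfl⟩
        have h4 := congrArg Subtype.val h3
        simpa [Equiv.subtypeEquiv] using h4
      refine h2.trans ?_
      rw [Fintype.card_pi]
      apply le_of_eq
      refine Finset.prod_congr rfl (fun a _ => ?_)
      rw [Fintype.card_perm, Fintype.card_subtype]
      rw [hc₀ a]
    have himg : (univ : Finset (Equiv.Perm (Fin n))).image (fun σ : Equiv.Perm (Fin n) => c₀ ∘ ⇑σ) ⊆ W := by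
      intro w hw
      obtain ⟨τ, -, rfl⟩ := Finset.mem_image.mp hw
      rw [hW, Finset.mem_filter]
      exact ⟨Finset.mem_univ _, fun a => by rw [← hc₀ a]; exact count_comp_perm c₀ τ a⟩
    calc Nat.factorial n = (univ : Finset (Equiv.Perm (Fin n))).card := hfact.symm
      _ ≤ N * ((univ : Finset (Equiv.Perm (Fin n))).image (fun σ : Equiv.Perm (Fin n) => c₀ ∘ ⇑σ)).card :=
          Finset.card_le_mul_card_image _ _ hfib
      _ ≤ N * W.card := Nat.mul_le_mul_left _ (Finset.card_le_card himg)
  have hspec := Nat.multinomial_spec univ ω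
  rw [hω] at hspec
  have hNpos : 0 < N := Finset.prod_pos (fun a _ => Nat.factorial_pos _)
  have : N * Nat.multinomial univ ω ≤ N * W.card := by rw [hspec]; exact key
  exact Nat.le_of_mul_le_mul_left this hNpos

lemma arith_lemma {m : ℕ} (hm : Odd m) {d s : ℤ} (hd : d ≠ 0) (hdm : |d| < m)
    (hs : s ≠ 0) (hs2 : |s| ≤ 2) : ¬ (m : ℤ) ∣ d * s := by
  intro hdvd
  have hs' : s ∣ 2 := by
    have hs2' := abs_le.mp hs2
    have h4 : s = -2 ∨ s = -1 ∨ s = 1 ∨ s = 2 := by omega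
    rcases h4 with h | h | h | h <;> subst h <;> decide
  have h2 : IsCoprime (m : ℤ) 2 := by
    rw [Int.isCoprime_iff_gcd_eq_one]
    simpa [Int.gcd] using hm.coprime_two_right
  have hcop : IsCoprime (m : ℤ) s := h2.of_isCoprime_of_dvd_right hs'
  have hdd : (m : ℤ) ∣ d := hcop.dvd_of_dvd_mul_right hdvd
  have hle := Int.le_of_dvd (abs_pos.mpr hd) ((dvd_abs _ _).mpr hdd)
  exact absurd hdm (not_lt.mpr hle)

/-- Let `[ω₀, ω₁, ω₂]` be a composition of `n`. There is a ternary
constant-composition code of length `n` with composition `ω` and minimum distance at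
least `3` whose size `M` satisfies `M · n ≥ n!/(ω₀!ω₁!ω₂!)` when `n` is odd, and
`M · (n + 1) ≥ n!/(ω₀!ω₁!ω₂!)` when `n` is even. -/
theorem stmt_9 (n : ℕ) (ω : Fin 3 → ℕ) (hω : ∑ a, ω a = n) :
    ∃ C : Finset (Fin n → Fin 3),
      (∀ c ∈ C, ∀ a : Fin 3, (Finset.univ.filter (fun i => c i = a)).card = ω a) ∧
      (∀ u ∈ C, ∀ v ∈ C, u ≠ v → 3 ≤ hammingDist u v) ∧
      Nat.multinomial Finset.univ ω ≤ C.card * (if Odd n then n else n + 1) := by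
  classical
  set m := if Odd n then n else n + 1 with hm
  have hm_odd : Odd m := by
    rcases Nat.even_or_odd n with h | h
    · simp [hm, Nat.not_odd_iff_even.mpr h, h.add_one]
    · simp [hm, h]
  have hnm : n ≤ m := by rcases Nat.even_or_odd n with h | h <;>
    simp [hm, Nat.not_odd_iff_even.mpr, h] <;> omega
  have hm_pos : 0 < m := by
    rcases hm_odd with ⟨k, hk⟩; omega
  haveI : NeZero m := ⟨hm_pos.ne'⟩
  set W := (univ.filter (fun c : Fin n → Fin 3 =>
      ∀ a, (univ.filter (fun i => c i = a)).card = ω a)) with hWdef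
  have hmult : Nat.multinomial univ ω ≤ W.card := multinomial_le_card ω hω
  have hWne : W.Nonempty := by
    rw [← Finset.card_pos]
    exact lt_of_lt_of_le (Nat.multinomial_pos _ _) hmult
  set f : (Fin n → Fin 3) → ZMod m :=
    fun c => ∑ i : Fin n, (i.val : ZMod m) * ((c i).val : ZMod m) with hfdef
  -- pick the largest fiber
  obtain ⟨y, hy_mem, hy_max⟩ := Finset.exists_max_image (W.image f)
    (fun y => (W.filter (fun c => f c = y)).card) (hWne.image f)
  set C := W.filter (fun c => f c = y) with hCdef
  have hWle : W.card ≤ m * C.card := by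
    rw [Finset.card_eq_sum_card_image f W]
    calc ∑ y' ∈ W.image f, (W.filter (fun c => f c = y')).card
        ≤ (W.image f).card * C.card :=
          Finset.sum_le_card_nsmul _ _ _ (fun y' hy' => hy_max y' hy')
      _ ≤ m * C.card := by
          apply Nat.mul_le_mul_right
          calc (W.image f).card ≤ Fintype.card (ZMod m) := Finset.card_le_univ _
            _ = m := ZMod.card m
  refine ⟨C, ?_, ?_, ?_⟩
  · intro c hc a
    have := (Finset.mem_filter.mp ((Finset.mem_filter.mp hc).1)).2
    exact this a
  · -- distance
    intro u hu v hv huv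
    by_contra hlt
    push_neg at hlt
    have hu' := Finset.mem_filter.mp hu
    have hv' := Finset.mem_filter.mp hv
    have hcu := (Finset.mem_filter.mp hu'.1).2
    have hcv := (Finset.mem_filter.mp hv'.1).2
    have hfuv : f u = f v := hu'.2.trans hv'.2.symm
    set D := (univ.filter (fun i => u i ≠ v i)) with hDdef
    have hDdist : hammingDist u v = D.card := rfl
    have hDpos : 0 < D.card := by
      rw [← hDdist]; exact hammingDist_pos.mpr huv
    have hDle : D.card ≤ 2 := by omega
    -- local count equality on D
    have hcount : ∀ a, (D.filter (fun i => u i = a)).card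
        = (D.filter (fun i => v i = a)).card := by
      intro a
      have hcompl : Dᶜ.filter (fun i => u i = a) = Dᶜ.filter (fun i => v i = a) := by
        apply Finset.filter_congr
        intro i hi
        have : u i = v i := by
          have := Finset.mem_compl.mp hi
          simpa [hDdef] using this
        rw [this]
      have hsplit : ∀ w : Fin n → Fin 3,
          (univ.filter (fun i => w i = a)).card
            = (D.filter (fun i => w i = a)).card + (Dᶜ.filter (fun i => w i = a)).card := by
        intro w
        rw [← Finset.card_union_of_disjoint
          (Finset.disjoint_filter_filter disjoint_compl_right),
          ← Finset.filter_union, Finset.union_compl]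
      have h1 := hsplit u
      have h2 := hsplit v
      rw [hcu a] at h1
      rw [hcv a] at h2
      rw [hcompl] at h1
      omega
    interval_cases hD : D.card
    · -- card 1
      obtain ⟨i, hi⟩ := Finset.card_eq_one.mp hD
      have hine : u i ≠ v i := by
        have : i ∈ D := hi ▸ Finset.mem_singleton_self i
        simpa [hDdef] using this
      have := hcount (u i)
      rw [hi] at this
      simp [Finset.filter_singleton, hine.symm] at this
    · -- card 2
      obtain ⟨i, j, hij, hD2⟩ := Finset.card_eq_two.mp hD
      have hiD : i ∈ D := hD2 ▸ by simp
      have hjD : j ∈ D := hD2 ▸ by simp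
      have hine : u i ≠ v i := by simpa [hDdef] using hiD
      have hjne : u j ≠ v j := by simpa [hDdef] using hjD
      have hpair : ∀ a, ((if u i = a then 1 else 0) + (if u j = a then 1 else 0) : ℕ)
          = (if v i = a then 1 else 0) + (if v j = a then 1 else 0) := by
        intro a
        have hca := hcount a
        rw [hD2] at hca
        by_cases h1 : u i = a <;> by_cases h2 : u j = a <;>
          by_cases h3 : v i = a <;> by_cases h4 : v j = a <;>
          simp [Finset.filter_insert, Finset.filter_singleton, hij, h1, h2, h3, h4] at hca ⊢ <;>
          omega
      have key : ∀ ui uj vi vj : Fin 3,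
          (∀ a, ((if ui = a then 1 else 0) + (if uj = a then 1 else 0) : ℕ)
            = (if vi = a then 1 else 0) + (if vj = a then 1 else 0)) →
          ui ≠ vi → uj ≠ vj → vi = uj ∧ vj = ui ∧ ui ≠ uj := by decide
      obtain ⟨hvi, hvj, huij⟩ := key (u i) (u j) (v i) (v j) hpair hine hjne
      -- hash computation
      have hsum : ∑ k ∈ D, ((k.val : ZMod m) * ((u k).val : ZMod m)
          - (k.val : ZMod m) * ((v k).val : ZMod m)) = 0 := by
        have hfuv' : (∑ i : Fin n, (i.val : ZMod m) * ((u i).val : ZMod m))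
            = ∑ i : Fin n, (i.val : ZMod m) * ((v i).val : ZMod m) := hfuv
        have htot : ∑ k : Fin n, ((k.val : ZMod m) * ((u k).val : ZMod m)
            - (k.val : ZMod m) * ((v k).val : ZMod m)) = 0 := by
          rw [Finset.sum_sub_distrib, hfuv', sub_self]
        rw [← htot]
        apply Finset.sum_subset (Finset.subset_univ D)
        intro x _ hx
        have : u x = v x := by simpa [hDdef] using hx
        rw [this]; ring
      rw [hD2, Finset.sum_pair hij] at hsum
      rw [hvi, hvj] at hsum
      have hzero : (((i.val : ℤ) - j.val) * (((u i).val : ℤ) - ((u j).val : ℤ)) : ℤ)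
          = 0 ∨ True := Or.inr trivial
      have hcast : ((((i.val : ℤ) - j.val) * (((u i).val : ℤ) - (u j).val) : ℤ) : ZMod m) = 0 := by
        push_cast
        linear_combination hsum
      rw [ZMod.intCast_zmod_eq_zero_iff_dvd] at hcast
      have hd : ((i.val : ℤ) - j.val) ≠ 0 := by
        have : i.val ≠ j.val := fun h => hij (Fin.ext h)
        omega
      have hdm : |(i.val : ℤ) - j.val| < m := by
        have h1 : i.val < n := i.isLt
        have h2 : j.val < n := j.isLt
        have : (n : ℤ) ≤ m := by exact_mod_cast hnm
        rw [abs_lt]; omega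
      have hs : (((u i).val : ℤ) - (u j).val) ≠ 0 := by
        have : (u i).val ≠ (u j).val := fun h => huij (Fin.ext h)
        omega
      have hs2 : |(((u i).val : ℤ) - (u j).val)| ≤ 2 := by
        have h1 : (u i).val < 3 := (u i).isLt
        have h2 : (u j).val < 3 := (u j).isLt
        rw [abs_le]; omega
      exact arith_lemma hm_odd hd hdm hs hs2 hcast
  · calc Nat.multinomial univ ω ≤ W.card := hmult
      _ ≤ m * C.card := hWle
      _ = C.card * m := Nat.mul_comm _ _
end

section
/- Let q ≥ 3, let [ω₀, ω₁, …, ω_{q−1}] be a composition of n, let d ≥ 1, and set δ = ⌊(d−1)/2⌋. Fix an index i with 0 ≤ i ≤ q−1, and let δ_{i,0}, …, δ_{i,q−1} be nonnegative integers with δ_{i,i} = 0, δ_{i,0} + ⋯ + δ_{i,q−1} = δ, and δ_{i,l} ≤ ω_l for all 0 ≤ l ≤ q−1. Then every q-ary constant-composition code C of length n with composition [ω₀, ω₁, …, ω_{q−1}] and minimum distance at least d satisfies |C| · ((ω_i + δ)!/(ω_i!·δ_{i,0}!⋯δ_{i,q−1}!)) ≤ n!/(ω₀!·ω₁!⋯ω_{q−1}!).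 -/
set_option maxHeartbeats 1000000

open Finset Nat

section Helpers

variable {β α : Type*} [Fintype β] [Fintype α] [DecidableEq β] [DecidableEq α]

lemma aux_card_subtype (F : Finset β) (p : β → Prop) [DecidablePred p] :
    (univ.filter (fun x : ↥F => p ↑x)).card = (F.filter p).card := by
  classical
  refine Finset.card_bij (fun (x : ↥F) _ => (x : β)) ?_ ?_ ?_
  · intro a ha
    simp only [mem_filter, mem_univ, true_and] at ha
    exact mem_filter.2 ⟨a.2, ha⟩
  · intro a _ b _ h
    exact Subtype.ext h
  · intro b hb
    rcases mem_filter.1 hb with ⟨hbF, hpb⟩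
    exact ⟨⟨b, hbF⟩, by simp [hpb], rfl⟩

def permCompEquiv (u v : β → α) :
    {g : Equiv.Perm β // u ∘ ⇑g = v} ≃ (∀ a : α, {j // v j = a} ≃ {j // u j = a}) where
  toFun g a := Equiv.subtypeEquiv g.1 (fun j => by
    have h := congrFun g.2 j
    simp only [Function.comp_apply] at h
    rw [← h])
  invFun e := ⟨(Equiv.sigmaFiberEquiv v).symm.trans
      ((Equiv.sigmaCongrRight e).trans (Equiv.sigmaFiberEquiv u)), by
    funext j
    exact (e (v j) ⟨j, rfl⟩).2⟩
  left_inv := by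
    rintro ⟨g, hg⟩
    apply Subtype.ext
    apply Equiv.ext
    intro j
    rfl
  right_inv := by
    intro e
    funext a
    apply Equiv.ext
    rintro ⟨j, hj⟩
    apply Subtype.ext
    subst hj
    rfl

lemma card_perm_comp (u v : β → α)
    (h : ∀ a, (univ.filter fun j => u j = a).card = (univ.filter fun j => v j = a).card) :
    ((univ : Finset (Equiv.Perm β)).filter fun g : Equiv.Perm β => u ∘ ⇑g = v).card
      = ∏ a, ((univ.filter fun j => u j = a).card)! := by
  classical
  rw [← Fintype.card_subtype, Fintype.card_congr (permCompEquiv u v), Fintype.card_pi]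
  apply Finset.prod_congr rfl
  intro a _
  have hcc : Fintype.card {j // v j = a} = Fintype.card {j // u j = a} := by
    simp only [Fintype.card_subtype]
    exact (h a).symm
  rw [Fintype.card_equiv (Fintype.equivOfCardEq hcc)]
  simp only [Fintype.card_subtype]
  rw [h a]

lemma card_class_mul (w : β → α) :
    (univ.filter fun x : β → α =>
        ∀ a, (univ.filter fun j => x j = a).card = (univ.filter fun j => w j = a).card).card
      * ∏ a, ((univ.filter fun j => w j = a).card)! = (Fintype.card β)! := by
  classical
  have hmap : ∀ g ∈ (univ : Finset (Equiv.Perm β)), (w ∘ ⇑g) ∈ (univ.filter fun x : β → α =>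
      ∀ a, (univ.filter fun j => x j = a).card = (univ.filter fun j => w j = a).card) := by
    intro g _
    refine mem_filter.2 ⟨mem_univ _, fun a => ?_⟩
    refine Finset.card_bij (fun j _ => g j) ?_ ?_ ?_
    · intro j hj
      simp only [mem_filter, mem_univ, true_and, Function.comp_apply] at hj ⊢
      exact hj
    · intro j₁ _ j₂ _ hh
      exact g.injective hh
    · intro j' hj'
      simp only [mem_filter, mem_univ, true_and, Function.comp_apply] at hj' ⊢
      exact ⟨g.symm j', by simpa using hj', by simp⟩
  have hpart := Finset.card_eq_sum_card_fiberwise hmap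
  rw [Finset.card_univ, Fintype.card_perm] at hpart
  rw [Finset.sum_congr rfl (fun x hx =>
    card_perm_comp w x (fun a => ((mem_filter.1 hx).2 a).symm))] at hpart
  rw [Finset.sum_const, smul_eq_mul] at hpart
  exact hpart.symm

lemma hammingDist_perm (u v : β → α) (g : Equiv.Perm β) :
    hammingDist (u ∘ ⇑g) (v ∘ ⇑g) = hammingDist u v := by
  classical
  unfold hammingDist
  refine Finset.card_bij (fun j _ => g j) ?_ ?_ ?_
  · intro j hj
    simp only [mem_filter, mem_univ, true_and, Function.comp_apply] at hj ⊢
    exact hj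
  · intro j₁ _ j₂ _ hh
    exact g.injective hh
  · intro j' hj'
    simp only [mem_filter, mem_univ, true_and, Function.comp_apply] at hj' ⊢
    exact ⟨g.symm j', by simpa using hj', by simp⟩

lemma split_card (F : Finset β) (p : β → Prop) [DecidablePred p] :
    (univ.filter p).card = (F.filter p).card + (univ.filter fun j => p j ∧ j ∉ F).card := by
  classical
  have h1 : (univ.filter p).filter (fun j => j ∈ F) = F.filter p := by
    ext j; simp [and_comm]
  have h2 : (univ.filter p).filter (fun j => ¬ j ∈ F) = univ.filter (fun j => p j ∧ j ∉ F) := by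
    ext j; simp
  rw [← h1, ← h2, Finset.card_filter_add_card_filter_not]

end Helpers

/-- Let `q ≥ 3`, let `ω` be a composition of `n`, let `d ≥ 1`, and set
`δ = ⌊(d-1)/2⌋`. Fix `i` and nonnegative integers `δᵢ 0, …, δᵢ (q-1)` with `δᵢ i = 0`,
`∑ l, δᵢ l = δ` and `δᵢ l ≤ ω l` for all `l`. Then every `q`-ary constant-composition
code `C` of length `n` with composition `ω` and minimum distance at least `d` satisfies
`|C| · (ωᵢ + δ)!/(ωᵢ! · δᵢ0! ⋯ δᵢ(q-1)!) ≤ n!/(ω₀!⋯ω_{q-1}!)`. -/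
theorem stmt_10 (q n d : ℕ) (hq : 3 ≤ q) (hd : 1 ≤ d)
    (ω : Fin q → ℕ) (hω : ∑ a, ω a = n)
    (δ : ℕ) (hδ : δ = (d - 1) / 2)
    (i : Fin q) (δᵢ : Fin q → ℕ) (hδᵢi : δᵢ i = 0)
    (hδᵢsum : ∑ l, δᵢ l = δ) (hδᵢle : ∀ l, δᵢ l ≤ ω l)
    (C : Finset (Fin n → Fin q))
    (hcomp : ∀ c ∈ C, ∀ a : Fin q, (Finset.univ.filter (fun j => c j = a)).card = ω a)
    (hdist : ∀ u ∈ C, ∀ v ∈ C, u ≠ v → d ≤ hammingDist u v) :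
    C.card * Nat.multinomial Finset.univ
        (fun o : Option (Fin q) => o.elim (ω i) δᵢ) ≤
      Nat.multinomial Finset.univ ω := by
  rcases C.eq_empty_or_nonempty with rfl | ⟨w, hwC⟩
  · simp
  set M := Nat.multinomial Finset.univ (fun o : Option (Fin q) => o.elim (ω i) δᵢ) with hM
  have hw : ∀ a, (univ.filter fun j => w j = a).card = ω a := hcomp w hwC
  -- choose the sets S l of positions of symbol l to include in F
  have hex : ∀ l : Fin q, ∃ s ⊆ univ.filter (fun j => w j = l), s.card = δᵢ l := fun l =>
    Finset.exists_subset_card_eq (by rw [hw l]; exact hδᵢle l)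
  choose S hS1 hS2 using hex
  set Fi : Finset (Fin n) := univ.filter (fun j => w j = i) with hFi
  set F : Finset (Fin n) := Fi ∪ univ.biUnion S with hF
  have hSi : S i = ∅ := Finset.card_eq_zero.1 (by rw [hS2 i, hδᵢi])
  have hSfib : ∀ l, ∀ j ∈ S l, w j = l := fun l j hj => (mem_filter.1 (hS1 l hj)).2
  have hdisj : Disjoint Fi (univ.biUnion S) := by
    rw [Finset.disjoint_left]
    intro j hji hjb
    rcases Finset.mem_biUnion.1 hjb with ⟨l, _, hjl⟩
    have h1 : w j = i := (mem_filter.1 hji).2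
    have h2 : w j = l := hSfib l j hjl
    have hli : l = i := by rw [← h1, ← h2]
    rw [hli, hSi] at hjl
    exact absurd hjl (Finset.notMem_empty j)
  have hbU : (univ.biUnion S).card = δ := by
    rw [Finset.card_biUnion]
    · rw [← hδᵢsum]; exact Finset.sum_congr rfl (fun l _ => hS2 l)
    · intro l _ l' hl' hne
      rw [Function.onFun, Finset.disjoint_left]
      intro j hjl hjl'
      exact hne (by rw [← hSfib l j hjl, hSfib l' j hjl'])
  have hFcard : F.card = ω i + δ := by
    rw [hF, Finset.card_union_of_disjoint hdisj, hbU, hFi, hw i]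
  -- composition counts inside F
  set cc : Fin q → ℕ := fun a => if a = i then ω i else δᵢ a with hcc
  have hFmem : ∀ j, j ∈ F ↔ (w j = i ∨ ∃ l, j ∈ S l) := by
    intro j
    rw [hF, Finset.mem_union, hFi, mem_filter]
    simp [Finset.mem_biUnion]
  have hFfilter : ∀ a, F.filter (fun j => w j = a) = if a = i then Fi else S a := by
    intro a
    ext j
    rw [mem_filter, hFmem j]
    split_ifs with ha
    · subst ha
      rw [hFi, mem_filter]
      simp only [mem_univ, true_and]
      constructor
      · rintro ⟨_, h⟩; exact h
      · intro h; exact ⟨Or.inl h, h⟩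
    · constructor
      · rintro ⟨h1 | ⟨l, hl⟩, hwa⟩
        · exact absurd (hwa.symm.trans h1) ha
        · have hwl := hSfib l j hl
          have hla : l = a := by rw [← hwl, hwa]
          exact hla ▸ hl
      · intro hjs
        exact ⟨Or.inr ⟨a, hjs⟩, hSfib a j hjs⟩
  have hccF : ∀ a, (F.filter (fun j => w j = a)).card = cc a := by
    intro a
    rw [hFfilter a]
    simp only [hcc]
    split_ifs with ha
    · rw [hFi]; exact hw i
    · exact hS2 a
  -- base word inside F and the class W_F
  set y₀ : ↥F → Fin q := fun p => w ↑p with hy₀def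
  have hy₀ : ∀ a, (univ.filter fun p : ↥F => y₀ p = a).card = cc a := by
    intro a
    rw [hy₀def]
    rw [aux_card_subtype F (fun j => w j = a)]
    exact hccF a
  set W_F : Finset (↥F → Fin q) := univ.filter (fun y : ↥F → Fin q =>
    ∀ a, (univ.filter fun p => y p = a).card = (univ.filter fun p => y₀ p = a).card) with hWF
  set ey : (↥F → Fin q) → (Fin n → Fin q) :=
    fun y j => if h : j ∈ F then y ⟨j, h⟩ else w j with hey
  have heyInj : Function.Injective ey := by
    intro y y' h
    funext p
    have hc := congrFun h ↑p
    simp only [hey, dif_pos p.2] at hc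
    simpa using hc
  set A : Finset (Fin n → Fin q) := W_F.image ey with hA
  have hAcard : A.card = W_F.card := Finset.card_image_of_injective _ heyInj
  -- fibers of members of A inside F
  have hpe : ∀ (y : ↥F → Fin q) (p : ↥F), ey y ↑p = y p := by
    intro y p
    simp only [hey]
    rw [dif_pos p.2]
  have heyF : ∀ (y : ↥F → Fin q) (a : Fin q),
      (F.filter fun j => ey y j = a).card = (univ.filter fun p : ↥F => y p = a).card := by
    intro y a
    rw [← aux_card_subtype F (fun j => ey y j = a)]
    congr 1
    ext p
    simp only [mem_filter, mem_univ, true_and, hpe y p]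
  -- composition of members of A
  have hA_comp : ∀ x ∈ A, ∀ a, (univ.filter fun j => x j = a).card = ω a := by
    intro x hx a
    obtain ⟨y, hyW, rfl⟩ := Finset.mem_image.1 hx
    have hyfib : ∀ a, (univ.filter fun p : ↥F => y p = a).card = cc a := by
      intro a
      rw [(mem_filter.1 hyW).2 a, hy₀ a]
    have hsplit := split_card F (fun j => ey y j = a)
    have hsplitw := split_card F (fun j => w j = a)
    have hoff : (univ.filter fun j => ey y j = a ∧ j ∉ F)
        = (univ.filter fun j => w j = a ∧ j ∉ F) := by
      ext j
      simp only [mem_filter, mem_univ, true_and]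
      constructor
      · rintro ⟨h1, h2⟩; simp only [hey] at h1; rw [dif_neg h2] at h1; exact ⟨h1, h2⟩
      · rintro ⟨h1, h2⟩; refine ⟨?_, h2⟩; simp only [hey]; rw [dif_neg h2]; exact h1
    rw [hw a, hccF a] at hsplitw
    rw [hsplit, heyF y a, hyfib a, hoff]
    exact hsplitw.symm
  -- within F each member has exactly δ non-i coordinates
  have hA_i : ∀ x ∈ A, (F.filter fun j => x j ≠ i).card = δ := by
    intro x hx
    obtain ⟨y, hyW, rfl⟩ := Finset.mem_image.1 hx
    have h1 : (F.filter fun j => ey y j = i).card = ω i := by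
      rw [heyF y i, (mem_filter.1 hyW).2 i, hy₀ i]
      simp [hcc]
    have h2 : (F.filter (fun j => ey y j = i)).card
        + (F.filter (fun j => ey y j ≠ i)).card = F.card := by
      have h3 := Finset.card_filter_add_card_filter_not
        (s := F) (p := fun j => ey y j = i)
      simpa [ne_eq] using h3
    rw [h1, hFcard] at h2
    omega
  -- members of A agree off F
  have hA_off : ∀ x ∈ A, ∀ j, j ∉ F → x j = w j := by
    intro x hx j hj
    obtain ⟨y, _, rfl⟩ := Finset.mem_image.1 hx
    simp only [hey]
    rw [dif_neg hj]
  -- diameter of A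
  have hA_dist : ∀ x ∈ A, ∀ x' ∈ A, hammingDist x x' ≤ δ + δ := by
    intro x hx x' hx'
    have hsub : (univ.filter fun j => x j ≠ x' j)
        ⊆ (F.filter fun j => x j ≠ i) ∪ (F.filter fun j => x' j ≠ i) := by
      intro j hj
      have hne : x j ≠ x' j := (mem_filter.1 hj).2
      have hjF : j ∈ F := by
        by_contra hjF
        exact hne ((hA_off x hx j hjF).trans (hA_off x' hx' j hjF).symm)
      rcases eq_or_ne (x j) i with h1 | h1
      · rcases eq_or_ne (x' j) i with h2 | h2
        · exact absurd (h1.trans h2.symm) hne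
        · exact Finset.mem_union_right _ (mem_filter.2 ⟨hjF, h2⟩)
      · exact Finset.mem_union_left _ (mem_filter.2 ⟨hjF, h1⟩)
    calc hammingDist x x' = (univ.filter fun j => x j ≠ x' j).card := rfl
      _ ≤ ((F.filter fun j => x j ≠ i) ∪ (F.filter fun j => x' j ≠ i)).card :=
          Finset.card_le_card hsub
      _ ≤ (F.filter fun j => x j ≠ i).card + (F.filter fun j => x' j ≠ i).card :=
          Finset.card_union_le _ _
      _ = δ + δ := by rw [hA_i x hx, hA_i x' hx']
  have h2δ : δ + δ ≤ d - 1 := by omega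
  clear_value M Fi F cc y₀ W_F ey A
  -- each translate of A contains at most one codeword
  have key : ∀ g : Equiv.Perm (Fin n), (C.filter fun c => c ∘ ⇑g ∈ A).card ≤ 1 := by
    intro g
    apply Finset.card_le_one.2
    intro c hc c' hc'
    rw [mem_filter] at hc hc'
    by_contra hne
    have hd' := hdist c hc.1 c' hc'.1 hne
    have hle : hammingDist c c' ≤ d - 1 := by
      rw [← hammingDist_perm c c' g]
      exact le_trans (hA_dist _ hc.2 _ hc'.2) h2δ
    omega
  have count1 : ∑ g : Equiv.Perm (Fin n), (C.filter fun c => c ∘ ⇑g ∈ A).card ≤ n ! := by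
    calc ∑ g : Equiv.Perm (Fin n), (C.filter fun c => c ∘ ⇑g ∈ A).card
        ≤ ∑ _g : Equiv.Perm (Fin n), 1 := Finset.sum_le_sum (fun g _ => key g)
      _ = Fintype.card (Equiv.Perm (Fin n)) := by simp
      _ = n ! := by rw [Fintype.card_perm, Fintype.card_fin]
  have count2 : ∑ g : Equiv.Perm (Fin n), (C.filter fun c => c ∘ ⇑g ∈ A).card
      = C.card * (A.card * ∏ a, (ω a)!) := by
    have swap : ∑ g : Equiv.Perm (Fin n), (C.filter fun c => c ∘ ⇑g ∈ A).card
        = ∑ c ∈ C, ((univ : Finset (Equiv.Perm (Fin n))).filter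
            fun g : Equiv.Perm (Fin n) => c ∘ ⇑g ∈ A).card := by
      simp only [Finset.card_filter]
      rw [Finset.sum_comm]
    rw [swap]
    have per_c : ∀ c ∈ C, ((univ : Finset (Equiv.Perm (Fin n))).filter
        fun g : Equiv.Perm (Fin n) => c ∘ ⇑g ∈ A).card = A.card * ∏ a, (ω a)! := by
      intro c hc
      rw [Finset.card_eq_sum_card_fiberwise
        (f := fun g : Equiv.Perm (Fin n) => c ∘ ⇑g) (t := A)
        (s := (univ : Finset (Equiv.Perm (Fin n))).filter fun g => c ∘ ⇑g ∈ A)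
        (fun g hg => (mem_filter.1 hg).2)]
      have each : ∀ x ∈ A,
          (((univ : Finset (Equiv.Perm (Fin n))).filter
              fun g : Equiv.Perm (Fin n) => c ∘ ⇑g ∈ A).filter
            fun g : Equiv.Perm (Fin n) => c ∘ ⇑g = x).card = ∏ a, (ω a)! := by
        intro x hxA
        have hfil : (((univ : Finset (Equiv.Perm (Fin n))).filter
              fun g : Equiv.Perm (Fin n) => c ∘ ⇑g ∈ A).filter
            fun g : Equiv.Perm (Fin n) => c ∘ ⇑g = x)
            = (univ : Finset (Equiv.Perm (Fin n))).filter
              (fun g : Equiv.Perm (Fin n) => c ∘ ⇑g = x) := by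
          ext g
          simp only [Finset.filter_filter, mem_filter, mem_univ, true_and]
          constructor
          · rintro ⟨_, h⟩; exact h
          · intro h; exact ⟨h ▸ hxA, h⟩
        rw [hfil, card_perm_comp c x (fun a => by rw [hcomp c hc a, hA_comp x hxA a])]
        exact Finset.prod_congr rfl (fun a _ => by rw [hcomp c hc a])
      rw [Finset.sum_congr rfl each, Finset.sum_const, smul_eq_mul]
    rw [Finset.sum_congr rfl per_c, Finset.sum_const, smul_eq_mul]
  -- size of A equals the multinomial M
  have hprod_cc : ∏ a, (cc a)! = (ω i)! * ∏ a, (δᵢ a)! := by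
    have hstep : ∀ a ∈ univ.erase i, (cc a)! = (δᵢ a)! := by
      intro a ha
      rw [hcc]
      simp [(Finset.mem_erase.1 ha).1]
    calc ∏ a, (cc a)! = (cc i)! * ∏ a ∈ univ.erase i, (cc a)! :=
          (Finset.mul_prod_erase _ _ (mem_univ i)).symm
      _ = (ω i)! * ∏ a ∈ univ.erase i, (δᵢ a)! := by
          rw [Finset.prod_congr rfl hstep, hcc]; simp
      _ = (ω i)! * ∏ a, (δᵢ a)! := by
          rw [← Finset.mul_prod_erase univ (fun a => (δᵢ a)!) (mem_univ i), hδᵢi]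
          simp
  have hMspec : ((ω i)! * ∏ a, (δᵢ a)!) * M = (ω i + δ)! := by
    have hs := Nat.multinomial_spec (univ : Finset (Option (Fin q)))
      (fun o : Option (Fin q) => o.elim (ω i) δᵢ)
    rw [Fintype.prod_option, Fintype.sum_option] at hs
    simpa [hM, hδᵢsum] using hs
  have hK : 0 < (ω i)! * ∏ a, (δᵢ a)! := by positivity
  have hWcard : W_F.card = M := by
    have h1 := card_class_mul (β := ↥F) y₀
    rw [Fintype.card_coe, hFcard] at h1
    rw [hWF]
    have h2 : ∏ a, ((univ.filter fun p : ↥F => y₀ p = a).card)! = (ω i)! * ∏ a, (δᵢ a)! := by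
      rw [Finset.prod_congr rfl (fun a _ => by rw [hy₀ a])]
      exact hprod_cc
    rw [h2] at h1
    rw [← hMspec] at h1
    refine Nat.eq_of_mul_eq_mul_right hK ?_
    rw [mul_comm M]
    convert h1 using 4
  -- conclusion
  have hn : (∏ a, (ω a)!) * Nat.multinomial Finset.univ ω = n ! := by
    have := Nat.multinomial_spec (univ : Finset (Fin q)) ω
    rwa [hω] at this
  have final : C.card * M * ∏ a, (ω a)! ≤ n ! := by
    calc C.card * M * ∏ a, (ω a)! = C.card * (A.card * ∏ a, (ω a)!) := by
          rw [hAcard, hWcard]; ring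
      _ = ∑ g : Equiv.Perm (Fin n), (C.filter fun c => c ∘ ⇑g ∈ A).card := count2.symm
      _ ≤ n ! := count1
  have hpos : 0 < ∏ a, (ω a)! := by positivity
  refine Nat.le_of_mul_le_mul_right ?_ hpos
  calc C.card * M * ∏ a, (ω a)! ≤ n ! := final
    _ = Nat.multinomial Finset.univ ω * ∏ a, (ω a)! := by rw [mul_comm]; exact hn.symm
end

section
/- Let [ω₀, ω₁, ω₂] be a composition of n, and let i ∈ {0, 1, 2} be an index such that the other two indices j, k satisfy ω_j ≥ 1 and ω_k ≥ 1. Then every ternary constant-composition code C of length n with composition [ω₀, ω₁, ω₂] and minimum distance at least 5 satisfies |C| · (ω_i + 2)(ω_i + 1) ≤ n!/(ω₀!·ω₁!·ω₂!). -/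
open Finset


lemma my_card_le_multinomial (n : ℕ) (ω : Fin 3 → ℕ) (hsum : ∑ a, ω a = n)
    (W : Finset (Fin n → Fin 3))
    (hW : ∀ w ∈ W, ∀ a, (Finset.univ.filter (fun k => w k = a)).card = ω a) :
    W.card ≤ Nat.multinomial Finset.univ ω := by
  rcases W.eq_empty_or_nonempty with h | ⟨w₀, hw₀⟩
  · simp [h]
  set F : ℕ := ∏ a, Nat.factorial (ω a) with hF
  have hFpos : 0 < F := Finset.prod_pos fun a _ => Nat.factorial_pos _
  have hspec : F * Nat.multinomial Finset.univ ω = Nat.factorial n := by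
    rw [hF, Nat.multinomial_spec, hsum]
  -- the candidate permutations
  set s : Finset (Equiv.Perm (Fin n)) :=
    Finset.univ.filter (fun π => (fun x => w₀ (π x)) ∈ W) with hs
  have hmaps : ∀ π ∈ s, (fun x => w₀ (π x)) ∈ W := by
    intro π hπ; simpa [hs] using hπ
  have hcardsum : s.card = ∑ w ∈ W,
      (s.filter fun π => (fun x => w₀ (π x)) = w).card :=
    Finset.card_eq_sum_card_fiberwise hmaps
  -- lower bound on each fiber
  have hfiber : ∀ w ∈ W, F ≤ (s.filter fun π => (fun x => w₀ (π x)) = w).card := by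
    intro w hw
    -- a permutation sending w₀ to w
    have ea : ∀ a : Fin 3, {x // w x = a} ≃ {x // w₀ x = a} := fun a =>
      Fintype.equivOfCardEq (by
        rw [Fintype.card_subtype, Fintype.card_subtype, hW w hw a, hW w₀ hw₀ a])
    set π₀ : Equiv.Perm (Fin n) :=
      (Equiv.sigmaFiberEquiv w).symm.trans
        ((Equiv.sigmaCongrRight ea).trans (Equiv.sigmaFiberEquiv w₀)) with hπ₀
    have hπ₀p : ∀ x, w₀ (π₀ x) = w x := by
      intro x
      have : π₀ x = ((ea (w x)) ⟨x, rfl⟩ : {y // w₀ y = w x}) := by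
        simp [hπ₀, Equiv.sigmaFiberEquiv, Equiv.sigmaCongrRight]
      rw [this]; exact ((ea (w x)) ⟨x, rfl⟩).2
    -- injection from products of fiber permutations
    set G : (∀ a : Fin 3, Equiv.Perm {x // w₀ x = a}) → Equiv.Perm (Fin n) :=
      fun σ => π₀.trans ((Equiv.sigmaFiberEquiv w₀).symm.trans
        ((Equiv.sigmaCongrRight σ).trans (Equiv.sigmaFiberEquiv w₀))) with hG
    have hGfix : ∀ σ x, w₀ (G σ x) = w x := by
      intro σ x
      have h1 : ∀ y, w₀ (((Equiv.sigmaFiberEquiv w₀).symm.trans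
          ((Equiv.sigmaCongrRight σ).trans (Equiv.sigmaFiberEquiv w₀))) y) = w₀ y := by
        intro y
        have : ((Equiv.sigmaFiberEquiv w₀).symm.trans
            ((Equiv.sigmaCongrRight σ).trans (Equiv.sigmaFiberEquiv w₀))) y
            = ((σ (w₀ y)) ⟨y, rfl⟩ : {z // w₀ z = w₀ y}) := by
          simp [Equiv.sigmaFiberEquiv, Equiv.sigmaCongrRight]
        rw [this]; exact ((σ (w₀ y)) ⟨y, rfl⟩).2
      rw [hG]; simp only [Equiv.trans_apply] at *
      rw [h1 (π₀ x), hπ₀p x]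
    have hGinj : Function.Injective G := by
      intro σ σ' hσ
      funext a; ext ⟨y, hy⟩
      have := congrArg (fun (e : Equiv.Perm (Fin n)) => e (π₀.symm y)) hσ
      simp only [hG, Equiv.trans_apply, Equiv.apply_symm_apply] at this
      have hyy : (Equiv.sigmaFiberEquiv w₀).symm y = ⟨a, ⟨y, hy⟩⟩ := by
        subst hy; rfl
      rw [hyy] at this
      have : (Equiv.sigmaFiberEquiv w₀) ⟨a, σ a ⟨y, hy⟩⟩
           = (Equiv.sigmaFiberEquiv w₀) ⟨a, σ' a ⟨y, hy⟩⟩ := by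
        simpa [Equiv.sigmaCongrRight] using this
      have h2 := (Equiv.sigmaFiberEquiv w₀).injective this
      have h3 := (Sigma.mk.inj_iff.mp h2).2
      rw [eq_of_heq h3]
    -- hence the fiber is large
    have hcards : Fintype.card (∀ a : Fin 3, Equiv.Perm {x // w₀ x = a}) = F := by
      rw [Fintype.card_pi]
      refine Finset.prod_congr rfl fun a _ => ?_
      rw [Fintype.card_perm, Fintype.card_subtype, hW w₀ hw₀ a]
    have hmem : ∀ σ, G σ ∈ s.filter fun π => (fun x => w₀ (π x)) = w := by
      intro σ
      have hwG : (fun x => w₀ (G σ x)) = w := funext fun x => hGfix σ x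
      simp only [Finset.mem_filter, hs, Finset.mem_univ, true_and]
      exact ⟨hwG ▸ (hwG ▸ hw), hwG⟩
    calc F = Fintype.card (∀ a : Fin 3, Equiv.Perm {x // w₀ x = a}) := hcards.symm
      _ ≤ (s.filter fun π => (fun x => w₀ (π x)) = w).card := by
          apply Finset.card_le_card_of_injOn G (fun σ _ => hmem σ)
          intro a _ b _ h; exact hGinj h
  have h1 : W.card * F ≤ s.card := by
    rw [hcardsum]
    calc W.card * F = ∑ _w ∈ W, F := by rw [Finset.sum_const, smul_eq_mul, mul_comm]
      _ ≤ _ := Finset.sum_le_sum hfiber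
  have h2 : s.card ≤ Nat.factorial n := by
    calc s.card ≤ (Finset.univ : Finset (Equiv.Perm (Fin n))).card :=
          Finset.card_le_card (Finset.filter_subset _ _)
      _ = Nat.factorial n := by rw [Finset.card_univ, Fintype.card_perm, Fintype.card_fin]
  have : W.card * F ≤ F * Nat.multinomial Finset.univ ω := by
    rw [hspec]; exact h1.trans h2
  rw [mul_comm] at this
  exact Nat.le_of_mul_le_mul_left this hFpos

section Main

variable {n : ℕ}

-- facts about the double update
lemma upd_facts (c : Fin n → Fin 3) (i j k : Fin 3) (p q : Fin n)
    (hp : c p = j) (hq : c q = k) (hjk : j ≠ k) :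
    (Function.update (Function.update c p i) q i) p = i ∧
    (Function.update (Function.update c p i) q i) q = i ∧
    ∀ x, x ≠ p → x ≠ q → (Function.update (Function.update c p i) q i) x = c x := by
  have hpq : p ≠ q := fun h => hjk (hp ▸ hq ▸ h ▸ rfl)
  refine ⟨?_, ?_, ?_⟩
  · rw [Function.update_of_ne hpq, Function.update_self]
  · rw [Function.update_self]
  · intro x hxp hxq
    rw [Function.update_of_ne hxq, Function.update_of_ne hxp]

end Main

/-- Let `[ω₀, ω₁, ω₂]` be a composition of `n` and let `i ∈ {0,1,2}` be
an index such that the other two indices `j` satisfy `ω j ≥ 1`. Then every ternary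
constant-composition code `C` of length `n` with composition `ω` and minimum distance at
least `5` satisfies `|C| · (ωᵢ + 2)(ωᵢ + 1) ≤ n!/(ω₀!ω₁!ω₂!)`. -/
theorem stmt_11 (n : ℕ) (ω : Fin 3 → ℕ) (hω : ∑ a, ω a = n)
    (i : Fin 3) (hother : ∀ j : Fin 3, j ≠ i → 1 ≤ ω j)
    (C : Finset (Fin n → Fin 3))
    (hcomp : ∀ c ∈ C, ∀ a : Fin 3, (Finset.univ.filter (fun k => c k = a)).card = ω a)
    (hdist : ∀ u ∈ C, ∀ v ∈ C, u ≠ v → 5 ≤ hammingDist u v) :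
    C.card * ((ω i + 2) * (ω i + 1)) ≤ Nat.multinomial Finset.univ ω := by
  -- obtain the other two indices
  obtain ⟨j, k, hji, hki, hjk⟩ : ∃ j k : Fin 3, j ≠ i ∧ k ≠ i ∧ j ≠ k := by
    fin_cases i
    · exact ⟨1, 2, by decide, by decide, by decide⟩
    · exact ⟨0, 2, by decide, by decide, by decide⟩
    · exact ⟨0, 1, by decide, by decide, by decide⟩
  have hij : i ≠ j := hji.symm
  have hik : i ≠ k := hki.symm
  have huniv : (Finset.univ : Finset (Fin 3)) = {i, j, k} := by
    refine (Finset.eq_univ_of_card _ ?_).symm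
    rw [Finset.card_insert_of_notMem (by simp [hij, hik]),
      Finset.card_insert_of_notMem (by simp [hjk]), Finset.card_singleton]
    rfl
  have hcases : ∀ a : Fin 3, a = i ∨ a = j ∨ a = k := by
    intro a
    have := Finset.mem_univ a
    rw [huniv] at this
    simpa using this
  obtain ⟨bj, hbj⟩ : ∃ b, ω j = b + 1 := ⟨ω j - 1, by have := hother j hji; omega⟩
  obtain ⟨bk, hbk⟩ : ∃ b, ω k = b + 1 := ⟨ω k - 1, by have := hother k hki; omega⟩
  set ω' : Fin 3 → ℕ := fun a => if a = i then ω i + 2 else ω a - 1 with hω'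
  have hω'i : ω' i = ω i + 2 := by simp [hω']
  have hω'j : ω' j = bj := by simp [hω', hji, hbj]
  have hω'k : ω' k = bk := by simp [hω', hki, hbk]
  have hsumijk : ω i + ω j + ω k = n := by
    rw [← hω, huniv, Finset.sum_insert (by simp [hij, hik]),
      Finset.sum_insert (by simp [hjk]), Finset.sum_singleton, add_assoc]
  have hsum' : ∑ a, ω' a = n := by
    rw [huniv, Finset.sum_insert (by simp [hij, hik]),
      Finset.sum_insert (by simp [hjk]), Finset.sum_singleton, hω'i, hω'j, hω'k]
    omega
  -- the set of modified words
  classical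
  set W : Finset (Fin n → Fin 3) :=
    Finset.univ.filter (fun w => ∀ a, (Finset.univ.filter (fun x => w x = a)).card = ω' a)
      with hWdef
  -- the triples
  set S : Finset ((Fin n → Fin 3) × Fin n × Fin n) :=
    (C ×ˢ Finset.univ ×ˢ Finset.univ).filter
      (fun x => x.1 x.2.1 = j ∧ x.1 x.2.2 = k) with hSdef
  have hSmem : ∀ x : (Fin n → Fin 3) × Fin n × Fin n,
      x ∈ S ↔ x.1 ∈ C ∧ x.1 x.2.1 = j ∧ x.1 x.2.2 = k := by
    intro x
    simp [hSdef, Finset.mem_filter, Finset.mem_product, and_assoc]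
  -- cardinality of S
  have hScard : S.card = C.card * (ω j * ω k) := by
    have hSeq : S = C.biUnion (fun c => {c} ×ˢ
        ((Finset.univ.filter fun p => c p = j) ×ˢ (Finset.univ.filter fun q => c q = k))) := by
      ext x
      rw [hSmem]
      simp only [Finset.mem_biUnion, Finset.mem_product, Finset.mem_singleton,
        Finset.mem_filter, Finset.mem_univ, true_and]
      constructor
      · rintro ⟨h1, h2, h3⟩; exact ⟨x.1, h1, rfl, h2, h3⟩
      · rintro ⟨c, hc, rfl, h2, h3⟩; exact ⟨hc, h2, h3⟩
    rw [hSeq, Finset.card_biUnion]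
    · rw [Finset.sum_congr rfl (fun c hc => ?_), Finset.sum_const, smul_eq_mul]
      rw [Finset.card_product, Finset.card_product, Finset.card_singleton, one_mul,
        hcomp c hc j, hcomp c hc k]
    · intro c hc c' hc' hne
      simp only [Function.onFun]
      rw [Finset.disjoint_left]
      rintro x hx hx'
      rw [Finset.mem_product] at hx hx'
      have h1 : x.1 = c := Finset.mem_singleton.mp hx.1
      have h2 : x.1 = c' := Finset.mem_singleton.mp hx'.1
      exact hne (h1 ▸ h2)
  -- the map
  set Φ : (Fin n → Fin 3) × Fin n × Fin n → (Fin n → Fin 3) :=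
    fun x => Function.update (Function.update x.1 x.2.1 i) x.2.2 i with hΦdef
  -- Φ maps S into W
  have hmapsto : ∀ x ∈ S, Φ x ∈ W := by
    rintro ⟨c, p, q⟩ hx
    obtain ⟨hc, hp, hq⟩ := (hSmem _).mp hx
    replace hc : c ∈ C := hc
    replace hp : c p = j := hp
    replace hq : c q = k := hq
    obtain ⟨wp, wq, wother⟩ := upd_facts c i j k p q hp hq hjk
    have hpq : p ≠ q := fun h => hjk (hp ▸ hq ▸ h ▸ rfl)
    rw [hWdef, Finset.mem_filter]
    refine ⟨Finset.mem_univ _, fun a => ?_⟩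
    simp only [hΦdef]
    set w := Function.update (Function.update c p i) q i with hwdef
    rcases hcases a with rfl | rfl | rfl
    · have hfil : Finset.univ.filter (fun x => w x = a)
          = insert p (insert q (Finset.univ.filter (fun x => c x = a))) := by
        ext y
        simp only [Finset.mem_filter, Finset.mem_univ, true_and, Finset.mem_insert]
        by_cases hyp : y = p
        · subst hyp; simp [wp]
        · by_cases hyq : y = q
          · subst hyq; simp [wq]
          · rw [wother y hyp hyq]; simp [hyp, hyq]
      have hqmem : q ∉ Finset.univ.filter (fun x => c x = a) := by
        simp [hq, hik.symm]
      have hpmem : p ∉ insert q (Finset.univ.filter (fun x => c x = a)) := by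
        simp [hpq, hp, hij.symm]
      rw [hfil, Finset.card_insert_of_notMem hpmem, Finset.card_insert_of_notMem hqmem,
        hcomp c hc a, hω'i]
    · have hfil : Finset.univ.filter (fun x => w x = a)
          = (Finset.univ.filter (fun x => c x = a)).erase p := by
        ext y
        simp only [Finset.mem_filter, Finset.mem_univ, true_and, Finset.mem_erase]
        by_cases hyp : y = p
        · subst hyp; simp [wp, hij]
        · by_cases hyq : y = q
          · subst hyq; simp [wq, hij, hq, hjk.symm]
          · rw [wother y hyp hyq]; simp [hyp]
      rw [hfil, Finset.card_erase_of_mem (by simp [hp]), hcomp c hc a, hω'j, hbj]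
      omega
    · have hfil : Finset.univ.filter (fun x => w x = a)
          = (Finset.univ.filter (fun x => c x = a)).erase q := by
        ext y
        simp only [Finset.mem_filter, Finset.mem_univ, true_and, Finset.mem_erase]
        by_cases hyq : y = q
        · subst hyq; simp [wq, hik]
        · by_cases hyp : y = p
          · subst hyp; simp [wp, hik, hp, hjk]
          · rw [wother y hyp hyq]; simp [hyq]
      rw [hfil, Finset.card_erase_of_mem (by simp [hq]), hcomp c hc a, hω'k, hbk]
      omega
  -- Φ is injective on S
  have hinj : Set.InjOn Φ S := by
    rintro ⟨c, p, q⟩ hx ⟨c', p', q'⟩ hy heq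
    rw [Finset.mem_coe, hSmem] at hx hy
    obtain ⟨hc, hp, hq⟩ := hx
    obtain ⟨hc', hp', hq'⟩ := hy
    replace hc : c ∈ C := hc
    replace hp : c p = j := hp
    replace hq : c q = k := hq
    replace hc' : c' ∈ C := hc'
    replace hp' : c' p' = j := hp'
    replace hq' : c' q' = k := hq'

    obtain ⟨wp, wq, wother⟩ := upd_facts c i j k p q hp hq hjk
    obtain ⟨wp', wq', wother'⟩ := upd_facts c' i j k p' q' hp' hq' hjk
    have hdsmall : ∀ (d : Fin n → Fin 3) (r s : Fin n),
        hammingDist d (Function.update (Function.update d r i) s i) ≤ 2 := by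
      intro d r s
      have hsub : Finset.univ.filter
          (fun y => d y ≠ Function.update (Function.update d r i) s i y)
          ⊆ {r, s} := by
        intro y hy
        rw [Finset.mem_filter] at hy
        by_contra hmem
        simp only [Finset.mem_insert, Finset.mem_singleton, not_or] at hmem
        exact hy.2 (by rw [Function.update_of_ne hmem.2, Function.update_of_ne hmem.1])
      calc hammingDist d _ ≤ ({r, s} : Finset (Fin n)).card :=
            Finset.card_le_card hsub
        _ ≤ 2 := (Finset.card_insert_le _ _).trans (by simp)
    have hcc : c = c' := by
      by_contra hne
      have h1 : hammingDist c (Φ (c, p, q)) ≤ 2 := hdsmall c p q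
      have h2 : hammingDist (Φ (c', p', q')) c' ≤ 2 := by
        rw [hammingDist_comm]; exact hdsmall c' p' q'
      have h3 := hammingDist_triangle c (Φ (c, p, q)) c'
      rw [heq] at h3 h1
      have := hdist c hc c' hc' hne
      omega
    subst hcc
    have hpp : p = p' := by
      by_contra hne
      have h1 := congrFun heq p'
      have hppq : p' ≠ q := fun h => hjk.symm (hq ▸ hp' ▸ h ▸ rfl)
      rw [show Φ (c, p, q) p' = c p' from wother p' (fun h => hne h.symm) hppq] at h1
      rw [show Φ (c, p', q') p' = i from wp'] at h1
      exact hij (h1.symm.trans hp')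
    have hqq : q = q' := by
      by_contra hne
      have h1 := congrFun heq q'
      have hqqp : q' ≠ p := fun h => hjk (hp ▸ hq' ▸ h ▸ rfl)
      rw [show Φ (c, p, q) q' = c q' from wother q' hqqp (fun h => hne h.symm)] at h1
      rw [show Φ (c, p', q') q' = i from wq'] at h1
      exact hik (h1.symm.trans hq')
    rw [hpp, hqq]
  have hcount : C.card * (ω j * ω k) ≤ Nat.multinomial Finset.univ ω' := by
    rw [← hScard]
    refine le_trans (Finset.card_le_card_of_injOn Φ hmapsto hinj) ?_
    refine my_card_le_multinomial n ω' hsum' W ?_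
    intro w hw
    exact (Finset.mem_filter.mp hw).2
  -- arithmetic finish
  have hP := Nat.multinomial_spec (Finset.univ : Finset (Fin 3)) ω
  rw [hω] at hP
  have hP' := Nat.multinomial_spec (Finset.univ : Finset (Fin 3)) ω'
  rw [hsum'] at hP'
  have hfj : Nat.factorial (ω j) = ω j * Nat.factorial bj := by
    rw [hbj, Nat.factorial_succ]
  have hfk : Nat.factorial (ω k) = ω k * Nat.factorial bk := by
    rw [hbk, Nat.factorial_succ]
  have hfi : Nat.factorial (ω i + 2)
      = (ω i + 2) * ((ω i + 1) * Nat.factorial (ω i)) := by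
    rw [show ω i + 2 = ω i + 1 + 1 from rfl, Nat.factorial_succ, Nat.factorial_succ]
  have hprod : ∏ a, Nat.factorial (ω a)
      = Nat.factorial (ω i) * (Nat.factorial (ω j) * Nat.factorial (ω k)) := by
    rw [huniv, Finset.prod_insert (by simp [hij, hik]),
      Finset.prod_insert (by simp [hjk]), Finset.prod_singleton]
  have hprod' : ∏ a, Nat.factorial (ω' a)
      = ((ω i + 2) * ((ω i + 1) * Nat.factorial (ω i)))
        * (Nat.factorial bj * Nat.factorial bk) := by
    rw [huniv, Finset.prod_insert (by simp [hij, hik]),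
      Finset.prod_insert (by simp [hjk]), Finset.prod_singleton, hω'i, hω'j, hω'k, hfi]
  set D : ℕ := Nat.factorial (ω i) * (Nat.factorial bj * Nat.factorial bk) with hD
  have hDpos : 0 < D :=
    Nat.mul_pos (Nat.factorial_pos _) (Nat.mul_pos (Nat.factorial_pos _) (Nat.factorial_pos _))
  have e1 : D * ((ω j * ω k) * Nat.multinomial Finset.univ ω) = Nat.factorial n := by
    rw [← hP, hprod, hfj, hfk, hD]; ring
  have e2 : D * (((ω i + 2) * (ω i + 1)) * Nat.multinomial Finset.univ ω')
      = Nat.factorial n := by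
    rw [← hP', hprod', hD]; ring
  have hkey : (ω j * ω k) * Nat.multinomial Finset.univ ω
      = ((ω i + 2) * (ω i + 1)) * Nat.multinomial Finset.univ ω' :=
    Nat.eq_of_mul_eq_mul_left hDpos (e1.trans e2.symm)
  have hpos : 0 < ω j * ω k := Nat.mul_pos (hother j hji) (hother k hki)
  refine Nat.le_of_mul_le_mul_right ?_ hpos
  calc C.card * ((ω i + 2) * (ω i + 1)) * (ω j * ω k)
      = (C.card * (ω j * ω k)) * ((ω i + 2) * (ω i + 1)) := by ring
    _ ≤ Nat.multinomial Finset.univ ω' * ((ω i + 2) * (ω i + 1)) :=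
        Nat.mul_le_mul_right _ hcount
    _ = ((ω i + 2) * (ω i + 1)) * Nat.multinomial Finset.univ ω' := mul_comm _ _
    _ = (ω j * ω k) * Nat.multinomial Finset.univ ω := hkey.symm
    _ = Nat.multinomial Finset.univ ω * (ω j * ω k) := mul_comm _ _
end
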